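/- arXiv:0809.4351 — 7 statements merged into one kernel-verified Lean document; each statement's English description precedes it below -/
import Mathlib

section
/- Let S₁ be an r₁×r₁ matrix and S₂ an r₂×r₂ matrix, both with entries in K[t], such that det S₁ = u₁·(t−θ)^{d₁} and det S₂ = u₂·(t−θ)^{d₂} for units u₁,u₂ ∈ K^× and integers d₁,d₂ ≥ 0. Suppose F is an r₂×r₁ matrix with entries in the rational function field K(t) satisfying F·S₁ = S₂·τ(F), where τ also denotes the extension of τ to K(t) and τ(F) is applied entrywise. Then there exists a nonzero polynomial h ∈ K[t] all of whose coefficients c satisfy c^q = c (equivalently τ(h) = h, i.e. h has coefficients in k) such that h·F has all entries in K[t]. -/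
/-!
STATEMENT 1. Setting as before: `τ` is the coefficientwise `q`-th power endomorphism of
`K[t]` (`q = p ^ n`), extended to the rational function field `K(t) = RatFunc K`.

If `det Sᵢ = uᵢ (t-θ)^{dᵢ}` and `F` is a matrix over `K(t)` with `F·S₁ = S₂·τ(F)`,
then there is a nonzero polynomial `h ∈ K[t]` with all coefficients `c` satisfying
`c ^ q = c` (i.e. `h` has coefficients in `k`) such that `h·F` has entries in `K[t]`.
-/

open Polynomial

/-- The extension of the coefficientwise `q`-th power map `τ` to `K(t)`. -/
noncomputable def tauRatFunc (p n : ℕ) [Fact p.Prime] (K : Type) [Field K] [CharP K p] :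
    RatFunc K →+* RatFunc K :=
  RatFunc.mapRingHom (Polynomial.mapRingHom (iterateFrobenius K p n))
    (by
      intro f hf
      rw [Submonoid.mem_comap]
      rw [mem_nonZeroDivisors_iff_ne_zero] at hf ⊢
      simpa using fun h =>
        hf (Polynomial.map_injective _ (iterateFrobenius K p n).injective (by simpa using h)))

theorem tau_algebraMap (p n : ℕ) [Fact p.Prime] (K : Type) [Field K] [CharP K p]
    (g : Polynomial K) :
    tauRatFunc p n K (algebraMap (Polynomial K) (RatFunc K) g) =
      algebraMap (Polynomial K) (RatFunc K) (Polynomial.mapRingHom (iterateFrobenius K p n) g) := by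
  have h0 : algebraMap (Polynomial K) (RatFunc K) g =
      algebraMap _ _ g / algebraMap _ _ (1 : Polynomial K) := by simp
  rw [tauRatFunc, RatFunc.coe_mapRingHom_eq_coe_map, h0, RatFunc.map_apply_div]
  simp

theorem stmt_1
    (p n : ℕ) [Fact p.Prime] (hn : 0 < n)
    (K : Type) [Field K] [CharP K p] (θ : K)
    (r₁ r₂ : ℕ)
    (S₁ : Matrix (Fin r₁) (Fin r₁) (Polynomial K))
    (S₂ : Matrix (Fin r₂) (Fin r₂) (Polynomial K))
    (u₁ u₂ : Kˣ) (d₁ d₂ : ℕ)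
    (h₁ : S₁.det = C (u₁ : K) * (X - C θ) ^ d₁)
    (h₂ : S₂.det = C (u₂ : K) * (X - C θ) ^ d₂)
    (F : Matrix (Fin r₂) (Fin r₁) (RatFunc K))
    (hF : F * S₁.map (algebraMap (Polynomial K) (RatFunc K)) =
          S₂.map (algebraMap (Polynomial K) (RatFunc K)) * F.map (tauRatFunc p n K)) :
    ∃ h : Polynomial K, h ≠ 0 ∧ (∀ i, (h.coeff i) ^ p ^ n = h.coeff i) ∧
      ∀ i j, ∃ g : Polynomial K,
        algebraMap (Polynomial K) (RatFunc K) h * F i j =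
          algebraMap (Polynomial K) (RatFunc K) g := by
  classical
  set φ : Polynomial K →+* RatFunc K := algebraMap (Polynomial K) (RatFunc K) with hφdef
  set σ : Polynomial K →+* Polynomial K :=
    Polynomial.mapRingHom (iterateFrobenius K p n) with hσdef
  set τ : RatFunc K →+* RatFunc K := tauRatFunc p n K with hτdef
  have hτφ : ∀ g : Polynomial K, τ (φ g) = φ (σ g) := tau_algebraMap p n K
  have hφinj : Function.Injective φ := RatFunc.algebraMap_injective K
  set A : Subring (RatFunc K) := φ.range with hAdef
  -- the ideal of `h` clearing all denominators of `F`
  set I : Ideal (Polynomial K) :=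
    { carrier := {h | ∀ i j, φ h * F i j ∈ A}
      zero_mem' := by intro i j; rw [map_zero, zero_mul]; exact zero_mem A
      add_mem' := by
        intro a b ha hb i j
        rw [map_add, add_mul]
        exact add_mem (ha i j) (hb i j)
      smul_mem' := by
        intro c x hx i j
        rw [smul_eq_mul, map_mul, mul_assoc]
        exact mul_mem (RingHom.mem_range_self φ c) (hx i j) } with hIdef
  have hImem : ∀ h : Polynomial K, h ∈ I ↔ ∀ i j, φ h * F i j ∈ A := fun _ => Iff.rfl
  -- I contains a nonzero element
  set D : Polynomial K := ∏ ij : Fin r₂ × Fin r₁, (F ij.1 ij.2).denom with hDdef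
  have hD0 : D ≠ 0 := Finset.prod_ne_zero_iff.mpr fun ij _ => RatFunc.denom_ne_zero _
  have hDI : D ∈ I := by
    intro i j
    have hmem : ((i, j) : Fin r₂ × Fin r₁) ∈ Finset.univ := Finset.mem_univ _
    have hsplit : D = (F i j).denom * ∏ x ∈ Finset.univ.erase (i, j), (F x.1 x.2).denom := by
      rw [hDdef, ← Finset.mul_prod_erase Finset.univ
        (fun ij : Fin r₂ × Fin r₁ => (F ij.1 ij.2).denom) hmem]
    have hden : φ (F i j).denom * F i j = φ (F i j).num := by
      calc φ (F i j).denom * F i j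
          = φ (F i j).denom * (φ (F i j).num / φ (F i j).denom) := by
            rw [RatFunc.num_div_denom]
        _ = φ (F i j).num := by
            rw [mul_comm, div_mul_cancel₀ _
              (RatFunc.algebraMap_ne_zero (RatFunc.denom_ne_zero (F i j)))]
    rw [hsplit, map_mul, mul_assoc, mul_left_comm, hden, ← map_mul]
    exact RingHom.mem_range_self φ _
  have hInebot : I ≠ ⊥ := fun h => hD0 (by simpa [h] using hDI)
  haveI : I.IsPrincipal := IsPrincipalIdealRing.principal I
  set f : Polynomial K := normalize (Submodule.IsPrincipal.generator I) with hfdef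
  have hgen0 : Submodule.IsPrincipal.generator I ≠ 0 := by
    intro h
    exact hInebot (Submodule.IsPrincipal.eq_bot_iff_generator_eq_zero I |>.mpr h)
  have hfmonic : f.Monic := monic_normalize hgen0
  have hf0 : f ≠ 0 := hfmonic.ne_zero
  have hfI : ∀ x : Polynomial K, x ∈ I ↔ f ∣ x := by
    intro x
    rw [Submodule.IsPrincipal.mem_iff_generator_dvd, hfdef, normalize_dvd_iff]
  have hfmem : f ∈ I := (hfI f).mpr dvd_rfl
  -- numerators
  have hGex : ∀ i j, ∃ g : Polynomial K, φ f * F i j = φ g := fun i j =>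
    RingHom.mem_range (f := φ).mp (hfmem i j) |>.imp fun g hg => hg.symm
  choose G hG using hGex
  -- step (a): matrix identity with adjugate of S₁
  have hadj1 : (S₁.map φ).adjugate = S₁.adjugate.map φ := by
    have := (RingHom.map_adjugate φ S₁).symm
    simpa [RingHom.mapMatrix_apply] using this
  have hstepA : ∀ i j, φ S₁.det * F i j =
      ((S₂.map φ) * (F.map τ) * (S₁.adjugate.map φ)) i j := by
    have hmul : F * (S₁.map φ) * (S₁.map φ).adjugate =
        (S₂.map φ) * (F.map τ) * (S₁.map φ).adjugate := by rw [hF]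
    rw [Matrix.mul_assoc, Matrix.mul_adjugate] at hmul
    intro i j
    have hdet : (S₁.map φ).det = φ S₁.det := by
      rw [RingHom.map_det]; rfl
    have := congrFun (congrFun hmul i) j
    rw [hadj1] at hmul
    have h' := congrFun (congrFun hmul i) j
    simpa [Matrix.smul_apply, hdet, smul_eq_mul] using h'
  have ha : ∀ h ∈ I, ((X - C θ) ^ d₁ * σ h) ∈ I := by
    intro h hh i j
    have key : φ (C (u₁ : K)) * (φ ((X - C θ) ^ d₁ * σ h) * F i j) =
        φ (σ h) * (((S₂.map φ) * (F.map τ) * (S₁.adjugate.map φ)) i j) := by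
      calc φ (C (u₁ : K)) * (φ ((X - C θ) ^ d₁ * σ h) * F i j)
          = φ (σ h) * (φ (C (u₁ : K) * (X - C θ) ^ d₁) * F i j) := by
            rw [map_mul, map_mul]; ring
        _ = φ (σ h) * (φ S₁.det * F i j) := by rw [← h₁]
        _ = φ (σ h) * (((S₂.map φ) * (F.map τ) * (S₁.adjugate.map φ)) i j) := by
            rw [hstepA i j]
    have hrhs : φ (σ h) * (((S₂.map φ) * (F.map τ) * (S₁.adjugate.map φ)) i j) ∈ A := by
      rw [Matrix.mul_apply, Finset.mul_sum]
      refine sum_mem fun k _ => ?_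
      rw [Matrix.mul_apply, Finset.sum_mul, Finset.mul_sum]
      refine sum_mem fun l _ => ?_
      have hτ : φ (σ h) * (F.map τ) l k = τ (φ h * F l k) := by
        rw [map_mul, hτφ, Matrix.map_apply]
      obtain ⟨w, hw⟩ := RingHom.mem_range.mp (hh l k)
      have : φ (σ h) * ((S₂.map φ) i l * (F.map τ) l k * (S₁.adjugate.map φ) k j) =
          (S₂.map φ) i l * (τ (φ w)) * (S₁.adjugate.map φ) k j := by
        rw [hw, ← hτ]; ring
      rw [this, hτφ]
      exact mul_mem (mul_mem (RingHom.mem_range_self φ _) (RingHom.mem_range_self φ _))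
        (RingHom.mem_range_self φ _)
    have : φ ((X - C θ) ^ d₁ * σ h) * F i j =
        φ (C ((u₁ : K)⁻¹)) * (φ (C (u₁ : K)) * (φ ((X - C θ) ^ d₁ * σ h) * F i j)) := by
      rw [← mul_assoc, ← map_mul, ← C_mul, inv_mul_cancel₀ (Units.ne_zero u₁), map_one, map_one,
        one_mul]
    rw [this, key]
    exact mul_mem (RingHom.mem_range_self φ _) hrhs
  -- step (b): matrix identity with adjugate of S₂
  have hadj2 : (S₂.map φ).adjugate = S₂.adjugate.map φ := by
    have := (RingHom.map_adjugate φ S₂).symm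
    simpa [RingHom.mapMatrix_apply] using this
  have hstepB : ∀ i j, φ S₂.det * (F.map τ) i j =
      ((S₂.adjugate.map φ) * F * (S₁.map φ)) i j := by
    have hmul : (S₂.map φ).adjugate * (F * (S₁.map φ)) =
        (S₂.map φ).adjugate * ((S₂.map φ) * (F.map τ)) := by rw [hF]
    rw [← Matrix.mul_assoc, ← Matrix.mul_assoc, Matrix.adjugate_mul] at hmul
    intro i j
    have hdet : (S₂.map φ).det = φ S₂.det := by
      rw [RingHom.map_det]; rfl
    rw [hadj2] at hmul
    have h' := congrFun (congrFun hmul i) j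
    rw [Matrix.smul_mul] at h'
    simpa [Matrix.smul_apply, hdet, smul_eq_mul] using h'.symm
  set h' : Polynomial K := C (u₂ : K) * ((X - C θ) ^ d₂ * f) with hh'def
  have hb : ∀ i j, ∃ c : Polynomial K, φ h' * (F.map τ) i j = φ c := by
    intro i j
    have key : φ h' * (F.map τ) i j =
        φ f * (((S₂.adjugate.map φ) * F * (S₁.map φ)) i j) := by
      calc φ h' * (F.map τ) i j
          = φ f * (φ S₂.det * (F.map τ) i j) := by
            rw [hh'def, h₂, map_mul, map_mul, map_mul]; ring
        _ = φ f * (((S₂.adjugate.map φ) * F * (S₁.map φ)) i j) := by rw [hstepB i j]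
    have hrhs : φ f * (((S₂.adjugate.map φ) * F * (S₁.map φ)) i j) ∈ A := by
      rw [Matrix.mul_apply, Finset.mul_sum]
      refine sum_mem fun k _ => ?_
      rw [Matrix.mul_apply, Finset.sum_mul, Finset.mul_sum]
      refine sum_mem fun l _ => ?_
      have : φ f * ((S₂.adjugate.map φ) i l * F l k * (S₁.map φ) k j) =
          (S₂.adjugate.map φ) i l * (φ f * F l k) * (S₁.map φ) k j := by ring
      rw [this, hG l k]
      exact mul_mem (mul_mem (RingHom.mem_range_self φ _) (RingHom.mem_range_self φ _))
        (RingHom.mem_range_self φ _)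
    rw [key]
    obtain ⟨c, hc⟩ := RingHom.mem_range.mp hrhs
    exact ⟨c, hc.symm⟩
  -- σ f divides h' * σ (G i j)
  have hdvd1 : ∀ i j, σ f ∣ h' * σ (G i j) := by
    intro i j
    obtain ⟨c, hc⟩ := hb i j
    have hτG : φ (σ f) * (F.map τ) i j = φ (σ (G i j)) := by
      have := congrArg τ (hG i j)
      rw [map_mul, hτφ, hτφ] at this
      rw [Matrix.map_apply]
      exact this
    refine ⟨c, hφinj ?_⟩
    calc φ (h' * σ (G i j)) = φ h' * (φ (σ f) * (F.map τ) i j) := by rw [hτG, map_mul]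
      _ = φ (σ f) * (φ h' * (F.map τ) i j) := by ring
      _ = φ (σ f * c) := by rw [hc, map_mul]
  -- the span of f and the G i j is everything
  set S : Set (Polynomial K) :=
    insert f (Set.range fun ij : Fin r₂ × Fin r₁ => G ij.1 ij.2) with hSdef
  have hJtop : Ideal.span S = ⊤ := by
    set J := Ideal.span S with hJdef
    haveI : J.IsPrincipal := IsPrincipalIdealRing.principal J
    set e : Polynomial K := Submodule.IsPrincipal.generator J with hedef
    have hef : e ∣ f :=
      (Submodule.IsPrincipal.mem_iff_generator_dvd J).mp
        (Ideal.subset_span (Set.mem_insert _ _))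
    have heG : ∀ i j, e ∣ G i j := fun i j =>
      (Submodule.IsPrincipal.mem_iff_generator_dvd J).mp
        (Ideal.subset_span (Set.mem_insert_iff.mpr (Or.inr ⟨(i, j), rfl⟩)))
    obtain ⟨f₁, hf₁⟩ := hef
    have he0 : e ≠ 0 := by
      intro he0'
      exact hf0 (by rw [hf₁, he0', zero_mul])
    have hf₁I : f₁ ∈ I := by
      intro i j
      obtain ⟨w, hw⟩ := heG i j
      have : φ e * (φ f₁ * F i j) = φ e * φ w := by
        rw [← mul_assoc, ← map_mul, ← hf₁, hG i j, hw, map_mul]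
      have := mul_left_cancel₀ (RatFunc.algebraMap_ne_zero he0) this
      rw [this]
      exact RingHom.mem_range_self φ _
    obtain ⟨k, hk⟩ := (hfI f₁).mp hf₁I
    have hek : f * 1 = f * (e * k) := by
      rw [mul_one]
      calc f = e * f₁ := hf₁
        _ = e * (f * k) := by rw [hk]
        _ = f * (e * k) := by ring
    have : (1 : Polynomial K) = e * k := mul_left_cancel₀ hf0 hek
    have hunit : IsUnit e := IsUnit.of_mul_eq_one k this.symm
    exact Ideal.eq_top_of_isUnit_mem J (Submodule.IsPrincipal.generator_mem J) hunit
  -- push through σ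
  have hJσtop : Ideal.span ((σ : Polynomial K → Polynomial K) '' S) = ⊤ := by
    have h1 : (1 : Polynomial K) ∈ Ideal.span S := hJtop ▸ Submodule.mem_top
    have h2 := Ideal.mem_map_of_mem σ h1
    rw [map_one] at h2
    rw [← Ideal.map_span σ, Ideal.eq_top_iff_one]
    exact h2
  have hone : (1 : Polynomial K) ∈ Ideal.span ((σ : Polynomial K → Polynomial K) '' S) := by
    rw [hJσtop]; trivial
  have hdvdh' : σ f ∣ h' := by
    have key : σ f ∣ h' * 1 := by
      refine Submodule.span_induction
        (p := fun x _ => σ f ∣ h' * x) ?_ ?_ ?_ ?_ hone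
      · rintro x hx
        rcases hx with ⟨y, hy, rfl⟩
        rcases hy with rfl | ⟨ij, rfl⟩
        · exact Dvd.dvd.mul_left dvd_rfl h'
        · exact hdvd1 ij.1 ij.2
      · exact ⟨0, by ring⟩
      · rintro x y - - ⟨cx, hcx⟩ ⟨cy, hcy⟩
        exact ⟨cx + cy, by rw [mul_add, hcx, hcy, mul_add]⟩
      · rintro a x - ⟨cx, hcx⟩
        exact ⟨a * cx, by rw [smul_eq_mul]; rw [mul_comm a x, ← mul_assoc, hcx]; ring⟩
    simpa using key
  -- two divisibilities
  have haf : f ∣ (X - C θ) ^ d₁ * σ f := (hfI _).mp (ha f hfmem)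
  have hbf : σ f ∣ (X - C θ) ^ d₂ * f := by
    obtain ⟨c, hc⟩ := hdvdh'
    refine ⟨C ((u₂ : K)⁻¹) * c, ?_⟩
    have : C ((u₂ : K)⁻¹) * h' = (X - C θ) ^ d₂ * f := by
      rw [hh'def, ← mul_assoc, ← C_mul, inv_mul_cancel₀ (Units.ne_zero u₂), map_one, one_mul]
    rw [← this, hc]; ring
  -- conclude σ f = f
  have hσf0 : σ f ≠ 0 := by
    intro h0
    have : f.map (iterateFrobenius K p n) = (0 : Polynomial K).map (iterateFrobenius K p n) := by
      rw [Polynomial.map_zero]; exact h0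
    exact hf0 (Polynomial.map_injective _ (iterateFrobenius K p n).injective this)
  obtain ⟨s, hs⟩ := haf
  obtain ⟨r, hr⟩ := hbf
  have hsr : (X - C θ) ^ (d₁ + d₂) = s * r := by
    have : (f * σ f) * ((X - C θ) ^ (d₁ + d₂)) = (f * σ f) * (s * r) := by
      calc (f * σ f) * ((X - C θ) ^ (d₁ + d₂))
          = ((X - C θ) ^ d₁ * σ f) * ((X - C θ) ^ d₂ * f) := by rw [pow_add]; ring
        _ = (f * s) * (σ f * r) := by rw [← hs, ← hr]
        _ = (f * σ f) * (s * r) := by ring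
    exact mul_left_cancel₀ (mul_ne_zero hf0 hσf0) this
  have hsdvd : s ∣ (X - C θ) ^ (d₁ + d₂) := ⟨r, hsr⟩
  obtain ⟨e, he, u, hu⟩ := (dvd_prime_pow (prime_X_sub_C θ) (d₁ + d₂)).mp hsdvd
  -- s * u = (X - C θ) ^ e
  have hndσf : (σ f).natDegree = f.natDegree :=
    natDegree_map_eq_of_injective (iterateFrobenius K p n).injective f
  have hXθ0 : (X - C θ : Polynomial K) ≠ 0 := X_sub_C_ne_zero θ
  have hs' : (X - C θ) ^ d₁ * σ f * (u : Polynomial K) = f * (X - C θ) ^ e := by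
    rw [hs, mul_assoc, hu]
  have hed : e = d₁ := by
    have hu0 : (u : Polynomial K) ≠ 0 := u.isUnit.ne_zero
    have h1 := congrArg natDegree hs'
    rw [natDegree_mul (mul_ne_zero (pow_ne_zero _ hXθ0) hσf0) hu0,
      natDegree_mul (pow_ne_zero _ hXθ0) hσf0,
      natDegree_mul hf0 (pow_ne_zero _ hXθ0),
      natDegree_pow, natDegree_pow, natDegree_X_sub_C,
      natDegree_eq_zero_of_isUnit u.isUnit, hndσf] at h1
    omega
  have hcancel : σ f * (u : Polynomial K) = f := by
    have : (X - C θ) ^ d₁ * (σ f * (u : Polynomial K)) = (X - C θ) ^ d₁ * f := by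
      rw [← mul_assoc, hs', hed]; ring
    exact mul_left_cancel₀ (pow_ne_zero _ hXθ0) this
  have hσff : σ f = f := by
    have hlc : (σ f).Monic := by
      have : σ f = f.map (iterateFrobenius K p n) := rfl
      rw [this]; exact hfmonic.map _
    have hu1 : (u : Polynomial K) = C ((u : Polynomial K).coeff 0) :=
      eq_C_of_natDegree_eq_zero (natDegree_eq_zero_of_isUnit u.isUnit)
    have hc1 : (u : Polynomial K).coeff 0 = 1 := by
      have hlcc := congrArg leadingCoeff hcancel
      rw [hu1, leadingCoeff_mul, hlc.leadingCoeff, one_mul, leadingCoeff_C,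
        hfmonic.leadingCoeff] at hlcc
      exact hlcc
    rw [hu1, hc1, map_one, mul_one] at hcancel
    exact hcancel
  refine ⟨f, hf0, ?_, fun i j => ⟨G i j, hG i j⟩⟩
  intro i
  have := congrArg (fun g => g.coeff i) hσff
  simpa [hσdef, coeff_map, iterateFrobenius_def] using this
end

section
/- Let M₁ and M₂ be effective t-motifs over K, and write Mᵢ(t) = Mᵢ ⊗_{K[t]} K(t), with σ extended τ-semilinearly to Mᵢ(t) by σ(m⊗f) = σ(m)⊗τ(f). Then for every K(t)-linear map g : M₁(t) → M₂(t) satisfying g∘σ = σ∘g there exist a nonzero polynomial h ∈ K[t] with all coefficients c satisfying c^q = c (i.e. h has coefficients in k) and a morphism f ∈ Hom_σ(M₁,M₂) such that h·g equals the map f ⊗ id_{K(t)} induced by f. (Together with the evident injectivity, this says the natural map Hom_σ(M₁,M₂) ⊗_{k[t]} k(t) → Hom_{K(t)[σ]}(M₁(t),M₂(t)) is an isomorphism.) -/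
/-!
STATEMENT 2. An effective t-motif over `K` is a free finitely generated `K[t]`-module `M`
with a `τ`-semilinear map `σ` whose determinant (on any basis) is `u·(t-θ)^d`, `u ∈ Kˣ`.
Choosing bases, we represent `Mᵢ` as the column module `Fin rᵢ → K[t]` with
`σᵢ(v) = Sᵢ ⬝ τ(v)`, where `Sᵢ` is the matrix of `σᵢ` (so `det Sᵢ = uᵢ (t-θ)^{dᵢ}`).
Then `Mᵢ(t) = Mᵢ ⊗_{K[t]} K(t)` is `Fin rᵢ → RatFunc K` with `σ` extended via `τ` on
`K(t)`; a `K(t)`-linear map `g : M₁(t) → M₂(t)` is a matrix `G` over `K(t)`, and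
`g∘σ = σ∘g` reads `G·S₁ = S₂·τ(G)`.  A morphism `f ∈ Hom_σ(M₁,M₂)` is a matrix `F` over
`K[t]` with `F·S₁ = S₂·τ(F)`, and `f ⊗ id` is `F` viewed over `K(t)`.

The statement: for every such `h` there are a nonzero `h ∈ k[t] ⊆ K[t]` (coefficients
fixed by `c ↦ c^q`) and a morphism `f = F ∈ Hom_σ(M₁,M₂)` with `h·g = f ⊗ id`.
-/

open Polynomial

set_option synthInstance.maxHeartbeats 1000000
set_option maxHeartbeats 1000000

section AuxLemmas

variable (p n : ℕ) [Fact p.Prime] (K : Type) [Field K] [CharP K p]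


variable (p n : ℕ) [Fact p.Prime] (K : Type) [Field K] [CharP K p]

lemma tau_alg (f : Polynomial K) :
    tauRatFunc p n K (algebraMap (Polynomial K) (RatFunc K) f)
      = algebraMap (Polynomial K) (RatFunc K) (f.map (iterateFrobenius K p n)) := by
  rw [tauRatFunc, RatFunc.coe_mapRingHom_eq_coe_map]
  have h1 : (algebraMap (Polynomial K) (RatFunc K)) f
      = algebraMap _ _ f / algebraMap _ _ (1 : Polynomial K) := by
    rw [map_one, div_one]
  rw [h1, RatFunc.map_apply_div]
  simp

lemma tau_eval (Ω : Type) [Field Ω] [CharP Ω p] [Algebra K Ω]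
    (f : Polynomial K) (x : Ω) :
    Polynomial.aeval (x ^ p ^ n) (f.map (iterateFrobenius K p n))
      = (Polynomial.aeval x f) ^ p ^ n := by
  have hcomp : (iterateFrobenius Ω p n).comp (algebraMap K Ω)
      = (algebraMap K Ω).comp (iterateFrobenius K p n) := by
    ext c
    simp [iterateFrobenius_def, map_pow]
  have hx : x ^ p ^ n = iterateFrobenius Ω p n x := rfl
  rw [Polynomial.aeval_def, Polynomial.aeval_def, Polynomial.eval₂_map, hx, ← hcomp,
    ← Polynomial.hom_eval₂, iterateFrobenius_def]





lemma exists_gen {r₂ r₁ : ℕ} (G : Matrix (Fin r₂) (Fin r₁) (RatFunc K)) :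
    ∃ h₀ : Polynomial K, h₀ ≠ 0 ∧
      (∀ i j, ∃ P, algebraMap (Polynomial K) (RatFunc K) P
          = algebraMap (Polynomial K) (RatFunc K) h₀ * G i j) ∧
      (∀ hh : Polynomial K, (∀ i j, ∃ P, algebraMap (Polynomial K) (RatFunc K) P
          = algebraMap (Polynomial K) (RatFunc K) hh * G i j) → h₀ ∣ hh) := by
  classical
  set A := algebraMap (Polynomial K) (RatFunc K) with hA
  have keyx : ∀ x : RatFunc K, A x.denom * x = A x.num := by
    intro x
    have hd : A x.denom ≠ 0 := RatFunc.algebraMap_ne_zero (RatFunc.denom_ne_zero x)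
    have hnd := RatFunc.num_div_denom x
    set nn := x.num with hnn
    set dd := x.denom with hdd
    rw [← hnd, mul_comm, div_mul_cancel₀ _ hd]
  let I : Ideal (Polynomial K) :=
    { carrier := {h | ∀ i j, ∃ P, A P = A h * G i j}
      add_mem' := by
        intro a b ha hb i j
        obtain ⟨Pa, hPa⟩ := ha i j
        obtain ⟨Pb, hPb⟩ := hb i j
        exact ⟨Pa + Pb, by rw [map_add, map_add, hPa, hPb, add_mul]⟩
      zero_mem' := by
        intro i j
        exact ⟨0, by simp⟩
      smul_mem' := by
        intro c x hx i j
        obtain ⟨P, hP⟩ := hx i j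
        exact ⟨c * P, by rw [smul_eq_mul, map_mul, map_mul, hP, mul_assoc]⟩ }
  have memI : ∀ hh : Polynomial K, hh ∈ I ↔ ∀ i j, ∃ P, A P = A hh * G i j :=
    fun _ => Iff.rfl
  have hprin : I.IsPrincipal := IsPrincipalIdealRing.principal I
  refine ⟨Submodule.IsPrincipal.generator I, ?_, ?_, ?_⟩
  · -- nonzero
    intro h0
    have hbot : I = ⊥ := (Submodule.IsPrincipal.eq_bot_iff_generator_eq_zero I).mpr h0
    -- the product of denominators is in I
    set hden : Polynomial K := ∏ ij ∈ (Finset.univ ×ˢ Finset.univ : Finset (Fin r₂ × Fin r₁)),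
      (G ij.1 ij.2).denom with hhden
    have hdenne : hden ≠ 0 := by
      rw [hhden]
      exact Finset.prod_ne_zero_iff.mpr fun ij _ => RatFunc.denom_ne_zero _
    have hdenI : hden ∈ I := by
      rw [memI]
      intro i j
      refine ⟨(∏ ij ∈ ((Finset.univ ×ˢ Finset.univ : Finset (Fin r₂ × Fin r₁)).erase (i, j)),
        (G ij.1 ij.2).denom) * (G i j).num, ?_⟩
      have hsplit : hden = (G i j).denom *
          ∏ ij ∈ ((Finset.univ ×ˢ Finset.univ : Finset (Fin r₂ × Fin r₁)).erase (i, j)),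
            (G ij.1 ij.2).denom := by
        rw [hhden]
        exact (Finset.mul_prod_erase (Finset.univ ×ˢ Finset.univ)
          (fun ij : Fin r₂ × Fin r₁ => (G ij.1 ij.2).denom)
          (Finset.mem_product.mpr ⟨Finset.mem_univ (i,j).1, Finset.mem_univ (i,j).2⟩)).symm
      rw [hsplit, map_mul, map_mul, mul_comm (A (G i j).denom), mul_assoc, keyx]
    rw [hbot] at hdenI
    exact hdenne (Submodule.mem_bot _ |>.mp hdenI)
  · -- generator mem
    have := Submodule.IsPrincipal.generator_mem I
    rwa [memI] at this
  · -- generator divides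
    intro hh hhmem
    exact (Submodule.IsPrincipal.mem_iff_generator_dvd I).mp ((memI hh).mpr hhmem)

lemma tau_gen {r₂ r₁ : ℕ} (G : Matrix (Fin r₂) (Fin r₁) (RatFunc K))
    (h₀ : Polynomial K) (hne : h₀ ≠ 0)
    (hmem : ∀ i j, ∃ P, algebraMap (Polynomial K) (RatFunc K) P
        = algebraMap (Polynomial K) (RatFunc K) h₀ * G i j)
    (hgen : ∀ hh : Polynomial K, (∀ i j, ∃ P, algebraMap (Polynomial K) (RatFunc K) P
        = algebraMap (Polynomial K) (RatFunc K) hh * G i j) → h₀ ∣ hh)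
    (h : Polynomial K)
    (hden' : ∀ i j, ∃ Q, algebraMap (Polynomial K) (RatFunc K) Q
        = algebraMap (Polynomial K) (RatFunc K) h * tauRatFunc p n K (G i j)) :
    Polynomial.map (iterateFrobenius K p n) h₀ ∣ h := by
  classical
  set A := algebraMap (Polynomial K) (RatFunc K) with hA
  have Ainj : Function.Injective A := RatFunc.algebraMap_injective K
  choose P hP using hmem
  choose Q hQ using hden'
  set s : Set (Polynomial K) := insert h₀ {x | ∃ i j, x = P i j} with hs
  set J : Ideal (Polynomial K) := Ideal.span s with hJ
  obtain ⟨g, hg⟩ := (IsPrincipalIdealRing.principal J).principal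
  have hgh₀ : g ∣ h₀ := by
    rw [← Ideal.mem_span_singleton]
    show h₀ ∈ Ideal.span {g}
    rw [show Ideal.span {g} = J from hg.symm]
    exact Ideal.subset_span (Set.mem_insert _ _)
  have hgP : ∀ i j, g ∣ P i j := by
    intro i j
    rw [← Ideal.mem_span_singleton]
    show P i j ∈ Ideal.span {g}
    rw [show Ideal.span {g} = J from hg.symm]
    exact Ideal.subset_span (Set.mem_insert_iff.mpr (Or.inr ⟨i, j, rfl⟩))
  have hg0 : g ≠ 0 := by
    intro h0
    exact hne (zero_dvd_iff.mp (h0 ▸ hgh₀))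
  have hAg : A g ≠ 0 := fun hc => hg0 (Ainj (by rw [hc, map_zero]))
  obtain ⟨e, he⟩ := hgh₀
  have heI : ∀ i j, ∃ P', A P' = A e * G i j := by
    intro i j
    obtain ⟨Qe, hQe⟩ := hgP i j
    refine ⟨Qe, ?_⟩
    apply mul_left_cancel₀ hAg
    calc A g * A Qe = A (g * Qe) := (map_mul A g Qe).symm
      _ = A (P i j) := by rw [← hQe]
      _ = A h₀ * G i j := hP i j
      _ = A (g * e) * G i j := by rw [← he]
      _ = A g * (A e * G i j) := by rw [map_mul, mul_assoc]
  obtain ⟨w, hw⟩ := hgen e heI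
  have hgu : IsUnit g := by
    have h1 : h₀ * 1 = h₀ * (g * w) := by
      rw [mul_one]
      calc h₀ = g * e := he
        _ = g * (h₀ * w) := by rw [← hw]
        _ = h₀ * (g * w) := by ring
    exact IsUnit.of_mul_eq_one w (mul_left_cancel₀ hne h1).symm
  have hJtop : J = ⊤ := hg.trans (Ideal.span_singleton_eq_top.mpr hgu)
  -- the ideal L
  set τh₀ := Polynomial.map (iterateFrobenius K p n) h₀ with hτh₀
  let L : Ideal (Polynomial K) :=
    { carrier := {y | τh₀ ∣ h * y}
      add_mem' := by
        intro a b ha hb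
        show τh₀ ∣ h * (a + b)
        rw [mul_add]
        exact dvd_add ha hb
      zero_mem' := by
        show τh₀ ∣ h * 0
        simp
      smul_mem' := by
        intro c x hx
        show τh₀ ∣ h * (c • x)
        rw [smul_eq_mul, show h * (c * x) = c * (h * x) by ring]
        exact Dvd.dvd.mul_left hx c }
  have hspan : Ideal.span ((Polynomial.mapRingHom (iterateFrobenius K p n)) '' s) ≤ L := by
    rw [Ideal.span_le]
    rintro x ⟨y, hy, rfl⟩
    rcases Set.mem_insert_iff.mp hy with rfl | ⟨i, j, rfl⟩
    · show τh₀ ∣ h * (Polynomial.mapRingHom (iterateFrobenius K p n)) y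
      exact Dvd.dvd.mul_left (by rw [hτh₀]; exact dvd_refl _) h
    · show τh₀ ∣ h * (Polynomial.mapRingHom (iterateFrobenius K p n)) (P i j)
      refine ⟨Q i j, ?_⟩
      apply Ainj
      calc A (h * (Polynomial.mapRingHom (iterateFrobenius K p n)) (P i j))
          = A h * A ((P i j).map (iterateFrobenius K p n)) := by
            rw [map_mul]; rfl
        _ = A h * tauRatFunc p n K (A (P i j)) := by rw [tau_alg]
        _ = A h * tauRatFunc p n K (A h₀ * G i j) := by rw [hP i j]
        _ = A h * (tauRatFunc p n K (A h₀) * tauRatFunc p n K (G i j)) := by rw [map_mul]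
        _ = A h * (A τh₀ * tauRatFunc p n K (G i j)) := by rw [tau_alg, hτh₀]
        _ = A τh₀ * (A h * tauRatFunc p n K (G i j)) := by ring
        _ = A τh₀ * A (Q i j) := by rw [hQ i j]
        _ = A (τh₀ * Q i j) := (map_mul A _ _).symm
  have h1L : (1 : Polynomial K) ∈ L := by
    apply hspan
    have : Ideal.map (Polynomial.mapRingHom (iterateFrobenius K p n)) J
        = Ideal.span ((Polynomial.mapRingHom (iterateFrobenius K p n)) '' s) := by
      rw [hJ, Ideal.map_span]
    rw [← this, hJtop]
    rw [Ideal.map_top]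
    exact Submodule.mem_top
  have : τh₀ ∣ h * 1 := h1L
  rwa [mul_one] at this


lemma pow_pow_add (Ω : Type) [Field Ω] (x : Ω) (q a b : ℕ) :
    x ^ q ^ (a + b) = (x ^ q ^ a) ^ q ^ b := by
  rw [← pow_mul, ← pow_add]

lemma exists_fixed_multiple (hn : 0 < n) (θ : K) (d₁ d₂ : ℕ) (h₀ : Polynomial K)
    (hne : h₀ ≠ 0)
    (div1 : h₀ ∣ (X - C θ) ^ d₁ * Polynomial.map (iterateFrobenius K p n) h₀)
    (div2 : Polynomial.map (iterateFrobenius K p n) h₀ ∣ (X - C θ) ^ d₂ * h₀) :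
    ∃ h : Polynomial K, h ≠ 0 ∧ Polynomial.map (iterateFrobenius K p n) h = h ∧ h₀ ∣ h := by
  classical
  have hp1 : 1 < p := (Fact.out : p.Prime).one_lt
  have hq1 : 1 < p ^ n := Nat.one_lt_pow (Nat.pos_iff_ne_zero.mp hn) hp1
  set Ω := AlgebraicClosure K with hΩ
  set ι := algebraMap K Ω with hι
  set R : Finset Ω := (h₀.aroots Ω).toFinset with hR
  have hmemR : ∀ {α : Ω}, α ∈ R ↔ (Polynomial.aeval α) h₀ = 0 := by
    intro α
    rw [hR, Multiset.mem_toFinset, Polynomial.mem_aroots]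
    exact ⟨fun h => h.2, fun h => ⟨hne, h⟩⟩
  -- P2
  have P2 : ∀ α ∈ R, α ^ p ^ n = ι θ ∨ α ^ p ^ n ∈ R := by
    intro α hα
    obtain ⟨w₂, hw₂⟩ := div2
    have h1 : Polynomial.aeval (α ^ p ^ n) ((X - C θ) ^ d₂ * h₀) = 0 := by
      rw [hw₂, map_mul]
      rw [tau_eval p n K Ω h₀ α, hmemR.mp hα]
      rw [zero_pow (by positivity), zero_mul]
    rw [map_mul, map_pow, map_sub, Polynomial.aeval_X, Polynomial.aeval_C] at h1
    rcases mul_eq_zero.mp h1 with h2 | h2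
    · left
      by_contra h4
      exact pow_ne_zero d₂ (sub_ne_zero.mpr h4) h2
    · right
      exact hmemR.mpr h2
  -- P1
  have P1 : ∀ α ∈ R, α ≠ ι θ → ∃ δ ∈ R, δ ^ p ^ n = α := by
    intro α hα hαθ
    obtain ⟨w₁, hw₁⟩ := div1
    have h1 : Polynomial.aeval α ((X - C θ) ^ d₁ * Polynomial.map (iterateFrobenius K p n) h₀)
        = 0 := by
      rw [hw₁, map_mul, hmemR.mp hα, zero_mul]
    rw [map_mul, map_pow, map_sub, Polynomial.aeval_X, Polynomial.aeval_C] at h1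
    have h2 : Polynomial.aeval α (Polynomial.map (iterateFrobenius K p n) h₀) = 0 := by
      rcases mul_eq_zero.mp h1 with h2 | h2
      · exact absurd h2 (pow_ne_zero d₁ (sub_ne_zero.mpr hαθ))
      · exact h2
    obtain ⟨δ, hδ⟩ := (bijective_iterateFrobenius Ω p n).surjective α
    rw [iterateFrobenius_def] at hδ
    refine ⟨δ, hmemR.mpr ?_, hδ⟩
    have h3 : (Polynomial.aeval δ h₀) ^ p ^ n = 0 := by
      rw [← tau_eval p n K Ω h₀ δ, hδ, h2]
    by_contra h4
    exact pow_ne_zero _ h4 h3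
  -- image of frobenius stays in R
  have himg : R.image (fun x : Ω => x ^ p ^ n) ⊆ R := by
    by_contra hc
    obtain ⟨γ, hγi, hγR⟩ := Finset.not_subset.mp hc
    obtain ⟨α, hαR, hαγ⟩ := Finset.mem_image.mp hγi
    have hγθ : γ = ι θ := by
      rcases P2 α hαR with h | h
      · rw [← hαγ]; exact h
      · exact absurd (hαγ ▸ h) hγR
    have hθR : ι θ ∉ R := hγθ ▸ hγR
    have hRsub : R ⊆ R.image (fun x : Ω => x ^ p ^ n) := by
      intro β hβ
      obtain ⟨δ, hδR, hδ⟩ := P1 β hβ (fun hh => hθR (hh ▸ hβ))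
      exact Finset.mem_image.mpr ⟨δ, hδR, hδ⟩
    have h5 : insert (ι θ) R ⊆ R.image (fun x : Ω => x ^ p ^ n) := by
      intro x hx
      rcases Finset.mem_insert.mp hx with rfl | hx
      · rw [← hγθ]; exact hγi
      · exact hRsub hx
    have h6 := Finset.card_le_card h5
    rw [Finset.card_insert_of_notMem hθR] at h6
    have h7 := Finset.card_image_le (s := R) (f := fun x : Ω => x ^ p ^ n)
    omega
  -- closure of orbits
  have hclosed : ∀ α ∈ R, ∀ m : ℕ, α ^ p ^ (n * m) ∈ R := by
    intro α hα m
    induction m with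
    | zero => simpa using hα
    | succ m ih =>
      have he : α ^ p ^ (n * (m + 1)) = (α ^ p ^ (n * m)) ^ p ^ n := by
        rw [← pow_pow_add Ω α p (n * m) n, Nat.mul_add, Nat.mul_one]
      rw [he]
      exact himg (Finset.mem_image_of_mem _ ih)
  -- periodicity
  have hper : ∀ α ∈ R, α ^ p ^ (n * R.card.factorial) = α := by
    intro α hα
    have hmaps : ∀ m : Fin (R.card + 1), (fun m : Fin (R.card + 1) => α ^ p ^ (n * (m : ℕ))) m
        ∈ R := fun m => hclosed α hα m
    obtain ⟨i, _, j, _, hij, hfij⟩ := Finset.exists_ne_map_eq_of_card_lt_of_maps_to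
      (s := (Finset.univ : Finset (Fin (R.card + 1)))) (t := R)
      (by simp) (fun m _ => hmaps m)
    -- wlog i < j
    have key : ∀ (a b : Fin (R.card + 1)), (a : ℕ) < (b : ℕ) →
        α ^ p ^ (n * (a : ℕ)) = α ^ p ^ (n * (b : ℕ)) →
        ∃ d : ℕ, 1 ≤ d ∧ d ≤ R.card ∧ α ^ p ^ (n * d) = α := by
      intro a b hab heq
      refine ⟨(b : ℕ) - (a : ℕ), by omega, by omega, ?_⟩
      have hinj : Function.Injective (iterateFrobenius Ω p (n * (a : ℕ))) :=
        (iterateFrobenius Ω p (n * (a : ℕ))).injective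
      apply hinj
      show (α ^ p ^ (n * ((b:ℕ) - (a:ℕ)))) ^ p ^ (n * (a:ℕ)) = α ^ p ^ (n * (a:ℕ))
      rw [← pow_pow_add Ω α p (n * ((b:ℕ) - (a:ℕ))) (n * (a:ℕ))]
      rw [show n * ((b:ℕ) - (a:ℕ)) + n * (a:ℕ) = n * (b:ℕ) by
        rw [← Nat.mul_add, Nat.sub_add_cancel (Nat.le_of_lt hab)]]
      exact heq.symm
    have hd : ∃ d : ℕ, 1 ≤ d ∧ d ≤ R.card ∧ α ^ p ^ (n * d) = α := by
      rcases Ne.lt_or_gt (fun hc : (i : ℕ) = (j : ℕ) => hij (Fin.ext hc)) with hlt | hlt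
      · exact key i j hlt hfij
      · exact key j i hlt hfij.symm
    obtain ⟨d, hd1, hd2, hdper⟩ := hd
    obtain ⟨k, hk⟩ := Nat.dvd_factorial (by omega) hd2
    rw [hk]
    have : ∀ k : ℕ, α ^ p ^ (n * (d * k)) = α := by
      intro k
      induction k with
      | zero => simp
      | succ k ih =>
        rw [show n * (d * (k + 1)) = n * (d * k) + n * d by ring,
          pow_pow_add Ω α p (n * (d * k)) (n * d), ih, hdper]
    exact this k
  -- now build the polynomial
  set Mn := n * R.card.factorial with hMn
  have hMnne : p ^ Mn ≠ 1 := by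
    have : 0 < R.card.factorial := Nat.factorial_pos _
    have : 1 < p ^ Mn := Nat.one_lt_pow (by positivity) hp1
    omega
  set ψ : Polynomial K := X ^ p ^ Mn - X with hψ
  have hψne : ψ ≠ 0 := by
    have hmono : ψ.Monic := by
      rw [hψ]
      apply Polynomial.monic_X_pow_sub
      rw [Polynomial.degree_X]
      exact_mod_cast Nat.one_lt_pow
        (Nat.mul_ne_zero (by omega) (Nat.factorial_pos R.card).ne') hp1
    exact hmono.ne_zero
  have hfix : ψ.map (iterateFrobenius K p n) = ψ := by
    rw [hψ]
    simp [Polynomial.map_sub, Polynomial.map_pow, Polynomial.map_X]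
  have hψmap : ψ.map ι = (X : Polynomial Ω) ^ p ^ Mn - X := by
    rw [hψ]
    simp [Polynomial.map_sub, Polynomial.map_pow, Polynomial.map_X]
  set N := (h₀.map ι).roots.card with hN
  have hsplits : h₀.map ι
      = C (h₀.map ι).leadingCoeff * (((h₀.map ι).roots).map (fun a => X - C a)).prod :=
    (IsAlgClosed.splits (h₀.map ι)).eq_prod_roots
  have hdvdprod : (((h₀.map ι).roots).map (fun a => (X : Polynomial Ω) - C a)).prod
      ∣ (ψ.map ι) ^ N := by
    have h1 : (((h₀.map ι).roots).map (fun a => (X : Polynomial Ω) - C a)).prod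
        ∣ (((h₀.map ι).roots).map (fun _ => ψ.map ι)).prod := by
      apply Multiset.prod_dvd_prod_of_dvd
      intro a ha
      rw [Polynomial.dvd_iff_isRoot]
      have haR : a ∈ R := by
        rw [hR, Polynomial.aroots_def]
        exact Multiset.mem_toFinset.mpr ha
      have hpa := hper a haR
      show Polynomial.IsRoot (ψ.map ι) a
      rw [hψmap]
      simp only [Polynomial.IsRoot.def, Polynomial.eval_sub, Polynomial.eval_pow,
        Polynomial.eval_X]
      rw [hpa, sub_self]
    have h2 : (((h₀.map ι).roots).map (fun _ => ψ.map ι)).prod = (ψ.map ι) ^ N := by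
      rw [Multiset.map_const', Multiset.prod_replicate, hN]
    rw [← h2]
    exact h1
  have hlc : IsUnit (C (h₀.map ι).leadingCoeff) := by
    apply Polynomial.isUnit_C.mpr
    apply isUnit_iff_ne_zero.mpr
    apply Polynomial.leadingCoeff_ne_zero.mpr
    exact (Polynomial.map_ne_zero_iff (algebraMap K Ω).injective).mpr hne
  have h4 : h₀.map ι
      = (((h₀.map ι).roots).map (fun a => (X : Polynomial Ω) - C a)).prod
        * C (h₀.map ι).leadingCoeff := by
    rw [mul_comm]
    exact hsplits
  have hdvd3 : h₀.map ι ∣ (ψ.map ι) ^ N := by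
    calc h₀.map ι = (((h₀.map ι).roots).map (fun a => (X : Polynomial Ω) - C a)).prod
          * C (h₀.map ι).leadingCoeff := h4
      _ ∣ (ψ.map ι) ^ N := (IsUnit.mul_right_dvd hlc).mpr hdvdprod
  have hfinal : h₀ ∣ ψ ^ N := by
    rw [← Polynomial.map_dvd_map' ι, Polynomial.map_pow]
    exact hdvd3
  refine ⟨ψ ^ N, pow_ne_zero _ hψne, ?_, hfinal⟩
  rw [Polynomial.map_pow, hfix]

end AuxLemmas

theorem stmt_2
    (p n : ℕ) [Fact p.Prime] (hn : 0 < n)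
    (K : Type) [Field K] [CharP K p] (θ : K)
    (r₁ r₂ : ℕ)
    (S₁ : Matrix (Fin r₁) (Fin r₁) (Polynomial K))
    (S₂ : Matrix (Fin r₂) (Fin r₂) (Polynomial K))
    (u₁ u₂ : Kˣ) (d₁ d₂ : ℕ)
    (h₁ : S₁.det = C (u₁ : K) * (X - C θ) ^ d₁)
    (h₂ : S₂.det = C (u₂ : K) * (X - C θ) ^ d₂)
    -- `g : M₁(t) → M₂(t)`, a `K(t)`-linear map commuting with `σ`:
    (G : Matrix (Fin r₂) (Fin r₁) (RatFunc K))
    (hG : G * S₁.map (algebraMap (Polynomial K) (RatFunc K)) =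
          S₂.map (algebraMap (Polynomial K) (RatFunc K)) * G.map (tauRatFunc p n K)) :
    -- there are `h ∈ k[t] \ {0}` and `f = F ∈ Hom_σ(M₁, M₂)` with `h • g = f ⊗ id`:
    ∃ (h : Polynomial K) (F : Matrix (Fin r₂) (Fin r₁) (Polynomial K)),
      h ≠ 0 ∧ (∀ i, (h.coeff i) ^ p ^ n = h.coeff i) ∧
      F * S₁ = S₂ * F.map (Polynomial.mapRingHom (iterateFrobenius K p n)) ∧
      algebraMap (Polynomial K) (RatFunc K) h • G =
        F.map (algebraMap (Polynomial K) (RatFunc K)) := by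
  classical
  set A := algebraMap (Polynomial K) (RatFunc K) with hA
  have Ainj : Function.Injective A := RatFunc.algebraMap_injective K
  obtain ⟨h₀, hne, hmem, hgen⟩ := exists_gen K G
  choose P hP using hmem
  set Pm : Matrix (Fin r₂) (Fin r₁) (Polynomial K) := Matrix.of (fun i j => P i j) with hPm
  have hdet1 : (S₁.map A).det = A S₁.det := by
    rw [RingHom.map_det, RingHom.mapMatrix_apply]
  have hdet2 : (S₂.map A).det = A S₂.det := by
    rw [RingHom.map_det, RingHom.mapMatrix_apply]
  have hadj1 : (Matrix.adjugate S₁).map A = Matrix.adjugate (S₁.map A) := by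
    rw [← RingHom.mapMatrix_apply, RingHom.map_adjugate, RingHom.mapMatrix_apply]
  have hadj2 : (Matrix.adjugate S₂).map A = Matrix.adjugate (S₂.map A) := by
    rw [← RingHom.mapMatrix_apply, RingHom.map_adjugate, RingHom.mapMatrix_apply]
  have hPmA : Pm.map A = A h₀ • G := by
    ext i j
    rw [Matrix.map_apply, Matrix.smul_apply, smul_eq_mul]
    exact hP i j
  -- first divisibility: τ(h₀) ∣ (X - C θ)^d₂ * h₀
  have e2 : A S₂.det • G.map (tauRatFunc p n K) = (Matrix.adjugate S₂).map A * (G * S₁.map A) := by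
    have e1 : Matrix.adjugate (S₂.map A) * (S₂.map A * G.map (tauRatFunc p n K))
        = (S₂.map A).det • G.map (tauRatFunc p n K) := by
      rw [← Matrix.mul_assoc, Matrix.adjugate_mul, Matrix.smul_mul, Matrix.one_mul]
    rw [← hG, hdet2, ← hadj2] at e1
    exact e1.symm
  have step2 : (Matrix.adjugate S₂ * Pm * S₁).map A
      = A (S₂.det * h₀) • G.map (tauRatFunc p n K) := by
    rw [Matrix.map_mul, Matrix.map_mul, hPmA, Matrix.mul_smul, Matrix.smul_mul,
      Matrix.mul_assoc, ← e2, smul_smul, ← map_mul, mul_comm h₀ S₂.det]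
  have div2mem : ∀ i j, ∃ Q, A Q = A ((X - C θ) ^ d₂ * h₀) * tauRatFunc p n K (G i j) := by
    intro i j
    refine ⟨C ((u₂ : K)⁻¹) * ((Matrix.adjugate S₂ * Pm * S₁) i j), ?_⟩
    have hstep := Matrix.ext_iff.mpr step2 i j
    rw [Matrix.map_apply, Matrix.smul_apply, smul_eq_mul, Matrix.map_apply] at hstep
    have hpoly : C ((u₂ : K)⁻¹) * (S₂.det * h₀) = (X - C θ) ^ d₂ * h₀ := by
      rw [h₂]
      have : C ((u₂ : K)⁻¹) * (C (u₂ : K) * (X - C θ) ^ d₂ * h₀)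
          = (C ((u₂ : K)⁻¹) * C (u₂ : K)) * ((X - C θ) ^ d₂ * h₀) := by ring
      rw [this, ← C_mul, inv_mul_cancel₀ (Units.ne_zero u₂), C_1, one_mul]
    calc A (C ((u₂ : K)⁻¹) * ((Matrix.adjugate S₂ * Pm * S₁) i j))
        = A (C ((u₂ : K)⁻¹)) * A ((Matrix.adjugate S₂ * Pm * S₁) i j) := map_mul _ _ _
      _ = A (C ((u₂ : K)⁻¹)) * (A (S₂.det * h₀) * tauRatFunc p n K (G i j)) := by
          rw [hstep]
      _ = A (C ((u₂ : K)⁻¹) * (S₂.det * h₀)) * tauRatFunc p n K (G i j) := by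
          simp only [map_mul]; ring
      _ = A ((X - C θ) ^ d₂ * h₀) * tauRatFunc p n K (G i j) := by rw [hpoly]
  have div2' : h₀.map (iterateFrobenius K p n) ∣ (X - C θ) ^ d₂ * h₀ :=
    tau_gen p n K G h₀ hne (fun i j => ⟨P i j, hP i j⟩) hgen _ div2mem
  -- second divisibility: h₀ ∣ (X - C θ)^d₁ * τ(h₀)
  have hPτA : (Pm.map (Polynomial.mapRingHom (iterateFrobenius K p n))).map A
      = A (h₀.map (iterateFrobenius K p n)) • G.map (tauRatFunc p n K) := by
    ext i j
    rw [Matrix.map_apply, Matrix.map_apply, Matrix.smul_apply, smul_eq_mul, Matrix.map_apply]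
    calc A ((Polynomial.mapRingHom (iterateFrobenius K p n)) (Pm i j))
        = A ((Pm i j).map (iterateFrobenius K p n)) := rfl
      _ = tauRatFunc p n K (A (Pm i j)) := (tau_alg p n K (Pm i j)).symm
      _ = tauRatFunc p n K (A h₀ * G i j) := by rw [show A (Pm i j) = A h₀ * G i j from hP i j]
      _ = tauRatFunc p n K (A h₀) * tauRatFunc p n K (G i j) := map_mul _ _ _
      _ = A (h₀.map (iterateFrobenius K p n)) * tauRatFunc p n K (G i j) := by
          rw [tau_alg p n K h₀]
  have e2' : G * (S₁.map A * Matrix.adjugate (S₁.map A)) = A S₁.det • G := by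
    rw [Matrix.mul_adjugate, Matrix.mul_smul, Matrix.mul_one, hdet1]
  have step1 : (S₂ * Pm.map (Polynomial.mapRingHom (iterateFrobenius K p n))
        * Matrix.adjugate S₁).map A
      = A (S₁.det * h₀.map (iterateFrobenius K p n)) • G := by
    rw [Matrix.map_mul, Matrix.map_mul, hPτA, hadj1, Matrix.mul_smul, Matrix.smul_mul, ← hG,
      Matrix.mul_assoc, e2', smul_smul, ← map_mul,
      mul_comm (h₀.map (iterateFrobenius K p n)) S₁.det]
  have div1mem : ∀ i j, ∃ Q,
      A Q = A ((X - C θ) ^ d₁ * h₀.map (iterateFrobenius K p n)) * G i j := by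
    intro i j
    refine ⟨C ((u₁ : K)⁻¹) * ((S₂ * Pm.map (Polynomial.mapRingHom (iterateFrobenius K p n))
      * Matrix.adjugate S₁) i j), ?_⟩
    have hstep := Matrix.ext_iff.mpr step1 i j
    rw [Matrix.map_apply, Matrix.smul_apply, smul_eq_mul] at hstep
    have hpoly : C ((u₁ : K)⁻¹) * (S₁.det * h₀.map (iterateFrobenius K p n))
        = (X - C θ) ^ d₁ * h₀.map (iterateFrobenius K p n) := by
      rw [h₁]
      have : C ((u₁ : K)⁻¹) * (C (u₁ : K) * (X - C θ) ^ d₁ * h₀.map (iterateFrobenius K p n))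
          = (C ((u₁ : K)⁻¹) * C (u₁ : K))
            * ((X - C θ) ^ d₁ * h₀.map (iterateFrobenius K p n)) := by ring
      rw [this, ← C_mul, inv_mul_cancel₀ (Units.ne_zero u₁), C_1, one_mul]
    calc A (C ((u₁ : K)⁻¹) * ((S₂ * Pm.map (Polynomial.mapRingHom (iterateFrobenius K p n))
          * Matrix.adjugate S₁) i j))
        = A (C ((u₁ : K)⁻¹)) * A ((S₂ * Pm.map (Polynomial.mapRingHom (iterateFrobenius K p n))
          * Matrix.adjugate S₁) i j) := map_mul _ _ _
      _ = A (C ((u₁ : K)⁻¹)) * (A (S₁.det * h₀.map (iterateFrobenius K p n)) * G i j) := by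
          rw [hstep]
      _ = A (C ((u₁ : K)⁻¹) * (S₁.det * h₀.map (iterateFrobenius K p n))) * G i j := by
          simp only [map_mul]; ring
      _ = A ((X - C θ) ^ d₁ * h₀.map (iterateFrobenius K p n)) * G i j := by rw [hpoly]
  have div1' : h₀ ∣ (X - C θ) ^ d₁ * h₀.map (iterateFrobenius K p n) := hgen _ div1mem
  -- get the fixed multiple
  obtain ⟨h, hhne, hhfix, hhdvd⟩ :=
    exists_fixed_multiple p n K hn θ d₁ d₂ h₀ hne div1' div2'
  obtain ⟨w, hw⟩ := hhdvd
  set F : Matrix (Fin r₂) (Fin r₁) (Polynomial K) := Matrix.of (fun i j => w * P i j) with hF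
  have hFA : F.map A = A h • G := by
    ext i j
    rw [Matrix.map_apply, Matrix.smul_apply, smul_eq_mul]
    calc A (F i j) = A (w * P i j) := rfl
      _ = A w * A (P i j) := map_mul _ _ _
      _ = A w * (A h₀ * G i j) := by rw [hP i j]
      _ = A (h₀ * w) * G i j := by rw [map_mul]; ring
      _ = A h * G i j := by rw [← hw]
  have hF' : (F.map (Polynomial.mapRingHom (iterateFrobenius K p n))).map A
      = A h • G.map (tauRatFunc p n K) := by
    ext i j
    rw [Matrix.map_apply, Matrix.map_apply, Matrix.smul_apply, smul_eq_mul, Matrix.map_apply]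
    have hFij : A (F i j) = A h * G i j := by
      have h5 := Matrix.ext_iff.mpr hFA i j
      rw [Matrix.map_apply, Matrix.smul_apply, smul_eq_mul] at h5
      exact h5
    calc A ((Polynomial.mapRingHom (iterateFrobenius K p n)) (F i j))
        = A ((F i j).map (iterateFrobenius K p n)) := rfl
      _ = tauRatFunc p n K (A (F i j)) := (tau_alg p n K (F i j)).symm
      _ = tauRatFunc p n K (A h * G i j) := by rw [hFij]
      _ = tauRatFunc p n K (A h) * tauRatFunc p n K (G i j) := map_mul _ _ _
      _ = A (h.map (iterateFrobenius K p n)) * tauRatFunc p n K (G i j) := by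
          rw [tau_alg p n K h]
      _ = A h * tauRatFunc p n K (G i j) := by rw [hhfix]
  refine ⟨h, F, hhne, ?_, ?_, hFA.symm⟩
  · intro i
    have h6 := congrArg (fun f : Polynomial K => f.coeff i) hhfix
    simp only [Polynomial.coeff_map] at h6
    rw [iterateFrobenius_def] at h6
    exact h6
  · have hBig : (F * S₁).map A
        = (S₂ * F.map (Polynomial.mapRingHom (iterateFrobenius K p n))).map A := by
      rw [Matrix.map_mul, Matrix.map_mul, hFA, hF', Matrix.smul_mul, hG, Matrix.mul_smul]
    apply Matrix.ext
    intro i j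
    apply Ainj
    have h7 := Matrix.ext_iff.mpr hBig i j
    rw [Matrix.map_apply, Matrix.map_apply] at h7
    exact h7
end

section
/- Let M be an effective t-motif over K and write M ⊗ K†{t} for M ⊗_{K[t]} K†{t}, with σ extended τ-semilinearly by σ(m⊗f) = σ(m)⊗τ(f). Suppose m ∈ M ⊗ K†{t} and h ∈ K†{t} with h ≠ 0 satisfy τ(h)·m = h·σ(m) (i.e. the element m/h of M ⊗ Frac(K†{t}) is σ-invariant). Then there exist a nonzero polynomial h′ ∈ K[t] all of whose coefficients c satisfy c^q = c (i.e. h′ has coefficients in k) and an element m′ ∈ M ⊗ K†{t} with σ(m′) = m′ such that h′·m = h·m′. (This expresses that H_an(M,k(t)) = H_an(M,k[t]) ⊗_{k[t]} k(t).) -/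
set_option linter.unusedSectionVars false
set_option maxHeartbeats 1000000

/-!
STATEMENT 6. `K` is a field of characteristic `p` containing the finite field `k` with
`q = p ^ n` elements, `θ ∈ K`.  An effective t-motif over `K` is represented (via a
choice of `K[t]`-basis) by the column module `Fin r → K[t]` with `σ(v) = S ⬝ τ(v)`,
where `det S = u (t-θ)^d`, `u ∈ Kˣ`.  `K†` (= `Kd`) is a field containing `K`,
algebraically closed and complete w.r.t. a nontrivial nonarchimedean absolute value.
`M ⊗_{K[t]} K†{t}` is the module of columns `Fin r → K†⟦t⟧` whose entries are restricted
(coefficients tend to `0`), with `σ(m) = S ⬝ τ(m)` where `τ` raises all coefficients to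
the `q`-th power.

Statement: if `m` has restricted entries and `h ∈ K†{t}`, `h ≠ 0`, satisfy
`τ(h)·m = h·σ(m)`, then there are a nonzero `h\' ∈ k[t] ⊆ K[t]` (coefficients fixed by
`c ↦ c^q`) and `m\'` with restricted entries and `σ(m\') = m\'` such that `h\'·m = h·m\'`.
(`H_an(M,k(t)) = H_an(M,k[t]) ⊗_{k[t]} k(t)`.)
-/

open Polynomial

open Filter

/-- Restricted power series: the coefficients tend to `0`. -/
def IsRestricted (Kd : Type) [NormedField Kd] (f : PowerSeries Kd) : Prop :=
  Filter.Tendsto (fun i => ‖(PowerSeries.coeff i) f‖) Filter.atTop (nhds 0)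

namespace Stmt6

variable {Kd : Type} [NontriviallyNormedField Kd]

lemma res_def {f : PowerSeries Kd} :
    IsRestricted Kd f ↔ ∀ ε : ℝ, 0 < ε → ∃ N, ∀ m, N ≤ m → ‖PowerSeries.coeff m f‖ < ε := by
  rw [IsRestricted, NormedAddCommGroup.tendsto_atTop]
  constructor
  · intro H ε hε
    obtain ⟨N, hN⟩ := H ε hε
    refine ⟨N, fun m hm => ?_⟩
    have := hN m hm
    rwa [sub_zero, Real.norm_of_nonneg (norm_nonneg _)] at this
  · intro H ε hε
    obtain ⟨N, hN⟩ := H ε hε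
    refine ⟨N, fun m hm => ?_⟩
    rw [sub_zero, Real.norm_of_nonneg (norm_nonneg _)]
    exact hN m hm

lemma res_bound {f : PowerSeries Kd} (hf : IsRestricted Kd f) :
    ∃ C : ℝ, 0 < C ∧ ∀ i, ‖PowerSeries.coeff i f‖ ≤ C := by
  obtain ⟨N, hN⟩ := res_def.1 hf 1 one_pos
  refine ⟨max 1 (((Finset.range N).sup fun j => ‖PowerSeries.coeff j f‖₊ : NNReal) : ℝ),
    lt_max_of_lt_left one_pos, fun i => ?_⟩
  rcases lt_or_ge i N with hi | hi
  · refine le_max_of_le_right ?_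
    have : ‖PowerSeries.coeff i f‖₊ ≤ (Finset.range N).sup fun j => ‖PowerSeries.coeff j f‖₊ :=
      Finset.le_sup (f := fun j => ‖PowerSeries.coeff j f‖₊) (Finset.mem_range.2 hi)
    exact_mod_cast this
  · exact le_max_of_le_left (hN i hi).le

lemma res_of_ev {f : PowerSeries Kd} (N : ℕ) (hf : ∀ m, N ≤ m → PowerSeries.coeff m f = 0) :
    IsRestricted Kd f :=
  res_def.2 fun ε hε => ⟨N, fun m hm => by rw [hf m hm, norm_zero]; exact hε⟩

lemma res_zero : IsRestricted Kd (0 : PowerSeries Kd) :=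
  res_of_ev 0 (by simp)

lemma res_neg {f : PowerSeries Kd} (hf : IsRestricted Kd f) : IsRestricted Kd (-f) := by
  have : (fun i => ‖PowerSeries.coeff i (-f)‖) = fun i => ‖PowerSeries.coeff i f‖ := by
    funext i; simp
  rw [IsRestricted, this]; exact hf

lemma res_add {f g : PowerSeries Kd} (hf : IsRestricted Kd f) (hg : IsRestricted Kd g) :
    IsRestricted Kd (f + g) := by
  have h0 : Tendsto (fun i => ‖PowerSeries.coeff i f‖ + ‖PowerSeries.coeff i g‖)
      atTop (nhds 0) := by simpa using hf.add hg
  exact squeeze_zero (fun n => norm_nonneg _)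
    (fun n => by rw [map_add]; exact norm_add_le _ _) h0

lemma res_sub {f g : PowerSeries Kd} (hf : IsRestricted Kd f) (hg : IsRestricted Kd g) :
    IsRestricted Kd (f - g) := by
  rw [sub_eq_add_neg]; exact res_add hf (res_neg hg)

lemma res_poly (P : Polynomial Kd) : IsRestricted Kd (P : PowerSeries Kd) :=
  res_of_ev (P.natDegree + 1) fun m hm => by
    rw [Polynomial.coeff_coe]
    exact Polynomial.coeff_eq_zero_of_natDegree_lt hm

variable [IsUltrametricDist Kd]

lemma mul_bnd {f g : PowerSeries Kd} {B C : ℝ} (hB : 0 ≤ B) (hC : 0 ≤ C)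
    (hf : ∀ i, ‖PowerSeries.coeff i f‖ ≤ B) (hg : ∀ i, ‖PowerSeries.coeff i g‖ ≤ C) :
    ∀ k, ‖PowerSeries.coeff k (f * g)‖ ≤ B * C := by
  intro k
  rw [PowerSeries.coeff_mul]
  refine IsUltrametricDist.norm_sum_le_of_forall_le_of_nonneg (mul_nonneg hB hC) fun i _ => ?_
  calc ‖PowerSeries.coeff i.1 f * PowerSeries.coeff i.2 g‖
      = ‖PowerSeries.coeff i.1 f‖ * ‖PowerSeries.coeff i.2 g‖ := norm_mul _ _
    _ ≤ B * C := mul_le_mul (hf _) (hg _) (norm_nonneg _) hB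

lemma res_mul {f g : PowerSeries Kd} (hf : IsRestricted Kd f) (hg : IsRestricted Kd g) :
    IsRestricted Kd (f * g) := by
  obtain ⟨Cf, hCf0, hCf⟩ := res_bound hf
  obtain ⟨Cg, hCg0, hCg⟩ := res_bound hg
  set C := max Cf Cg with hCdef
  have hC0 : 0 < C := lt_max_of_lt_left hCf0
  refine res_def.2 fun ε hε => ?_
  have hδ : 0 < ε / 2 / C := by positivity
  obtain ⟨Nf, hNf⟩ := res_def.1 hf _ hδ
  obtain ⟨Ng, hNg⟩ := res_def.1 hg _ hδ
  set N := max Nf Ng with hNdef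
  refine ⟨2 * N + 1, fun m hm => ?_⟩
  have key : ‖PowerSeries.coeff m (f * g)‖ ≤ ε / 2 := by
    rw [PowerSeries.coeff_mul]
    refine IsUltrametricDist.norm_sum_le_of_forall_le_of_nonneg (by positivity) fun i hi => ?_
    have hsum : i.1 + i.2 = m := Finset.HasAntidiagonal.mem_antidiagonal.1 hi
    have : N ≤ i.1 ∨ N ≤ i.2 := by omega
    rw [norm_mul]
    rcases this with h1 | h2
    · calc ‖PowerSeries.coeff i.1 f‖ * ‖PowerSeries.coeff i.2 g‖
          ≤ (ε / 2 / C) * C := by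
            refine mul_le_mul (hNf _ (le_trans (le_max_left _ _) h1)).le
              (le_trans (hCg _) (le_max_right _ _)) (norm_nonneg _) hδ.le
        _ = ε / 2 := div_mul_cancel₀ _ hC0.ne'
    · calc ‖PowerSeries.coeff i.1 f‖ * ‖PowerSeries.coeff i.2 g‖
          ≤ C * (ε / 2 / C) := by
            refine mul_le_mul (le_trans (hCf _) (le_max_left _ _))
              (hNg _ (le_trans (le_max_right _ _) h2)).le (norm_nonneg _) hC0.le
        _ = ε / 2 := by rw [mul_comm]; exact div_mul_cancel₀ _ hC0.ne'
  linarith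


lemma res_tau (p n : ℕ) [Fact p.Prime] [CharP Kd p] {f : PowerSeries Kd}
    (hf : IsRestricted Kd f) :
    IsRestricted Kd (PowerSeries.map (iterateFrobenius Kd p n) f) := by
  have hp : (p : ℕ) ≠ 0 := (Fact.out : p.Prime).ne_zero
  have h0 : Tendsto (fun i => ‖PowerSeries.coeff i f‖ ^ p ^ n) atTop (nhds 0) := by
    have := hf.pow (p ^ n)
    rwa [zero_pow (pow_ne_zero n hp)] at this
  rw [IsRestricted]
  have heq : (fun i => ‖PowerSeries.coeff i (PowerSeries.map (iterateFrobenius Kd p n) f)‖)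
      = fun i => ‖PowerSeries.coeff i f‖ ^ p ^ n := by
    funext i
    rw [PowerSeries.coeff_map, iterateFrobenius_def, norm_pow]
  rw [heq]; exact h0

variable [CompleteSpace Kd]

lemma summable_of_norm_bnd {u : ℕ → Kd} {b : ℕ → ℝ} (hb : ∀ k, ‖u k‖ ≤ b k)
    (h0 : Tendsto b atTop (nhds 0)) : Summable u := by
  refine NonarchimedeanAddGroup.summable_of_tendsto_cofinite_zero ?_
  rw [Nat.cofinite_eq_atTop]
  exact tendsto_zero_iff_norm_tendsto_zero.2 (squeeze_zero (fun k => norm_nonneg _) hb h0)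

lemma tsum_telescope {s : ℕ → Kd} (hs : Summable fun k => s k - s (k + 1))
    (h0 : Tendsto s atTop (nhds 0)) : ∑' k, (s k - s (k + 1)) = s 0 := by
  refine (hs.hasSum_iff_tendsto_nat.2 ?_).tsum_eq
  have : (fun nn => ∑ i ∈ Finset.range nn, (s i - s (i + 1))) = fun nn => s 0 - s nn := by
    funext nn; exact Finset.sum_range_sub' s nn
  rw [this]
  simpa using tendsto_const_nhds.sub h0

lemma coeff_tsum_mul (G : ℕ → PowerSeries Kd) (w : PowerSeries Kd)
    (hs : ∀ a, Summable fun k => PowerSeries.coeff a (G k)) (m : ℕ) :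
    Summable (fun k => PowerSeries.coeff m (G k * w)) ∧
    PowerSeries.coeff m ((PowerSeries.mk fun a => ∑' k, PowerSeries.coeff a (G k)) * w)
      = ∑' k, PowerSeries.coeff m (G k * w) := by
  have hsum : ∀ x ∈ Finset.HasAntidiagonal.antidiagonal m, Summable fun k =>
      PowerSeries.coeff x.1 (G k) * PowerSeries.coeff x.2 w :=
    fun x _ => (hs x.1).mul_right _
  constructor
  · refine (summable_sum hsum).congr fun k => ?_
    rw [PowerSeries.coeff_mul]
  · rw [PowerSeries.coeff_mul]
    have h1 : ∀ x ∈ Finset.HasAntidiagonal.antidiagonal m,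
        (PowerSeries.coeff x.1 (PowerSeries.mk fun a => ∑' k, PowerSeries.coeff a (G k)))
          * PowerSeries.coeff x.2 w
        = ∑' k, PowerSeries.coeff x.1 (G k) * PowerSeries.coeff x.2 w := by
      intro x _
      rw [PowerSeries.coeff_mk, ← tsum_mul_right]
    rw [Finset.sum_congr rfl h1, ← Summable.tsum_finsetSum hsum]
    exact tsum_congr fun k => (PowerSeries.coeff_mul m (G k) w).symm

lemma res_tsum (G : ℕ → PowerSeries Kd) (b : ℕ → ℝ)
    (hres : ∀ k, IsRestricted Kd (G k))
    (hb : ∀ k m, ‖PowerSeries.coeff m (G k)‖ ≤ b k)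
    (h0 : Tendsto b atTop (nhds 0)) :
    IsRestricted Kd (PowerSeries.mk fun a => ∑' k, PowerSeries.coeff a (G k)) := by
  refine res_def.2 fun ε hε => ?_
  have hε2 : 0 < ε / 2 := half_pos hε
  obtain ⟨k₀, hk₀⟩ := (Metric.tendsto_atTop.1 h0) (ε / 2) hε2
  choose Ms hMs using fun k => res_def.1 (hres k) (ε / 2) hε2
  refine ⟨(Finset.range k₀).sup Ms, fun m hm => ?_⟩
  rw [PowerSeries.coeff_mk]
  have key : ∀ k, ‖PowerSeries.coeff m (G k)‖ ≤ ε / 2 := by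
    intro k
    rcases lt_or_ge k k₀ with hk | hk
    · refine (hMs k m (le_trans ?_ hm)).le
      exact Finset.le_sup (f := Ms) (Finset.mem_range.2 hk)
    · refine le_trans (hb k m) ?_
      have := hk₀ k hk
      rw [Real.dist_eq, sub_zero] at this
      exact le_trans (le_abs_self _) this.le
  calc ‖∑' k, PowerSeries.coeff m (G k)‖ ≤ ε / 2 :=
        IsUltrametricDist.norm_tsum_le_of_forall_le_of_nonneg hε2.le key
    _ < ε := by linarith

lemma norm_sub_le_max' (x y : Kd) : ‖x - y‖ ≤ max ‖x‖ ‖y‖ := by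
  rw [sub_eq_add_neg]
  refine le_trans (IsUltrametricDist.norm_add_le_max x (-y)) ?_
  rw [norm_neg]

lemma poly_div (P : Polynomial Kd) (d : ℕ) (hP0 : P.coeff d ≠ 0) (hPdeg : P.degree ≤ (d : ℕ))
    (hPc : ∀ i, ‖P.coeff i‖ ≤ ‖P.coeff d‖) :
    ∀ N : ℕ, ∀ f : Polynomial Kd, f.degree < (N : ℕ) → ∀ B : ℝ, 0 ≤ B →
    (∀ i, ‖f.coeff i‖ ≤ B) →
    ∃ Q R : Polynomial Kd, f = Q * P + R ∧ R.degree < (d : ℕ) ∧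
      (∀ i, ‖Q.coeff i‖ ≤ B / ‖P.coeff d‖) ∧ (∀ i, ‖R.coeff i‖ ≤ B) ∧
      (∀ i, f.degree < ((i + d : ℕ) : WithBot ℕ) → Q.coeff i = 0) := by
  have hc : 0 < ‖P.coeff d‖ := norm_pos_iff.2 hP0
  intro N
  induction N with
  | zero =>
    intro f hf B hB hfB
    have hf0 : f = 0 := by
      ext j
      rw [Polynomial.coeff_zero]
      exact (Polynomial.degree_lt_iff_coeff_zero f 0).1 (by exact_mod_cast hf) j (Nat.zero_le j)
    refine ⟨0, 0, by rw [hf0]; ring, ?_, ?_, ?_, ?_⟩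
    · rw [Polynomial.degree_zero]; exact WithBot.bot_lt_coe d
    · intro i; rw [Polynomial.coeff_zero, norm_zero]; exact div_nonneg hB hc.le
    · intro i; rw [Polynomial.coeff_zero, norm_zero]; exact hB
    · intro i _; rw [Polynomial.coeff_zero]
  | succ N ih =>
    intro f hf B hB hfB
    by_cases hfd : f.degree < (d : ℕ)
    · refine ⟨0, f, by ring, hfd, ?_, hfB, fun i hi => by rw [Polynomial.coeff_zero]⟩
      intro i; rw [Polynomial.coeff_zero, norm_zero]; exact div_nonneg hB hc.le
    · push_neg at hfd
      have hfne : f ≠ 0 := by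
        intro hzero
        rw [hzero, Polynomial.degree_zero] at hfd
        exact absurd hfd (by simp)
      set k := f.natDegree with hk
      have hdegf : f.degree = (k : ℕ) := Polynomial.degree_eq_natDegree hfne
      have hdk : d ≤ k := by
        rw [hdegf] at hfd; exact_mod_cast hfd
      have hkN : k ≤ N := by
        rw [hdegf] at hf
        have hcast : k < N + 1 := by exact_mod_cast hf
        omega
      set a := f.coeff k / P.coeff d with ha
      have hanorm : ‖a‖ ≤ B / ‖P.coeff d‖ := by
        rw [ha, norm_div]
        exact div_le_div_of_nonneg_right (hfB k) hc.le
      set T := Polynomial.C a * P * Polynomial.X ^ (k - d) with hT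
      have hTcoeff : ∀ j, T.coeff j =
          if k - d ≤ j then a * P.coeff (j - (k - d)) else 0 := by
        intro j
        rw [hT, Polynomial.coeff_mul_X_pow']
        split
        · rw [Polynomial.coeff_C_mul]
        · rfl
      have hTk : T.coeff k = f.coeff k := by
        rw [hTcoeff k, if_pos (Nat.sub_le k d), Nat.sub_sub_self hdk, ha,
          div_mul_cancel₀ _ hP0]
      have hTb : ∀ j, ‖T.coeff j‖ ≤ B := by
        intro j
        rw [hTcoeff j]
        split
        · rw [norm_mul]
          calc ‖a‖ * ‖P.coeff _‖ ≤ (B / ‖P.coeff d‖) * ‖P.coeff d‖ :=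
                mul_le_mul hanorm (hPc _) (norm_nonneg _) (div_nonneg hB hc.le)
            _ = B := div_mul_cancel₀ _ hc.ne'
        · rw [norm_zero]; exact hB
      set f' := f - T with hf'
      have hf'deg : f'.degree < (k : ℕ) := by
        rw [Polynomial.degree_lt_iff_coeff_zero]
        intro mm hmm
        rcases eq_or_lt_of_le hmm with heqm | hmk
        · rw [hf', Polynomial.coeff_sub, ← heqm, hTk, sub_self]
        · rw [hf', Polynomial.coeff_sub,
            Polynomial.coeff_eq_zero_of_natDegree_lt hmk, hTcoeff]
          have hPz : P.coeff (mm - (k - d)) = 0 := by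
            refine Polynomial.coeff_eq_zero_of_degree_lt (lt_of_le_of_lt hPdeg ?_)
            have : d < mm - (k - d) := by omega
            exact_mod_cast this
          split
          · rw [hPz, mul_zero, zero_sub, neg_zero]
          · rw [zero_sub, neg_zero]
      have hf'B : ∀ i, ‖f'.coeff i‖ ≤ B := by
        intro i
        rw [hf', Polynomial.coeff_sub]
        exact le_trans (norm_sub_le_max' _ _) (max_le (hfB i) (hTb i))
      obtain ⟨Q', R', hQR, hRdeg, hQb, hRb, hQsupp⟩ :=
        ih f' (lt_of_lt_of_le hf'deg (by exact_mod_cast hkN)) B hB hf'B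
      refine ⟨Q' + Polynomial.C a * Polynomial.X ^ (k - d), R', ?_, hRdeg, ?_, hRb, ?_⟩
      · have hsplit : f = f' + T := by rw [hf']; ring
        rw [hsplit, hQR, hT]; ring
      · intro i
        rw [Polynomial.coeff_add]
        refine le_trans (IsUltrametricDist.norm_add_le_max _ _) (max_le (hQb i) ?_)
        rw [Polynomial.coeff_C_mul, Polynomial.coeff_X_pow]
        split
        · rw [mul_one]; exact hanorm
        · rw [mul_zero, norm_zero]; exact div_nonneg hB hc.le
      · intro i hi
        have hik : k < i + d := by
          rw [hdegf] at hi; exact_mod_cast hi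
        rw [Polynomial.coeff_add]
        have h1 : Q'.coeff i = 0 := by
          refine hQsupp i (lt_trans hf'deg ?_)
          exact_mod_cast hik
        have h2 : (Polynomial.C a * Polynomial.X ^ (k - d)).coeff i = 0 := by
          rw [Polynomial.coeff_C_mul, Polynomial.coeff_X_pow]
          have hne : i ≠ k - d := by omega
          rw [if_neg hne, mul_zero]
        rw [h1, h2, add_zero]


/-- The family `j ↦ (coeff j f) • qp j`, viewed as power series. -/
noncomputable def GQ (qp : ℕ → Polynomial Kd) (f : PowerSeries Kd) (j : ℕ) : PowerSeries Kd :=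
  (PowerSeries.coeff j f) • ((qp j : Polynomial Kd) : PowerSeries Kd)

/-- The "division" operator built from the family of polynomial quotients `qp`. -/
noncomputable def QQ (qp : ℕ → Polynomial Kd) (f : PowerSeries Kd) : PowerSeries Kd :=
  PowerSeries.mk fun a => ∑' j, PowerSeries.coeff a (GQ qp f j)

lemma coeff_GQ (qp : ℕ → Polynomial Kd) (f : PowerSeries Kd) (j a : ℕ) :
    PowerSeries.coeff a (GQ qp f j) = PowerSeries.coeff j f * (qp j).coeff a := by
  rw [GQ, map_smul, smul_eq_mul, Polynomial.coeff_coe]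

lemma coeff_QQ (qp : ℕ → Polynomial Kd) (f : PowerSeries Kd) (a : ℕ) :
    PowerSeries.coeff a (QQ qp f) = ∑' j, PowerSeries.coeff j f * (qp j).coeff a := by
  rw [QQ, PowerSeries.coeff_mk]
  exact tsum_congr fun j => coeff_GQ qp f j a

/-- Iteration for the Weierstrass-type division. -/
noncomputable def Fiter (qp : ℕ → Polynomial Kd) (g : PowerSeries Kd) (d : ℕ) : ℕ → PowerSeries Kd :=
  fun k => Nat.rec (PowerSeries.X ^ d) (fun _ fk => -(QQ qp fk * g)) k

variable [CompleteSpace Kd]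

lemma GQ_summable {qp : ℕ → Polynomial Kd} {cq : ℝ} (hq : ∀ j i, ‖(qp j).coeff i‖ ≤ cq)
    {f : PowerSeries Kd} (hf : IsRestricted Kd f) (a : ℕ) :
    Summable fun j => PowerSeries.coeff a (GQ qp f j) := by
  refine summable_of_norm_bnd (b := fun j => ‖PowerSeries.coeff j f‖ * cq) ?_ ?_
  · intro j
    rw [coeff_GQ, norm_mul]
    exact mul_le_mul_of_nonneg_left (hq j a) (norm_nonneg _)
  · simpa using hf.mul_const cq

lemma QQ_bnd {qp : ℕ → Polynomial Kd} {cq : ℝ} (hq : ∀ j i, ‖(qp j).coeff i‖ ≤ cq)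
    (hcq : 0 ≤ cq) {f : PowerSeries Kd} {B : ℝ} (hB : 0 ≤ B)
    (hfB : ∀ i, ‖PowerSeries.coeff i f‖ ≤ B) (a : ℕ) :
    ‖PowerSeries.coeff a (QQ qp f)‖ ≤ B * cq := by
  rw [QQ, PowerSeries.coeff_mk]
  refine IsUltrametricDist.norm_tsum_le_of_forall_le_of_nonneg (mul_nonneg hB hcq) fun j => ?_
  rw [coeff_GQ, norm_mul]
  exact mul_le_mul (hfB j) (hq j a) (norm_nonneg _) hB

lemma QQ_res {qp : ℕ → Polynomial Kd} {cq : ℝ} (hq : ∀ j i, ‖(qp j).coeff i‖ ≤ cq)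
    (hcq : 0 ≤ cq) {d : ℕ} (hsupp : ∀ j i, j < i + d → (qp j).coeff i = 0)
    {f : PowerSeries Kd} (hf : IsRestricted Kd f) :
    IsRestricted Kd (QQ qp f) := by
  refine res_def.2 fun ε hε => ?_
  have hδ : 0 < ε / 2 / (cq + 1) := by positivity
  obtain ⟨N₂, hN₂⟩ := res_def.1 hf _ hδ
  refine ⟨N₂, fun a ha => ?_⟩
  rw [QQ, PowerSeries.coeff_mk]
  have hterm : ∀ j, ‖PowerSeries.coeff a (GQ qp f j)‖ ≤ ε / 2 := by
    intro j
    rcases lt_or_ge j (a + d) with hj | hj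
    · rw [coeff_GQ, hsupp j a hj, mul_zero, norm_zero]; positivity
    · rw [coeff_GQ, norm_mul]
      have h1 : ‖PowerSeries.coeff j f‖ ≤ ε / 2 / (cq + 1) :=
        (hN₂ j (le_trans (le_trans ha (Nat.le_add_right a d)) hj)).le
      calc ‖PowerSeries.coeff j f‖ * ‖(qp j).coeff a‖
          ≤ (ε / 2 / (cq + 1)) * (cq + 1) := by
            refine mul_le_mul h1 (le_trans (hq j a) (by linarith)) (norm_nonneg _) hδ.le
        _ = ε / 2 := div_mul_cancel₀ _ (by positivity)
  have := IsUltrametricDist.norm_tsum_le_of_forall_le_of_nonneg (by positivity :(0:ℝ) ≤ ε/2) hterm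
  linarith

lemma exists_poly_multiple {h : PowerSeries Kd} (hh : h ≠ 0) (hres : IsRestricted Kd h) :
    ∃ (P : Polynomial Kd) (v : PowerSeries Kd), P ≠ 0 ∧ IsRestricted Kd v ∧
      (P : PowerSeries Kd) = h * v := by
  classical
  -- Stage 1 : the largest index `d` where the sup of the coefficient norms is attained
  have hex : ∃ i₀, PowerSeries.coeff i₀ h ≠ 0 := by
    by_contra hno
    push_neg at hno
    exact hh (PowerSeries.ext fun i => by simp [hno i])
  obtain ⟨i₀, hi₀⟩ := hex
  have hi₀pos : 0 < ‖PowerSeries.coeff i₀ h‖ := norm_pos_iff.2 hi₀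
  obtain ⟨N₀, hN₀⟩ := res_def.1 hres _ hi₀pos
  have hi₀N : i₀ < N₀ := by
    by_contra hcon
    push_neg at hcon
    exact absurd (hN₀ i₀ hcon) (lt_irrefl _)
  have hnonempty : (Finset.range N₀).Nonempty := ⟨i₀, Finset.mem_range.2 hi₀N⟩
  set M := (Finset.range N₀).sup' hnonempty (fun i => ‖PowerSeries.coeff i h‖) with hM
  obtain ⟨dm, hdm_mem, hdm⟩ := Finset.exists_mem_eq_sup' hnonempty
    (fun i => ‖PowerSeries.coeff i h‖)
  set A := (Finset.range N₀).filter (fun i => ‖PowerSeries.coeff i h‖ = M) with hA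
  have hAne : A.Nonempty := ⟨dm, Finset.mem_filter.2 ⟨hdm_mem, hdm.symm⟩⟩
  set d := A.max' hAne with hd
  have hdA : d ∈ A := A.max'_mem hAne
  have hdM : ‖PowerSeries.coeff d h‖ = M := (Finset.mem_filter.1 hdA).2
  have hi₀M : ‖PowerSeries.coeff i₀ h‖ ≤ M :=
    Finset.le_sup' (fun i => ‖PowerSeries.coeff i h‖) (Finset.mem_range.2 hi₀N)
  have hMpos : 0 < M := lt_of_lt_of_le hi₀pos hi₀M
  have hle : ∀ i, ‖PowerSeries.coeff i h‖ ≤ M := by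
    intro i
    rcases lt_or_ge i N₀ with hi | hi
    · exact Finset.le_sup' (fun i => ‖PowerSeries.coeff i h‖) (Finset.mem_range.2 hi)
    · exact le_trans (hN₀ i hi).le hi₀M
  have hlt : ∀ i, d < i → ‖PowerSeries.coeff i h‖ < M := by
    intro i hi
    rcases lt_or_ge i N₀ with hiN | hiN
    · rcases lt_or_eq_of_le (hle i) with hlt' | heq'
      · exact hlt'
      · exfalso
        have : i ∈ A := Finset.mem_filter.2 ⟨Finset.mem_range.2 hiN, heq'⟩
        exact absurd (A.le_max' i this) (by omega)
    · exact lt_of_lt_of_le (hN₀ i hiN) hi₀M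
  -- Stage 2 : the dominant polynomial part `Ppoly` and the tail `g`
  set Ppoly := PowerSeries.trunc (d + 1) h with hPpoly
  set Pser := (Ppoly : PowerSeries Kd) with hPser
  have hPcoeff : ∀ i, Ppoly.coeff i = if i < d + 1 then PowerSeries.coeff i h else 0 :=
    fun i => PowerSeries.coeff_trunc i (d + 1) h
  have hPd : Ppoly.coeff d = PowerSeries.coeff d h := by
    rw [hPcoeff, if_pos (Nat.lt_succ_self d)]
  have hPd0 : Ppoly.coeff d ≠ 0 := by
    rw [hPd]
    intro hzero
    rw [hzero, norm_zero] at hdM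
    exact absurd hdM.symm hMpos.ne'
  have hPdnorm : ‖Ppoly.coeff d‖ = M := by rw [hPd, hdM]
  have hMne : M ≠ 0 := hMpos.ne'
  have hPdeg : Ppoly.degree ≤ (d : ℕ) := by
    have := PowerSeries.degree_trunc_lt h (d + 1)
    exact Polynomial.degree_le_iff_coeff_zero Ppoly d |>.2 fun m hm => by
      rw [hPcoeff]
      have : ¬ m < d + 1 := by
        have hdm' : d < m := by exact_mod_cast hm
        omega
      rw [if_neg this]
  have hPc : ∀ i, ‖Ppoly.coeff i‖ ≤ ‖Ppoly.coeff d‖ := by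
    intro i
    rw [hPdnorm, hPcoeff]
    split
    · exact hle i
    · rw [norm_zero]; exact hMpos.le
  set g := h - Pser with hg
  have hgcoeff : ∀ i, PowerSeries.coeff i g = if i ≤ d then 0 else PowerSeries.coeff i h := by
    intro i
    rw [hg, map_sub, hPser, Polynomial.coeff_coe, hPcoeff]
    rcases le_or_gt i d with hi | hi
    · rw [if_pos (by omega : i < d + 1), if_pos hi, sub_self]
    · rw [if_neg (by omega : ¬ i < d + 1), if_neg (by omega : ¬ i ≤ d), sub_zero]
  have hgres : IsRestricted Kd g := res_sub hres (res_poly _)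
  -- Stage 3 : a bound `γ < M` for the tail
  obtain ⟨N₁, hN₁⟩ := res_def.1 hres (M / 2) (half_pos hMpos)
  set γ : ℝ := max (M / 2)
    (((Finset.Ioc d N₁).sup fun i => ‖PowerSeries.coeff i h‖₊ : NNReal) : ℝ) with hγ
  have hγ0 : 0 < γ := lt_max_of_lt_left (half_pos hMpos)
  have hγM : γ < M := by
    refine max_lt (by linarith) ?_
    have hsup : (Finset.Ioc d N₁).sup (fun i => ‖PowerSeries.coeff i h‖₊)
        < ‖PowerSeries.coeff d h‖₊ := by
      refine Finset.sup_lt_iff ?_ |>.2 ?_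
      · have hd0 : PowerSeries.coeff d h ≠ 0 := by
          intro hzero
          rw [hzero, norm_zero] at hdM
          exact absurd hdM.symm hMpos.ne'
        rw [bot_eq_zero]
        exact nnnorm_pos.2 hd0
      · intro i hi
        have := hlt i (Finset.mem_Ioc.1 hi).1
        rw [← hdM] at this
        rw [← coe_nnnorm, ← coe_nnnorm] at this
        exact_mod_cast this
    calc (((Finset.Ioc d N₁).sup fun i => ‖PowerSeries.coeff i h‖₊ : NNReal) : ℝ)
        < (‖PowerSeries.coeff d h‖₊ : NNReal) := by exact_mod_cast hsup
      _ = M := by rw [coe_nnnorm, hdM]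
  have hγg : ∀ i, ‖PowerSeries.coeff i g‖ ≤ γ := by
    intro i
    rw [hgcoeff]
    split
    · rw [norm_zero]; exact hγ0.le
    · rename_i hid
      push_neg at hid
      rcases le_or_gt i N₁ with hiN | hiN
      · refine le_max_of_le_right ?_
        have : ‖PowerSeries.coeff i h‖₊ ≤
            (Finset.Ioc d N₁).sup fun j => ‖PowerSeries.coeff j h‖₊ :=
          Finset.le_sup (f := fun j => ‖PowerSeries.coeff j h‖₊)
            (Finset.mem_Ioc.2 ⟨hid, hiN⟩)
        rw [← coe_nnnorm]
        exact_mod_cast this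
      · exact le_max_of_le_left (hN₁ i hiN.le).le
  -- Stage 4/5 : polynomial division of the `X^j` by `Ppoly`
  have hdiv := poly_div Ppoly d hPd0 hPdeg hPc
  have hXdeg : ∀ j : ℕ, ((Polynomial.X : Polynomial Kd) ^ j).degree < ((j + 1 : ℕ) : WithBot ℕ) := by
    intro j
    rw [Polynomial.degree_X_pow]
    exact_mod_cast Nat.lt_succ_self j
  have hXb : ∀ (j i : ℕ), ‖((Polynomial.X : Polynomial Kd) ^ j).coeff i‖ ≤ 1 := by
    intro j i
    rw [Polynomial.coeff_X_pow]
    split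
    · rw [norm_one]
    · rw [norm_zero]; exact zero_le_one
  choose qp rp hqr hrdeg hqb hrb hqsupp using fun j =>
    hdiv (j + 1) (Polynomial.X ^ j) (hXdeg j) 1 zero_le_one (hXb j)
  have hqb' : ∀ j i, ‖(qp j).coeff i‖ ≤ 1 / M := by
    intro j i
    have := hqb j i
    rwa [hPdnorm] at this
  have hrb' : ∀ j i, ‖(rp j).coeff i‖ ≤ 1 := hrb
  have hqsupp' : ∀ j i, j < i + d → (qp j).coeff i = 0 := by
    intro j i hj
    refine hqsupp j i ?_
    rw [Polynomial.degree_X_pow]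
    exact_mod_cast hj
  have h1M : (0:ℝ) ≤ 1 / M := by positivity
  -- the identity `f = QQ qp f * Pser + QQ rp f` for restricted `f`
  have hGr_sum : ∀ (f : PowerSeries Kd), IsRestricted Kd f → ∀ a,
      Summable fun j => PowerSeries.coeff a (GQ rp f j) :=
    fun f hf a => GQ_summable hrb' hf a
  have hGq_sum : ∀ (f : PowerSeries Kd), IsRestricted Kd f → ∀ a,
      Summable fun j => PowerSeries.coeff a (GQ qp f j) :=
    fun f hf a => GQ_summable hqb' hf a
  have hkey : ∀ f, IsRestricted Kd f → f = QQ qp f * Pser + QQ rp f := by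
    intro f hf
    apply PowerSeries.ext
    intro mm
    rw [map_add]
    have h1 := coeff_tsum_mul (GQ qp f) Pser (hGq_sum f hf) mm
    have h2 : PowerSeries.coeff mm (QQ rp f) = ∑' j, PowerSeries.coeff mm (GQ rp f j) := by
      rw [QQ, PowerSeries.coeff_mk]
    rw [show QQ qp f = (PowerSeries.mk fun a =>
        ∑' j, PowerSeries.coeff a (GQ qp f j)) from rfl, h1.2, h2,
      ← Summable.tsum_add h1.1 (hGr_sum f hf mm)]
    have hterm : ∀ j, PowerSeries.coeff mm (GQ qp f j * Pser)
        + PowerSeries.coeff mm (GQ rp f j)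
        = PowerSeries.coeff j f * ((Polynomial.X ^ j : Polynomial Kd).coeff mm) := by
      intro j
      have e1 : GQ qp f j * Pser
          = (PowerSeries.coeff j f) • ((qp j * Ppoly : Polynomial Kd) : PowerSeries Kd) := by
        rw [GQ, hPser, Polynomial.coe_mul, smul_mul_assoc]
      rw [e1, map_smul, smul_eq_mul, Polynomial.coeff_coe, coeff_GQ, ← mul_add,
        ← Polynomial.coeff_add, ← hqr j]
    rw [tsum_congr hterm, tsum_eq_single mm (fun j hj => by
      rw [Polynomial.coeff_X_pow, if_neg (Ne.symm hj), mul_zero])]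
    rw [Polynomial.coeff_X_pow, if_pos rfl, mul_one]
  -- Stage 7 : the iteration
  set F := Fiter qp g d with hF
  set ρ := γ / M with hρ
  have hρ0 : 0 ≤ ρ := div_nonneg hγ0.le hMpos.le
  have hρ1 : ρ < 1 := (div_lt_one hMpos).2 hγM
  have hFsucc : ∀ k, F (k + 1) = -(QQ qp (F k) * g) := fun k => rfl
  have hFprop : ∀ k, IsRestricted Kd (F k) ∧
      ∀ mm, ‖PowerSeries.coeff mm (F k)‖ ≤ ρ ^ k := by
    intro k
    induction k with
    | zero =>
      constructor
      · refine res_of_ev (d + 1) fun m hm => ?_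
        show PowerSeries.coeff m (PowerSeries.X ^ d) = 0
        rw [PowerSeries.coeff_X_pow, if_neg (by omega)]
      · intro mm
        show ‖PowerSeries.coeff mm (PowerSeries.X ^ d)‖ ≤ ρ ^ 0
        rw [PowerSeries.coeff_X_pow, pow_zero]
        split
        · rw [norm_one]
        · rw [norm_zero]; exact zero_le_one
    | succ k ihk =>
      have hQQr : IsRestricted Kd (QQ qp (F k)) := QQ_res hqb' h1M hqsupp' ihk.1
      have hQQb' : ∀ mm, ‖PowerSeries.coeff mm (QQ qp (F k))‖ ≤ ρ ^ k * (1 / M) :=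
        QQ_bnd hqb' h1M (pow_nonneg hρ0 k) ihk.2
      constructor
      · rw [hFsucc]
        exact res_neg (res_mul hQQr hgres)
      · intro mm
        rw [hFsucc, map_neg, norm_neg]
        have := mul_bnd (mul_nonneg (pow_nonneg hρ0 k) h1M) hγ0.le hQQb' hγg mm
        calc ‖PowerSeries.coeff mm (QQ qp (F k) * g)‖ ≤ ρ ^ k * (1 / M) * γ := this
          _ = ρ ^ (k + 1) := by rw [pow_succ, hρ]; field_simp
  -- Stage 8 : summing up
  have hQQFb : ∀ k mm, ‖PowerSeries.coeff mm (QQ qp (F k))‖ ≤ ρ ^ k * (1 / M) :=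
    fun k => QQ_bnd hqb' h1M (pow_nonneg hρ0 k) (hFprop k).2
  have hRRFb : ∀ k mm, ‖PowerSeries.coeff mm (QQ rp (F k))‖ ≤ ρ ^ k * 1 :=
    fun k => QQ_bnd hrb' zero_le_one (pow_nonneg hρ0 k) (hFprop k).2
  have hgeom : Tendsto (fun k => ρ ^ k) atTop (nhds 0) :=
    tendsto_pow_atTop_nhds_zero_of_lt_one hρ0 hρ1
  have SQ : ∀ a, Summable fun k => PowerSeries.coeff a (QQ qp (F k)) := by
    intro a
    refine summable_of_norm_bnd (b := fun k => ρ ^ k * (1 / M)) (fun k => hQQFb k a) ?_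
    simpa using hgeom.mul_const (1 / M)
  have SR : ∀ a, Summable fun k => PowerSeries.coeff a (QQ rp (F k)) := by
    intro a
    refine summable_of_norm_bnd (b := fun k => ρ ^ k * 1) (fun k => hRRFb k a) ?_
    simpa using hgeom.mul_const 1
  set q := PowerSeries.mk fun a => ∑' k, PowerSeries.coeff a (QQ qp (F k)) with hq
  set rr := PowerSeries.mk fun a => ∑' k, PowerSeries.coeff a (QQ rp (F k)) with hrrdef
  have hstep : ∀ k, QQ qp (F k) * h + QQ rp (F k) = F k - F (k + 1) := by
    intro k
    have h1 := hkey (F k) (hFprop k).1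
    rw [hFsucc, sub_neg_eq_add]
    calc QQ qp (F k) * h + QQ rp (F k)
        = (QQ qp (F k) * Pser + QQ rp (F k)) + QQ qp (F k) * g := by rw [hg]; ring
      _ = F k + QQ qp (F k) * g := by rw [← h1]
  have hmain : (PowerSeries.X : PowerSeries Kd) ^ d = q * h + rr := by
    apply PowerSeries.ext
    intro mm
    have hqh := coeff_tsum_mul (fun k => QQ qp (F k)) h SQ mm
    rw [map_add, hq, hqh.2, hrrdef, PowerSeries.coeff_mk, ← Summable.tsum_add hqh.1 (SR mm)]
    have hsummand : ∀ k, PowerSeries.coeff mm (QQ qp (F k) * h)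
        + PowerSeries.coeff mm (QQ rp (F k))
        = PowerSeries.coeff mm (F k) - PowerSeries.coeff mm (F (k + 1)) := by
      intro k
      rw [← map_add, hstep k, map_sub]
    rw [tsum_congr hsummand]
    have hsumm : Summable fun k => PowerSeries.coeff mm (F k)
        - PowerSeries.coeff mm (F (k + 1)) :=
      (hqh.1.add (SR mm)).congr hsummand
    have htend : Tendsto (fun k => PowerSeries.coeff mm (F k)) atTop (nhds 0) := by
      refine tendsto_zero_iff_norm_tendsto_zero.2 ?_
      exact squeeze_zero (fun k => norm_nonneg _) (fun k => (hFprop k).2 mm) hgeom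
    rw [tsum_telescope hsumm htend]
    rfl
  -- conclusion
  have hrpz : ∀ j mm, d ≤ mm → (rp j).coeff mm = 0 := by
    intro j mm hmm
    refine Polynomial.coeff_eq_zero_of_degree_lt (lt_of_lt_of_le (hrdeg j) ?_)
    exact_mod_cast hmm
  have hrrv : ∀ mm, d ≤ mm → PowerSeries.coeff mm rr = 0 := by
    intro mm hmm
    rw [hrrdef, PowerSeries.coeff_mk]
    have hz : ∀ k, PowerSeries.coeff mm (QQ rp (F k)) = 0 := by
      intro k
      rw [coeff_QQ]
      have hzz : ∀ j, PowerSeries.coeff j (F k) * (rp j).coeff mm = 0 :=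
        fun j => by rw [hrpz j mm hmm, mul_zero]
      rw [tsum_congr hzz, tsum_zero]
    rw [tsum_congr hz, tsum_zero]
  have hqres : IsRestricted Kd q := by
    rw [hq]
    refine res_tsum (fun k => QQ qp (F k)) (fun k => ρ ^ k * (1 / M)) ?_ ?_ ?_
    · intro k; exact QQ_res hqb' h1M hqsupp' (hFprop k).1
    · intro k mm; exact hQQFb k mm
    · simpa using hgeom.mul_const (1 / M)
  set Pfin : Polynomial Kd := Polynomial.X ^ d - PowerSeries.trunc d rr with hPfin
  have hPfin_coe : (Pfin : PowerSeries Kd) = (PowerSeries.X : PowerSeries Kd) ^ d - rr := by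
    apply PowerSeries.ext
    intro mm
    rw [Polynomial.coeff_coe, map_sub, hPfin, Polynomial.coeff_sub, Polynomial.coeff_X_pow,
      PowerSeries.coeff_X_pow, PowerSeries.coeff_trunc]
    rcases lt_or_ge mm d with hmd | hmd
    · rw [if_neg (by omega : ¬ mm = d), if_pos hmd]
    · rw [if_neg (by omega : ¬ mm < d), hrrv mm hmd]
  have hPfin0 : Pfin ≠ 0 := by
    intro hzero
    have hcd : Pfin.coeff d = 0 := by rw [hzero, Polynomial.coeff_zero]
    rw [hPfin, Polynomial.coeff_sub, Polynomial.coeff_X_pow, if_pos rfl,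
      PowerSeries.coeff_trunc, if_neg (lt_irrefl d)] at hcd
    simp at hcd
  refine ⟨Pfin, q, hPfin0, hqres, ?_⟩
  rw [hPfin_coe, hmain]
  ring

end Stmt6

lemma pow_pow_fix {R : Type} [Monoid R] (x : R) (p : ℕ) (hx : x ^ p = x) :
    ∀ nn : ℕ, x ^ p ^ nn = x := by
  intro nn
  induction nn with
  | zero => rw [pow_zero, pow_one]
  | succ k ih => rw [pow_succ, pow_mul, ih, hx]

lemma fixed_of_pow_p {F : Type} [Field F] (p : ℕ) [Fact p.Prime] [CharP F p]
    (c : F) (hc : c ^ p = c) : ∃ jn : ℕ, c = (jn : F) := by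
  classical
  by_contra hno
  push_neg at hno
  have hp2 : 2 ≤ p := (Fact.out : p.Prime).two_le
  set Xp : Polynomial F := Polynomial.X ^ p - Polynomial.X with hXp
  have hXpd : Xp.natDegree ≤ p := by
    refine le_trans (Polynomial.natDegree_sub_le _ _) ?_
    rw [Polynomial.natDegree_X_pow, Polynomial.natDegree_X]
    omega
  have hXp0 : Xp ≠ 0 := by
    intro h0
    have h1 : Xp.coeff 1 = 0 := by rw [h0, Polynomial.coeff_zero]
    rw [hXp, Polynomial.coeff_sub, Polynomial.coeff_X_pow,
      if_neg (by omega : ¬ (1 : ℕ) = p), Polynomial.coeff_X_one] at h1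
    norm_num at h1
  have hroot : ∀ x : F, x ^ p = x → x ∈ Xp.roots := by
    intro x hx
    refine Polynomial.mem_roots'.2 ⟨hXp0, ?_⟩
    show Polynomial.eval x Xp = 0
    rw [hXp, Polynomial.eval_sub, Polynomial.eval_pow, Polynomial.eval_X, hx, sub_self]
  have hcast : ∀ jn : ℕ, ((jn : F)) ^ p = (jn : F) := by
    intro jn
    have hfr := map_natCast (frobenius F p) jn
    rwa [frobenius_def] at hfr
  have hinj : Set.InjOn (fun jn : ℕ => (jn : F)) (Finset.range p) := by
    intro a ha b hb hab
    have h1 : a ≡ b [MOD p] := (CharP.natCast_eq_natCast F p).1 hab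
    have h2 : a % p = b % p := h1
    rwa [Nat.mod_eq_of_lt (Finset.mem_range.1 ha), Nat.mod_eq_of_lt (Finset.mem_range.1 hb)] at h2
  have hnotmem : c ∉ (Finset.range p).image fun jn : ℕ => (jn : F) := by
    intro hc'
    obtain ⟨jn, _, hjn⟩ := Finset.mem_image.1 hc'
    exact hno jn hjn.symm
  have hcard : (insert c ((Finset.range p).image fun jn : ℕ => (jn : F))).card = p + 1 := by
    rw [Finset.card_insert_of_notMem hnotmem, Finset.card_image_of_injOn hinj,
      Finset.card_range]
  have hsub : insert c ((Finset.range p).image fun jn : ℕ => (jn : F)) ⊆ Xp.roots.toFinset := by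
    intro x hx
    rw [Multiset.mem_toFinset]
    rcases Finset.mem_insert.1 hx with rfl | hx'
    · exact hroot x hc
    · obtain ⟨jn, _, rfl⟩ := Finset.mem_image.1 hx'
      exact hroot _ (hcast jn)
  have hcontr : p + 1 ≤ p := by
    calc p + 1 = (insert c ((Finset.range p).image fun jn : ℕ => (jn : F))).card := hcard.symm
      _ ≤ Xp.roots.toFinset.card := Finset.card_le_card hsub
      _ ≤ Multiset.card Xp.roots := Multiset.toFinset_card_le _
      _ ≤ Xp.natDegree := Polynomial.card_roots' Xp
      _ ≤ p := hXpd
  omega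


theorem stmt_6
    (p n : ℕ) [Fact p.Prime] (hn : 0 < n)
    (K : Type) [Field K] [CharP K p] (θ : K)
    (Kd : Type) [NontriviallyNormedField Kd] [CompleteSpace Kd] [IsAlgClosed Kd]
    [CharP Kd p] [Algebra K Kd]
    (hna : IsNonarchimedean (fun x : Kd => ‖x‖))
    (r : ℕ) (S : Matrix (Fin r) (Fin r) (Polynomial K))
    (u : Kˣ) (d : ℕ)
    (hdet : S.det = C (u : K) * (X - C θ) ^ d)
    -- the matrix of `σ` on `M ⊗ K†{t}`:
    (S' : Matrix (Fin r) (Fin r) (PowerSeries Kd))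
    (hS' : S' = S.map (Polynomial.coeToPowerSeries.ringHom.comp
        (Polynomial.mapRingHom (algebraMap K Kd))))
    (m : Fin r → PowerSeries Kd) (hm : ∀ i, IsRestricted Kd (m i))
    (h : PowerSeries Kd) (hh : h ≠ 0) (hhres : IsRestricted Kd h)
    (heq : ∀ i, PowerSeries.map (iterateFrobenius Kd p n) h * m i =
        h * S'.mulVec (fun j => PowerSeries.map (iterateFrobenius Kd p n) (m j)) i) :
    ∃ (h' : Polynomial K) (m' : Fin r → PowerSeries Kd),
      h' ≠ 0 ∧ (∀ i, (h'.coeff i) ^ p ^ n = h'.coeff i) ∧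
      (∀ i, IsRestricted Kd (m' i)) ∧
      (S'.mulVec (fun j => PowerSeries.map (iterateFrobenius Kd p n) (m' j)) = m') ∧
      ∀ i, (Polynomial.coeToPowerSeries.ringHom.comp
          (Polynomial.mapRingHom (algebraMap K Kd)) h') * m i = h * m' i := by
  classical
  haveI : IsUltrametricDist Kd :=
    IsUltrametricDist.isUltrametricDist_of_isNonarchimedean_norm hna
  have hp0 : (p : ℕ) ≠ 0 := (Fact.out : p.Prime).ne_zero
  have hpn0 : p ^ n ≠ 0 := pow_ne_zero n hp0
  have hτh0 : PowerSeries.map (iterateFrobenius Kd p n) h ≠ 0 := by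
    intro h0
    refine hh (PowerSeries.ext fun i => ?_)
    have hci := congrArg (PowerSeries.coeff i) h0
    rw [PowerSeries.coeff_map, map_zero, iterateFrobenius_def] at hci
    rw [map_zero]
    exact (pow_eq_zero_iff hpn0).1 hci
  have hcoe_map : ∀ P : Polynomial Kd,
      ((P.map (iterateFrobenius Kd p n) : Polynomial Kd) : PowerSeries Kd)
        = PowerSeries.map (iterateFrobenius Kd p n) (P : PowerSeries Kd) := by
    intro P
    apply PowerSeries.ext
    intro i
    rw [Polynomial.coeff_coe, PowerSeries.coeff_map, Polynomial.coeff_map,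
      Polynomial.coeff_coe]
  have hmv : ∀ (x : Fin r → PowerSeries Kd) (i : Fin r),
      S'.mulVec x i = ∑ j, S' i j * x j := by
    intro x i
    simp [Matrix.mulVec, dotProduct]
  have hS'res : ∀ i j, IsRestricted Kd (S' i j) := by
    intro i j
    rw [hS', Matrix.map_apply]
    exact Stmt6.res_poly _
  have hmulVecres : ∀ (x : Fin r → PowerSeries Kd), (∀ j, IsRestricted Kd (x j)) →
      ∀ i, IsRestricted Kd (S'.mulVec x i) := by
    intro x hx i
    rw [hmv]
    refine Finset.sum_induction _ _ (fun a b ha hb => Stmt6.res_add ha hb) Stmt6.res_zero ?_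
    intro j _
    exact Stmt6.res_mul (hS'res i j) (hx j)
  set DP : Polynomial Kd → Prop := fun P => ∃ v : Fin r → PowerSeries Kd,
      (∀ i, IsRestricted Kd (v i)) ∧ ∀ i, (P : PowerSeries Kd) * m i = h * v i with hDP
  set D : Ideal (Polynomial Kd) :=
    { carrier := {P | DP P}
      add_mem' := by
        rintro a b ⟨va, hva, ha⟩ ⟨vb, hvb, hb⟩
        exact ⟨fun i => va i + vb i, fun i => Stmt6.res_add (hva i) (hvb i), fun i => by
          rw [Polynomial.coe_add, add_mul, ha i, hb i, mul_add]⟩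
      zero_mem' := ⟨fun _ => 0, fun i => Stmt6.res_zero, fun i => by
        rw [Polynomial.coe_zero, zero_mul, mul_zero]⟩
      smul_mem' := by
        rintro a P ⟨v, hv, hP⟩
        refine ⟨fun i => (a : PowerSeries Kd) * v i,
          fun i => Stmt6.res_mul (Stmt6.res_poly a) (hv i), fun i => ?_⟩
        rw [smul_eq_mul, Polynomial.coe_mul, mul_assoc, hP i]
        ring } with hDdef
  have hmemD : ∀ P : Polynomial Kd, P ∈ D ↔ DP P := fun P => Iff.rfl
  have hstab : ∀ P : Polynomial Kd, P ∈ D → P.map (iterateFrobenius Kd p n) ∈ D := by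
    intro P hP
    obtain ⟨v, hvres, hveq⟩ := (hmemD P).1 hP
    refine (hmemD _).2
      ⟨fun i => S'.mulVec (fun j => PowerSeries.map (iterateFrobenius Kd p n) (v j)) i,
      fun i => hmulVecres _ (fun j => Stmt6.res_tau p n (hvres j)) i, fun i => ?_⟩
    refine mul_left_cancel₀ hτh0 ?_
    calc PowerSeries.map (iterateFrobenius Kd p n) h *
          ((P.map (iterateFrobenius Kd p n) : PowerSeries Kd) * m i)
        = PowerSeries.map (iterateFrobenius Kd p n) (P : PowerSeries Kd) *
            (PowerSeries.map (iterateFrobenius Kd p n) h * m i) := by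
          rw [hcoe_map]; ring
      _ = PowerSeries.map (iterateFrobenius Kd p n) (P : PowerSeries Kd) *
            (h * S'.mulVec (fun j => PowerSeries.map (iterateFrobenius Kd p n) (m j)) i) := by
          rw [heq i]
      _ = ∑ j, h * (S' i j * (PowerSeries.map (iterateFrobenius Kd p n) (P : PowerSeries Kd) *
            PowerSeries.map (iterateFrobenius Kd p n) (m j))) := by
          rw [hmv, Finset.mul_sum, Finset.mul_sum]
          exact Finset.sum_congr rfl fun j _ => by ring
      _ = ∑ j, h * (S' i j * (PowerSeries.map (iterateFrobenius Kd p n) h *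
            PowerSeries.map (iterateFrobenius Kd p n) (v j))) := by
          refine Finset.sum_congr rfl fun j _ => ?_
          rw [← map_mul, hveq j, map_mul]
      _ = PowerSeries.map (iterateFrobenius Kd p n) h *
            (h * S'.mulVec (fun j => PowerSeries.map (iterateFrobenius Kd p n) (v j)) i) := by
          rw [hmv, Finset.mul_sum, Finset.mul_sum]
          exact Finset.sum_congr rfl fun j _ => by ring
  obtain ⟨Pa, va, hPa0, hvares, hPaeq⟩ := Stmt6.exists_poly_multiple hh hhres
  have hPaD : Pa ∈ D := (hmemD _).2 ⟨fun i => va * m i,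
    fun i => Stmt6.res_mul hvares (hm i), fun i => by rw [hPaeq]; ring⟩
  haveI hDprin : Submodule.IsPrincipal D := IsPrincipalIdealRing.principal D
  set G₀ := Submodule.IsPrincipal.generator D with hG₀def
  have hG₀mem : G₀ ∈ D := Submodule.IsPrincipal.generator_mem D
  have hspan : Ideal.span {G₀} = D := Ideal.span_singleton_generator D
  have hG₀0 : G₀ ≠ 0 := by
    intro h0
    rw [h0] at hspan
    rw [← hspan, Ideal.span_singleton_eq_bot.2 rfl] at hPaD
    exact hPa0 ((Submodule.mem_bot _).1 hPaD)
  have hlc0 : G₀.leadingCoeff ≠ 0 := Polynomial.leadingCoeff_ne_zero.2 hG₀0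
  set G := G₀ * Polynomial.C G₀.leadingCoeff⁻¹ with hGdef
  have hGmonic : G.Monic := Polynomial.monic_mul_leadingCoeff_inv hG₀0
  have hGne : G ≠ 0 := hGmonic.ne_zero
  have hGD : G ∈ D := D.mul_mem_right _ hG₀mem
  have hGdvd : ∀ P ∈ D, G ∣ P := by
    intro P hP
    rw [← hspan] at hP
    obtain ⟨t, rfl⟩ := Ideal.mem_span_singleton.1 hP
    refine ⟨Polynomial.C G₀.leadingCoeff * t, ?_⟩
    rw [hGdef]
    have hCinv : Polynomial.C G₀.leadingCoeff⁻¹ * Polynomial.C G₀.leadingCoeff = 1 := by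
      rw [← Polynomial.C_mul, inv_mul_cancel₀ hlc0, Polynomial.C_1]
    calc G₀ * t = G₀ * (Polynomial.C G₀.leadingCoeff⁻¹ * Polynomial.C G₀.leadingCoeff) * t := by
          rw [hCinv, mul_one]
      _ = G₀ * Polynomial.C G₀.leadingCoeff⁻¹ * (Polynomial.C G₀.leadingCoeff * t) := by ring
  have hGφD := hstab G hGD
  obtain ⟨t, ht⟩ := hGdvd _ hGφD
  have hGφmonic : (G.map (iterateFrobenius Kd p n)).Monic := hGmonic.map _
  have htne : t ≠ 0 := by
    intro h0
    rw [h0, mul_zero] at ht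
    exact hGφmonic.ne_zero ht
  have hdegeq : (G.map (iterateFrobenius Kd p n)).natDegree = G.natDegree :=
    hGmonic.natDegree_map _
  have htdeg : t.natDegree = 0 := by
    have hnd := Polynomial.natDegree_mul hGne htne
    rw [← ht, hdegeq] at hnd
    omega
  have htmonic : t.Monic := by
    have hl := Polynomial.leadingCoeff_mul G t
    rw [← ht, hGφmonic.leadingCoeff, hGmonic.leadingCoeff, one_mul] at hl
    exact hl.symm
  have hGfix : G.map (iterateFrobenius Kd p n) = G := by
    rw [ht, Polynomial.eq_one_of_monic_natDegree_zero htmonic htdeg, mul_one]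
  set Hp : Polynomial Kd := ∏ i ∈ Finset.range n, G.map (iterateFrobenius Kd p i) with hHpdef
  have hHmonic : Hp.Monic := Polynomial.monic_prod_of_monic _ _ fun i _ => hGmonic.map _
  have hGdvdH : G ∣ Hp := by
    have h0 : G.map (iterateFrobenius Kd p 0) = G := by
      rw [iterateFrobenius_zero, Polynomial.map_id]
    have hd : G.map (iterateFrobenius Kd p 0) ∣ Hp :=
      Finset.dvd_prod_of_mem _ (Finset.mem_range.2 hn)
    rwa [h0] at hd
  have hHD : Hp ∈ D := by
    obtain ⟨t', ht'⟩ := hGdvdH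
    rw [ht']
    exact D.mul_mem_right _ hGD
  have hHfrob : Hp.map (frobenius Kd p) = Hp := by
    have e0 : Hp.map (frobenius Kd p)
        = ∏ i ∈ Finset.range n, G.map (iterateFrobenius Kd p (i + 1)) := by
      rw [hHpdef, Polynomial.map_prod]
      refine Finset.prod_congr rfl fun i _ => ?_
      rw [Polynomial.map_map]
      congr 1
      rw [show i + 1 = 1 + i from by omega, iterateFrobenius_add, iterateFrobenius_one]
    have e1 : (∏ i ∈ Finset.range n, G.map (iterateFrobenius Kd p (i + 1))) *
          G.map (iterateFrobenius Kd p 0)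
        = (∏ i ∈ Finset.range n, G.map (iterateFrobenius Kd p i)) *
          G.map (iterateFrobenius Kd p n) :=
      (Finset.prod_range_succ' (fun k => G.map (iterateFrobenius Kd p k)) n).symm.trans
        (Finset.prod_range_succ (fun k => G.map (iterateFrobenius Kd p k)) n)
    rw [iterateFrobenius_zero, Polynomial.map_id, hGfix] at e1
    rw [e0, hHpdef]
    exact mul_right_cancel₀ hGne e1
  have hHfixp : ∀ i, (Hp.coeff i) ^ p = Hp.coeff i := by
    intro i
    have hci := congrArg (fun P : Polynomial Kd => P.coeff i) hHfrob
    simpa [Polynomial.coeff_map, frobenius_def] using hci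
  choose jfun hjfun using fun i => fixed_of_pow_p p (Hp.coeff i) (hHfixp i)
  set h' : Polynomial K := ∑ i ∈ Finset.range (Hp.natDegree + 1),
      Polynomial.C ((jfun i : K)) * Polynomial.X ^ i with hh'def
  have hh'coeff : ∀ i, h'.coeff i =
      if i < Hp.natDegree + 1 then ((jfun i : K)) else 0 := by
    intro i
    rw [hh'def, Polynomial.finset_sum_coeff]
    have hterm : ∀ b ∈ Finset.range (Hp.natDegree + 1),
        (Polynomial.C ((jfun b : K)) * Polynomial.X ^ b).coeff i
          = if i = b then ((jfun b : K)) else 0 := by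
      intro b _
      rw [Polynomial.coeff_C_mul, Polynomial.coeff_X_pow]
      split <;> simp
    rw [Finset.sum_congr rfl hterm, Finset.sum_ite_eq]
    simp [Finset.mem_range]
  have hcoeffKd : ∀ i, algebraMap K Kd (h'.coeff i) = Hp.coeff i := by
    intro i
    rw [hh'coeff i]
    split
    · rw [map_natCast]
      exact (hjfun i).symm
    · rename_i hi
      push_neg at hi
      rw [map_zero]
      exact (Polynomial.coeff_eq_zero_of_natDegree_lt (by omega)).symm
  have hh'ser : (Polynomial.coeToPowerSeries.ringHom.comp
      (Polynomial.mapRingHom (algebraMap K Kd))) h' = (Hp : PowerSeries Kd) := by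
    rw [RingHom.comp_apply, Polynomial.coeToPowerSeries.ringHom_apply]
    apply PowerSeries.ext
    intro i
    rw [Polynomial.coeff_coe, Polynomial.coeff_coe]
    show (Polynomial.map (algebraMap K Kd) h').coeff i = Hp.coeff i
    rw [Polynomial.coeff_map]
    exact hcoeffKd i
  have hh'0 : h' ≠ 0 := by
    intro h0
    have h1 := hcoeffKd Hp.natDegree
    rw [h0, Polynomial.coeff_zero, map_zero, hHmonic.coeff_natDegree] at h1
    exact zero_ne_one h1
  have hKfrob : ∀ jn : ℕ, ((jn : K)) ^ p = (jn : K) := by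
    intro jn
    have hfr := map_natCast (frobenius K p) jn
    rwa [frobenius_def] at hfr
  have hh'fix : ∀ i, (h'.coeff i) ^ p ^ n = h'.coeff i := by
    intro i
    rw [hh'coeff i]
    split
    · exact pow_pow_fix _ p (hKfrob _) n
    · rw [zero_pow hpn0]
  obtain ⟨v, hvres, hveq⟩ := (hmemD _).1 hHD
  have hHser_fix : PowerSeries.map (iterateFrobenius Kd p n) (Hp : PowerSeries Kd)
      = (Hp : PowerSeries Kd) := by
    apply PowerSeries.ext
    intro i
    rw [PowerSeries.coeff_map, Polynomial.coeff_coe, iterateFrobenius_def]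
    exact pow_pow_fix _ p (hHfixp i) n
  have hinv : S'.mulVec (fun j => PowerSeries.map (iterateFrobenius Kd p n) (v j)) = v := by
    funext i
    refine mul_left_cancel₀ (mul_ne_zero hh hτh0) ?_
    calc h * PowerSeries.map (iterateFrobenius Kd p n) h *
          S'.mulVec (fun j => PowerSeries.map (iterateFrobenius Kd p n) (v j)) i
        = ∑ j, h * (S' i j * (PowerSeries.map (iterateFrobenius Kd p n) h *
            PowerSeries.map (iterateFrobenius Kd p n) (v j))) := by
          rw [hmv, Finset.mul_sum]
          exact Finset.sum_congr rfl fun j _ => by ring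
      _ = ∑ j, h * (S' i j *
            PowerSeries.map (iterateFrobenius Kd p n) ((Hp : PowerSeries Kd) * m j)) := by
          refine Finset.sum_congr rfl fun j _ => ?_
          rw [← map_mul, ← hveq j]
      _ = (Hp : PowerSeries Kd) *
            (h * S'.mulVec (fun j => PowerSeries.map (iterateFrobenius Kd p n) (m j)) i) := by
          rw [hmv, Finset.mul_sum, Finset.mul_sum]
          refine Finset.sum_congr rfl fun j _ => ?_
          rw [map_mul, hHser_fix]
          ring
      _ = (Hp : PowerSeries Kd) * (PowerSeries.map (iterateFrobenius Kd p n) h * m i) := by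
          rw [heq i]
      _ = PowerSeries.map (iterateFrobenius Kd p n) h * ((Hp : PowerSeries Kd) * m i) := by
          ring
      _ = PowerSeries.map (iterateFrobenius Kd p n) h * (h * v i) := by rw [hveq i]
      _ = h * PowerSeries.map (iterateFrobenius Kd p n) h * v i := by ring
  refine ⟨h', v, hh'0, hh'fix, hvres, hinv, fun i => ?_⟩
  rw [hh'ser]
  exact hveq i
end

section
/- Assume ‖θ‖ > 1. Then there exists a nonzero restricted power series Ω ∈ K†{t} satisfying Ω = (t−θ)·τ(Ω); moreover, every g ∈ K†{t} satisfying g = (t−θ)·τ(g) is of the form g = p·Ω for a unique polynomial p ∈ K†[t] all of whose coefficients c satisfy c^q = c (i.e. p has coefficients in k). In other words, the k[t]-module of solutions of g = (t−θ)τ(g) in K†{t} is free of rank one, generated by Ω. -/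
open PowerSeries Filter in
lemma na_sum_le {Kd : Type} [NontriviallyNormedField Kd]
    (hna : IsNonarchimedean (fun x : Kd => ‖x‖)) {ι : Type*} (s : Finset ι) (f : ι → Kd)
    {B : ℝ} (hB : 0 ≤ B) (h : ∀ i ∈ s, ‖f i‖ ≤ B) : ‖∑ i ∈ s, f i‖ ≤ B := by
  classical
  induction s using Finset.cons_induction with
  | empty => simpa using hB
  | cons a s ha ih =>
    rw [Finset.sum_cons]
    exact le_trans (hna _ _) (max_le (h a (Finset.mem_cons_self a s))
      (ih fun i hi => h i (Finset.mem_cons_of_mem hi)))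

open PowerSeries Filter in
lemma isRestricted_mul {Kd : Type} [NontriviallyNormedField Kd]
    (hna : IsNonarchimedean (fun x : Kd => ‖x‖)) {f g : PowerSeries Kd}
    (hf : IsRestricted Kd f) (hg : IsRestricted Kd g) : IsRestricted Kd (f * g) := by
  obtain ⟨Cf, hCf⟩ := hf.bddAbove_range
  obtain ⟨Cg, hCg⟩ := hg.bddAbove_range
  set C : ℝ := max Cf Cg + 1 with hC
  have hCf' : ∀ i, ‖coeff i f‖ ≤ C := fun i =>
    le_trans (hCf (Set.mem_range_self i)) (by rw [hC]; linarith [le_max_left Cf Cg])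
  have hCg' : ∀ i, ‖coeff i g‖ ≤ C := fun i =>
    le_trans (hCg (Set.mem_range_self i)) (by rw [hC]; linarith [le_max_right Cf Cg])
  have hC0 : 0 < C := lt_of_le_of_lt (norm_nonneg ((coeff 0) f)) (lt_of_le_of_lt
    (le_trans (hCf (Set.mem_range_self 0)) (le_max_left Cf Cg)) (by rw [hC]; linarith))
  rw [_root_.IsRestricted, Metric.tendsto_atTop]
  intro ε hε
  have hδ : 0 < ε / (2 * C) := by positivity
  obtain ⟨Nf, hNf⟩ := Metric.tendsto_atTop.1 hf (ε / (2 * C)) hδ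
  obtain ⟨Ng, hNg⟩ := Metric.tendsto_atTop.1 hg (ε / (2 * C)) hδ
  refine ⟨Nf + Ng, fun m hm => ?_⟩
  have key : ‖coeff m (f * g)‖ ≤ ε / 2 := by
    rw [coeff_mul]
    refine na_sum_le hna _ _ (by positivity) fun x hx => ?_
    rw [Finset.HasAntidiagonal.mem_antidiagonal] at hx
    have hcases : Nf ≤ x.1 ∨ Ng ≤ x.2 := by omega
    rw [norm_mul]
    rcases hcases with hx1 | hx2
    · have h1 : ‖coeff x.1 f‖ ≤ ε / (2 * C) := by
        have := hNf x.1 hx1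
        rw [Real.dist_eq, sub_zero] at this
        exact le_of_lt (lt_of_le_of_lt (le_abs_self _) this)
      calc ‖coeff x.1 f‖ * ‖coeff x.2 g‖ ≤ (ε / (2 * C)) * C :=
            mul_le_mul h1 (hCg' x.2) (norm_nonneg _) hδ.le
        _ = ε / 2 := by field_simp
    · have h1 : ‖coeff x.2 g‖ ≤ ε / (2 * C) := by
        have := hNg x.2 hx2
        rw [Real.dist_eq, sub_zero] at this
        exact le_of_lt (lt_of_le_of_lt (le_abs_self _) this)
      calc ‖coeff x.1 f‖ * ‖coeff x.2 g‖ ≤ C * (ε / (2 * C)) :=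
            mul_le_mul (hCf' x.1) h1 (norm_nonneg _) hC0.le
        _ = ε / 2 := by field_simp
  rw [Real.dist_eq, sub_zero, abs_of_nonneg (norm_nonneg _)]
  linarith

open PowerSeries Filter in
theorem stmt7_aux (q : ℕ) (hq1 : 1 < q)
    (Kd : Type) [NontriviallyNormedField Kd] [CompleteSpace Kd] [IsAlgClosed Kd]
    (hna : IsNonarchimedean (fun x : Kd => ‖x‖))
    (c : Kd) (hc1 : 1 < ‖c‖) (φ : Kd →+* Kd) (hφ : ∀ x : Kd, φ x = x ^ q) :
    ∃ Ω : PowerSeries Kd, Ω ≠ 0 ∧ IsRestricted Kd Ω ∧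
      Ω = (X - C c) * PowerSeries.map φ Ω ∧
      ∀ g : PowerSeries Kd, IsRestricted Kd g →
        g = (X - C c) * PowerSeries.map φ g →
        ∃! p₀ : Polynomial Kd,
          (∀ i, (p₀.coeff i) ^ q = p₀.coeff i) ∧ g = (p₀ : PowerSeries Kd) * Ω := by
  classical
  have hc0 : c ≠ 0 := fun h => by simp [h] at hc1; linarith
  set r : ℝ := ‖c‖⁻¹ with hrdef
  have hr0 : 0 < r := inv_pos.2 (lt_trans one_pos hc1)
  have hr1 : r < 1 := by rw [hrdef]; exact inv_lt_one_of_one_lt₀ hc1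
  -- basic coefficient computations
  have na_sub : ∀ x y : Kd, ‖x - y‖ ≤ max ‖x‖ ‖y‖ := fun x y => by
    have := hna x (-y); simpa [sub_eq_add_neg] using this
  have coeff0_osm : ∀ (v : Kd) (f : PowerSeries Kd),
      coeff 0 ((1 - C v * X) * f) = coeff 0 f := by
    intro v f
    rw [sub_mul, one_mul, map_sub, mul_assoc, coeff_C_mul, coeff_zero_X_mul, mul_zero, sub_zero]
  have coeffS_osm : ∀ (v : Kd) (f : PowerSeries Kd) (k : ℕ),
      coeff (k+1) ((1 - C v * X) * f) = coeff (k+1) f - v * coeff k f := by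
    intro v f k
    rw [sub_mul, one_mul, map_sub, mul_assoc, coeff_C_mul, coeff_succ_X_mul]
  -- the sequence u
  set u : ℕ → Kd := fun i => c⁻¹ ^ q ^ i with hudef
  have hunorm : ∀ i, ‖u i‖ = r ^ q ^ i := fun i => by
    rw [hudef]; simp [norm_pow, norm_inv, hrdef]
  have hule1 : ∀ i, ‖u i‖ ≤ r := fun i => by
    rw [hunorm]
    calc r ^ q ^ i ≤ r ^ 1 :=
          pow_le_pow_of_le_one hr0.le hr1.le (Nat.one_le_pow _ _ (by omega))
      _ = r := pow_one r
  have huleN : ∀ i, ‖u i‖ ≤ r ^ i := fun i => by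
    rw [hunorm]; exact pow_le_pow_of_le_one hr0.le hr1.le (Nat.lt_pow_self (n := i) hq1).le
  have hrle1 : ∀ m : ℕ, r ^ m ≤ 1 := fun m => pow_le_one₀ hr0.le hr1.le
  have huq : ∀ i, u i ^ q = u (i+1) := fun i => by
    rw [hudef]; simp only [← pow_mul, ← pow_succ]
  have hu0 : u 0 = c⁻¹ := by rw [hudef]; simp
  -- partial products
  set P : ℕ → PowerSeries Kd := fun N => ∏ i ∈ Finset.range N, (1 - C (u i) * X) with hPdef
  have hP0 : P 0 = 1 := by rw [hPdef]; simp
  have hPsucc : ∀ N, P (N+1) = P N * (1 - C (u N) * X) := fun N => by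
    rw [hPdef]; exact Finset.prod_range_succ _ N
  have hPbound : ∀ N m, ‖coeff m (P N)‖ ≤ r ^ m := by
    intro N
    induction N with
    | zero =>
      intro m
      rw [hP0, coeff_one]
      split_ifs with h
      · subst h; simp
      · simp [pow_nonneg hr0.le]
    | succ N ih =>
      intro m
      rw [hPsucc, mul_comm]
      match m with
      | 0 => rw [coeff0_osm]; exact ih 0
      | k+1 =>
        rw [coeffS_osm]
        refine le_trans (na_sub _ _) (max_le (ih (k+1)) ?_)
        rw [norm_mul, pow_succ']
        exact mul_le_mul (hule1 N) (ih k) (norm_nonneg _) hr0.le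
  have hXPbound : ∀ N m, ‖coeff m (X * P N)‖ ≤ 1 := by
    intro N m
    match m with
    | 0 => rw [coeff_zero_X_mul]; simp
    | k+1 => rw [coeff_succ_X_mul]; exact le_trans (hPbound N k) (hrle1 k)
  have hPcauchy : ∀ m, CauchySeq (fun N => coeff m (P N)) := by
    intro m
    apply cauchySeq_of_le_geometric r 1 hr1
    intro N
    rw [dist_eq_norm, one_mul]
    have hd : coeff m (P N) - coeff m (P (N+1)) = u N * coeff m (X * P N) := by
      rw [← map_sub, hPsucc]
      have h2 : P N - P N * (1 - C (u N) * X) = C (u N) * (X * P N) := by ring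
      rw [h2, coeff_C_mul]
    rw [hd, norm_mul]
    calc ‖u N‖ * ‖coeff m (X * P N)‖ ≤ r ^ N * 1 :=
          mul_le_mul (huleN N) (hXPbound N m) (norm_nonneg _) (pow_nonneg hr0.le N)
      _ = r ^ N := mul_one _
  -- limits of the coefficients of the partial products
  have hex : ∀ m, ∃ L, Tendsto (fun N => coeff m (P N)) atTop (nhds L) :=
    fun m => cauchySeq_tendsto_of_complete (hPcauchy m)
  choose b hb using hex
  have hP0' : ∀ N, coeff 0 (P N) = 1 := by
    intro N
    rw [hPdef]
    simp only [coeff_zero_eq_constantCoeff, map_prod]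
    refine Finset.prod_eq_one fun i _ => ?_
    simp
  have hb0 : b 0 = 1 := by
    refine tendsto_nhds_unique (hb 0) ?_
    simp only [hP0']
    exact tendsto_const_nhds
  have hbnorm : ∀ m, ‖b m‖ ≤ r ^ m := fun m =>
    le_of_tendsto ((hb m).norm) (Filter.Eventually.of_forall fun N => hPbound N m)
  -- the recursion coming from the functional equation on partial products
  have hPmap : ∀ N, P (N+1) = (1 - C (u 0) * X) * PowerSeries.map φ (P N) := by
    intro N
    have hm : PowerSeries.map φ (P N) = ∏ i ∈ Finset.range N, (1 - C (u (i+1)) * X) := by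
      rw [hPdef]
      simp only [map_prod, map_sub, map_one, map_mul, PowerSeries.map_C, PowerSeries.map_X]
      exact Finset.prod_congr rfl fun i _ => by rw [hφ, huq]
    rw [hm, hPdef]
    beta_reduce
    rw [Finset.prod_range_succ' (fun i => 1 - C (u i) * X) N, mul_comm]
  have hbrec : ∀ k, b (k+1) = b (k+1) ^ q - c⁻¹ * b k ^ q := by
    intro k
    have h1 : Tendsto (fun N => coeff (k+1) (P (N+1))) atTop (nhds (b (k+1))) :=
      (hb (k+1)).comp (Filter.tendsto_add_atTop_nat 1)
    have heq : ∀ N, coeff (k+1) (P (N+1))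
        = (coeff (k+1) (P N)) ^ q - c⁻¹ * (coeff k (P N)) ^ q := by
      intro N
      rw [hPmap N, coeffS_osm, PowerSeries.coeff_map, PowerSeries.coeff_map, hφ, hφ, hu0]
    have h2 : Tendsto (fun N => coeff (k+1) (P (N+1))) atTop
        (nhds (b (k+1) ^ q - c⁻¹ * b k ^ q)) := by
      simp only [heq]
      exact ((hb (k+1)).pow q).sub (tendsto_const_nhds.mul ((hb k).pow q))
    exact tendsto_nhds_unique h1 h2
  -- the inverse partial products
  set G : ℕ → PowerSeries Kd := fun i => PowerSeries.mk fun j => u i ^ j with hGdef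
  have hG1 : ∀ i, (1 - C (u i) * X) * G i = 1 := by
    intro i
    ext m
    match m with
    | 0 =>
      rw [coeff0_osm, coeff_one]
      simp [hGdef, coeff_mk]
    | k+1 =>
      rw [coeffS_osm, coeff_one]
      simp only [hGdef, coeff_mk, if_neg (Nat.succ_ne_zero k)]
      rw [pow_succ]
      ring
  set Q : ℕ → PowerSeries Kd := fun N => ∏ i ∈ Finset.range N, G i with hQdef
  have hQ0 : Q 0 = 1 := by rw [hQdef]; simp
  have hQsucc : ∀ N, Q (N+1) = Q N * G N := fun N => by
    rw [hQdef]; exact Finset.prod_range_succ _ N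
  have hPQ : ∀ N, P N * Q N = 1 := by
    intro N
    rw [hPdef, hQdef]
    beta_reduce
    rw [← Finset.prod_mul_distrib]
    exact Finset.prod_eq_one fun i _ => hG1 i
  have hQbound : ∀ N m, ‖coeff m (Q N)‖ ≤ r ^ m := by
    intro N
    induction N with
    | zero =>
      intro m
      rw [hQ0, coeff_one]
      split_ifs with h
      · subst h; simp
      · simp [pow_nonneg hr0.le]
    | succ N ih =>
      intro m
      rw [hQsucc, coeff_mul]
      refine na_sum_le hna _ _ (pow_nonneg hr0.le m) fun x hx => ?_
      rw [Finset.HasAntidiagonal.mem_antidiagonal] at hx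
      rw [norm_mul]
      have h2 : ‖coeff x.2 (G N)‖ ≤ r ^ x.2 := by
        rw [hGdef]
        beta_reduce
        rw [coeff_mk, norm_pow]
        exact pow_le_pow_left₀ (norm_nonneg _) (hule1 N) x.2
      calc ‖coeff x.1 (Q N)‖ * ‖coeff x.2 (G N)‖ ≤ r ^ x.1 * r ^ x.2 :=
            mul_le_mul (ih x.1) h2 (norm_nonneg _) (pow_nonneg hr0.le _)
        _ = r ^ m := by rw [← pow_add, hx]
  have hQcauchy : ∀ m, CauchySeq (fun N => coeff m (Q N)) := by
    intro m
    apply cauchySeq_of_le_geometric r 1 hr1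
    intro N
    rw [dist_eq_norm, one_mul]
    have hd : coeff m (Q N) - coeff m (Q (N+1)) = -(coeff m (Q N * (G N - 1))) := by
      rw [← map_neg, ← map_sub, hQsucc]
      congr 1
      ring
    rw [hd, norm_neg, coeff_mul]
    refine na_sum_le hna _ _ (pow_nonneg hr0.le N) fun x hx => ?_
    rw [norm_mul]
    match hx2 : x.2 with
    | 0 =>
      have : coeff 0 (G N - 1) = 0 := by
        rw [map_sub, coeff_one, hGdef]
        beta_reduce
        rw [coeff_mk]
        simp
      rw [this, norm_zero, mul_zero]
      exact pow_nonneg hr0.le N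
    | k+1 =>
      have : coeff (k+1) (G N - 1) = u N ^ (k+1) := by
        rw [map_sub, coeff_one, hGdef]
        beta_reduce
        rw [coeff_mk]
        simp
      rw [this]
      have h1 : ‖coeff x.1 (Q N)‖ ≤ 1 := le_trans (hQbound N x.1) (hrle1 x.1)
      have h2 : ‖u N ^ (k+1)‖ ≤ r ^ N := by
        rw [norm_pow]
        calc ‖u N‖ ^ (k+1) ≤ ‖u N‖ ^ 1 :=
              pow_le_pow_of_le_one (norm_nonneg _) (le_trans (hule1 N) hr1.le) (by omega)
          _ = ‖u N‖ := pow_one _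
          _ ≤ r ^ N := huleN N
      calc ‖coeff x.1 (Q N)‖ * ‖u N ^ (k+1)‖ ≤ 1 * (r ^ N) :=
            mul_le_mul h1 h2 (norm_nonneg _) one_pos.le
        _ = r ^ N := one_mul _
  have hexq : ∀ m, ∃ L, Tendsto (fun N => coeff m (Q N)) atTop (nhds L) :=
    fun m => cauchySeq_tendsto_of_complete (hQcauchy m)
  choose qb hqb using hexq
  have hqbnorm : ∀ m, ‖qb m‖ ≤ r ^ m := fun m =>
    le_of_tendsto ((hqb m).norm) (Filter.Eventually.of_forall fun N => hQbound N m)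
  -- the limit series
  set Bser : PowerSeries Kd := PowerSeries.mk b with hBdef
  set Qser : PowerSeries Kd := PowerSeries.mk qb with hQserdef
  have hBQ : Bser * Qser = 1 := by
    ext m
    rw [coeff_mul]
    simp only [hBdef, hQserdef, coeff_mk]
    have h1 : Tendsto (fun N => ∑ x ∈ Finset.HasAntidiagonal.antidiagonal m,
        coeff x.1 (P N) * coeff x.2 (Q N)) atTop
        (nhds (∑ x ∈ Finset.HasAntidiagonal.antidiagonal m, b x.1 * qb x.2)) :=
      tendsto_finset_sum _ fun x _ => (hb x.1).mul (hqb x.2)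
    have h2 : Tendsto (fun N => ∑ x ∈ Finset.HasAntidiagonal.antidiagonal m,
        coeff x.1 (P N) * coeff x.2 (Q N)) atTop (nhds (coeff m 1)) := by
      have : ∀ N, ∑ x ∈ Finset.HasAntidiagonal.antidiagonal m, coeff x.1 (P N) * coeff x.2 (Q N)
          = coeff m 1 := fun N => by rw [← coeff_mul, hPQ]
      simp only [this]
      exact tendsto_const_nhds
    exact tendsto_nhds_unique h1 h2
  -- the constant a with a^(q-1) = -c⁻¹
  obtain ⟨a, haroot⟩ := IsAlgClosed.exists_root
    (Polynomial.X ^ (q-1) - Polynomial.C (-c⁻¹ : Kd))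
    (by rw [Polynomial.degree_X_pow_sub_C (by omega : 0 < q - 1)]
        exact_mod_cast (by omega : q - 1 ≠ 0))
  have haq : a ^ (q-1) = -c⁻¹ := by
    have := haroot
    rw [Polynomial.IsRoot, Polynomial.eval_sub, Polynomial.eval_pow, Polynomial.eval_X,
      Polynomial.eval_C, sub_eq_zero] at this
    exact this
  have ha0 : a ≠ 0 := by
    intro h
    rw [h, zero_pow (by omega : q - 1 ≠ 0)] at haq
    exact inv_ne_zero hc0 (neg_eq_zero.1 haq.symm)
  have hqsub : q - 1 + 1 = q := by omega
  have hapow : a ^ q = a ^ (q-1) * a := by rw [← pow_succ, hqsub]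
  have hcaq : c * a ^ q = -a := by
    rw [hapow, haq]
    field_simp
  have haqinv : a ^ q = -(a * c⁻¹) := by
    rw [hapow, haq]
    ring
  -- Ω and its inverse
  set Ω : PowerSeries Kd := C a * Bser with hΩdef
  set Ωinv : PowerSeries Kd := C a⁻¹ * Qser with hΩinvdef
  have hΩc0 : coeff 0 Ω = a := by
    rw [hΩdef, coeff_C_mul, hBdef, coeff_mk, hb0, mul_one]
  have hΩne : Ω ≠ 0 := by
    intro h
    rw [h, map_zero] at hΩc0
    exact ha0 hΩc0.symm
  have hΩinvmul : Ω * Ωinv = 1 := by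
    have h1 : Ω * Ωinv = C (a * a⁻¹) * (Bser * Qser) := by
      rw [hΩdef, hΩinvdef, map_mul]; ring
    rw [h1, mul_inv_cancel₀ ha0, hBQ, map_one, one_mul]
  have hΩres : IsRestricted Kd Ω := by
    unfold _root_.IsRestricted
    refine squeeze_zero (g := fun m => ‖a‖ * r ^ m) (fun m => norm_nonneg _) (fun m => ?_) ?_
    · show ‖coeff m Ω‖ ≤ ‖a‖ * r ^ m
      rw [hΩdef, coeff_C_mul, norm_mul, hBdef, coeff_mk]
      exact mul_le_mul_of_nonneg_left (hbnorm m) (norm_nonneg a)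
    · simpa using (tendsto_pow_atTop_nhds_zero_of_lt_one hr0.le hr1).const_mul ‖a‖
  have hΩinvres : IsRestricted Kd Ωinv := by
    unfold _root_.IsRestricted
    refine squeeze_zero (g := fun m => ‖a⁻¹‖ * r ^ m) (fun m => norm_nonneg _) (fun m => ?_) ?_
    · show ‖coeff m Ωinv‖ ≤ ‖a⁻¹‖ * r ^ m
      rw [hΩinvdef, coeff_C_mul, norm_mul, hQserdef, coeff_mk]
      exact mul_le_mul_of_nonneg_left (hqbnorm m) (norm_nonneg _)
    · simpa using (tendsto_pow_atTop_nhds_zero_of_lt_one hr0.le hr1).const_mul ‖a⁻¹‖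
  -- functional equation for Bser and Ω
  have hBfe : Bser = (1 - C c⁻¹ * X) * PowerSeries.map φ Bser := by
    ext m
    match m with
    | 0 =>
      rw [coeff0_osm, PowerSeries.coeff_map, hφ]
      simp only [hBdef, coeff_mk]
      rw [hb0, one_pow]
    | k+1 =>
      rw [coeffS_osm, PowerSeries.coeff_map, PowerSeries.coeff_map, hφ, hφ]
      simp only [hBdef, coeff_mk]
      exact hbrec k
  have hkey : C a * (1 - C c⁻¹ * X) = (X - C c) * C (a ^ q) := by
    have h1 : C (a * c⁻¹) = -C (a ^ q) := by
      rw [show a * c⁻¹ = -(a^q) by rw [haqinv]; ring, map_neg]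
    have h2 : C (c * a ^ q) = -C a := by rw [hcaq, map_neg]
    calc C a * (1 - C c⁻¹ * X)
        = C a - C (a * c⁻¹) * X := by rw [map_mul]; ring
      _ = C a + C (a^q) * X := by rw [h1]; ring
      _ = C (a^q) * X - C (c * a^q) := by rw [h2]; ring
      _ = (X - C c) * C (a^q) := by rw [map_mul]; ring
  have hΩfe : Ω = (X - C c) * PowerSeries.map φ Ω := by
    have hmapΩ : PowerSeries.map φ Ω = C (a ^ q) * PowerSeries.map φ Bser := by
      rw [hΩdef, map_mul, PowerSeries.map_C, hφ]
    calc Ω = C a * Bser := hΩdef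
      _ = C a * ((1 - C c⁻¹ * X) * PowerSeries.map φ Bser) := by rw [← hBfe]
      _ = (C a * (1 - C c⁻¹ * X)) * PowerSeries.map φ Bser := by ring
      _ = ((X - C c) * C (a ^ q)) * PowerSeries.map φ Bser := by rw [hkey]
      _ = (X - C c) * PowerSeries.map φ Ω := by rw [hmapΩ]; ring
  refine ⟨Ω, hΩne, hΩres, hΩfe, ?_⟩
  -- the classification of all solutions
  intro g hgres hgeq
  set h : PowerSeries Kd := g * Ωinv with hhdef
  have hhΩ : h * Ω = g := by
    rw [hhdef, mul_assoc, mul_comm Ωinv Ω, hΩinvmul, mul_one]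
  have hτ1 : PowerSeries.map φ Ω * PowerSeries.map φ Ωinv = 1 := by
    rw [← map_mul, hΩinvmul, map_one]
  have hτΩ0 : PowerSeries.map φ Ω ≠ 0 := by
    intro hz
    have : coeff 0 (PowerSeries.map φ Ω) = a ^ q := by
      rw [PowerSeries.coeff_map, hΩc0, hφ]
    rw [hz, map_zero] at this
    exact pow_ne_zero q ha0 this.symm
  have hkey2 : g * PowerSeries.map φ Ω = Ω * PowerSeries.map φ g := by
    conv_lhs => rw [hgeq]
    conv_rhs => rw [hΩfe]
    ring
  have hτh : PowerSeries.map φ h = h := by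
    have hne : Ω * PowerSeries.map φ Ω ≠ 0 := mul_ne_zero hΩne hτΩ0
    apply mul_right_cancel₀ hne
    calc PowerSeries.map φ h * (Ω * PowerSeries.map φ Ω)
        = (Ω * PowerSeries.map φ g) * (PowerSeries.map φ Ω * PowerSeries.map φ Ωinv) := by
          rw [hhdef, map_mul]; ring
      _ = Ω * PowerSeries.map φ g := by rw [hτ1, mul_one]
      _ = g * PowerSeries.map φ Ω := hkey2.symm
      _ = (g * (Ωinv * Ω)) * PowerSeries.map φ Ω := by rw [mul_comm Ωinv Ω, hΩinvmul, mul_one]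
      _ = h * (Ω * PowerSeries.map φ Ω) := by rw [hhdef]; ring
  have hfix : ∀ i, (coeff i h) ^ q = coeff i h := by
    intro i
    have := congrArg (coeff i) hτh
    rwa [PowerSeries.coeff_map, hφ] at this
  have hhres : IsRestricted Kd h := isRestricted_mul hna hgres hΩinvres
  have hhres' := hhres
  unfold _root_.IsRestricted at hhres'
  obtain ⟨M, hM⟩ := Metric.tendsto_atTop.1 hhres' 1 one_pos
  have hMlt : ∀ i, M ≤ i → ‖coeff i h‖ < 1 := by
    intro i hi
    have := hM i hi
    rw [Real.dist_eq, sub_zero] at this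
    exact lt_of_le_of_lt (le_abs_self _) this
  have hzero : ∀ i, M ≤ i → coeff i h = 0 := by
    intro i hi
    by_contra hne
    have h0 : 0 < ‖coeff i h‖ := norm_pos_iff.2 hne
    have hlt : ‖coeff i h‖ ^ q < ‖coeff i h‖ ^ 1 :=
      pow_lt_pow_right_of_lt_one₀ h0 (hMlt i hi) hq1
    rw [pow_one] at hlt
    rw [← norm_pow, hfix i] at hlt
    exact lt_irrefl _ hlt
  have hcoe : ((PowerSeries.trunc M h : Polynomial Kd) : PowerSeries Kd) = h := by
    ext i
    rw [Polynomial.coeff_coe, PowerSeries.coeff_trunc]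
    split_ifs with hi
    · rfl
    · exact (hzero i (le_of_not_gt hi)).symm
  refine ⟨PowerSeries.trunc M h, ⟨?_, ?_⟩, ?_⟩
  · intro i
    rw [PowerSeries.coeff_trunc]
    split_ifs with hi
    · exact hfix i
    · exact zero_pow (by omega : q ≠ 0)
  · rw [hcoe]
    exact hhΩ.symm
  · rintro p₁ ⟨-, hp₁⟩
    have : (p₁ : PowerSeries Kd) = ((PowerSeries.trunc M h : Polynomial Kd) : PowerSeries Kd) := by
      apply mul_right_cancel₀ hΩne
      rw [← hp₁, hcoe, hhΩ]
    exact Polynomial.coe_inj.1 this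

theorem stmt_7
    (p n : ℕ) [Fact p.Prime] (hn : 0 < n)
    (K : Type) [Field K] [CharP K p] (θ : K)
    (Kd : Type) [NontriviallyNormedField Kd] [CompleteSpace Kd] [IsAlgClosed Kd]
    [CharP Kd p] [Algebra K Kd]
    (hna : IsNonarchimedean (fun x : Kd => ‖x‖))
    (hθ : 1 < ‖algebraMap K Kd θ‖) :
    ∃ Ω : PowerSeries Kd, Ω ≠ 0 ∧ IsRestricted Kd Ω ∧
      Ω = (PowerSeries.X - PowerSeries.C (algebraMap K Kd θ)) *
            PowerSeries.map (iterateFrobenius Kd p n) Ω ∧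
      ∀ g : PowerSeries Kd, IsRestricted Kd g →
        g = (PowerSeries.X - PowerSeries.C (algebraMap K Kd θ)) *
              PowerSeries.map (iterateFrobenius Kd p n) g →
        ∃! p₀ : Polynomial Kd,
          (∀ i, (p₀.coeff i) ^ p ^ n = p₀.coeff i) ∧
          g = (p₀ : PowerSeries Kd) * Ω := by
  have hq1 : 1 < p ^ n := Nat.one_lt_pow hn.ne' (Fact.out : p.Prime).one_lt
  exact stmt7_aux (p ^ n) hq1 Kd hna (algebraMap K Kd θ) hθ (iterateFrobenius Kd p n)
    (fun x => iterateFrobenius_def p n x)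
end

section
/- Let M₁ and M₂ be effective t-motifs over K with M₁ analytically trivial, i.e. M₁ ⊗ K†{t} admits a K†{t}-basis of σ-invariant elements (assume ‖θ‖ > 1). If f ∈ Hom_σ(M₁,M₂) is a morphism such that the induced map f ⊗ id : M₁ ⊗ K†{t} → M₂ ⊗ K†{t} sends every σ-invariant element of M₁ ⊗ K†{t} to 0, then f = 0. (Faithfulness of the functor H_an(−,k[t]) on analytically trivial t-motifs.) -/
/-!
STATEMENT 10. Setting as in Statements 8–9: effective t-motifs `Mᵢ` over `K` are
represented by column modules `Fin rᵢ → K[t]` with `σᵢ(v) = Sᵢ ⬝ τ(v)`,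
`det Sᵢ = uᵢ (t-θ)^{dᵢ}`; `K† = Kd ⊇ K` algebraically closed, complete w.r.t. a
nontrivial nonarchimedean absolute value, `‖θ‖ > 1`.  A morphism `f ∈ Hom_σ(M₁,M₂)` is
a matrix `F` over `K[t]` with `F·S₁ = S₂·τ(F)`, and `f ⊗ id` acts on
`M₁ ⊗ K†{t}` (columns with restricted entries) by `v ↦ F·v`.

Statement: `M₁` is analytically trivial (it has a σ-invariant `K†{t}`-basis, encoded by
an over-`K†{t}`-invertible matrix `E` with restricted entries and σ-invariant columns);
if `f ⊗ id` kills every σ-invariant element of `M₁ ⊗ K†{t}` then `f = 0`.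
-/

open Polynomial

theorem stmt_10
    (p n : ℕ) [Fact p.Prime] (hn : 0 < n)
    (K : Type) [Field K] [CharP K p] (θ : K)
    (Kd : Type) [NontriviallyNormedField Kd] [CompleteSpace Kd] [IsAlgClosed Kd]
    [CharP Kd p] [Algebra K Kd]
    (hna : IsNonarchimedean (fun x : Kd => ‖x‖))
    (hθ : 1 < ‖algebraMap K Kd θ‖)
    (r₁ r₂ : ℕ)
    (S₁ : Matrix (Fin r₁) (Fin r₁) (Polynomial K))
    (S₂ : Matrix (Fin r₂) (Fin r₂) (Polynomial K))
    (u₁ u₂ : Kˣ) (d₁ d₂ : ℕ)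
    (h₁ : S₁.det = C (u₁ : K) * (X - C θ) ^ d₁)
    (h₂ : S₂.det = C (u₂ : K) * (X - C θ) ^ d₂)
    (S₁' : Matrix (Fin r₁) (Fin r₁) (PowerSeries Kd))
    (hS₁' : S₁' = S₁.map (Polynomial.coeToPowerSeries.ringHom.comp
        (Polynomial.mapRingHom (algebraMap K Kd))))
    -- `M₁` is analytically trivial:
    (hat : ∃ E E' : Matrix (Fin r₁) (Fin r₁) (PowerSeries Kd),
      (∀ i j, IsRestricted Kd (E i j)) ∧ (∀ i j, IsRestricted Kd (E' i j)) ∧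
      (∀ j, S₁'.mulVec
          (fun i => PowerSeries.map (iterateFrobenius Kd p n) (E i j)) =
        fun i => E i j) ∧
      E * E' = 1 ∧ E' * E = 1)
    -- a morphism `f : M₁ → M₂`:
    (F : Matrix (Fin r₂) (Fin r₁) (Polynomial K))
    (hF : F * S₁ = S₂ * F.map (Polynomial.mapRingHom (iterateFrobenius K p n)))
    -- `f ⊗ id` kills every σ-invariant element of `M₁ ⊗ K†{t}`:
    (hkill : ∀ v : Fin r₁ → PowerSeries Kd, (∀ i, IsRestricted Kd (v i)) →
      S₁'.mulVec (fun j => PowerSeries.map (iterateFrobenius Kd p n) (v j)) = v →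
      (F.map (Polynomial.coeToPowerSeries.ringHom.comp
          (Polynomial.mapRingHom (algebraMap K Kd)))).mulVec v = 0) :
    F = 0 := by
  obtain ⟨E, E', hE, hE', hinv, hEE', hE'E⟩ := hat
  set φ := Polynomial.coeToPowerSeries.ringHom.comp
      (Polynomial.mapRingHom (algebraMap K Kd)) with hφ
  have hcol : ∀ j, (F.map φ).mulVec (fun i => E i j) = 0 := fun j =>
    hkill _ (fun i => hE i j) (hinv j)
  have hFE : F.map ⇑φ * E = 0 := by
    apply Matrix.ext
    intro i j
    have h := congrFun (hcol j) i
    simpa [Matrix.mul_apply, Matrix.mulVec, dotProduct] using h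
  have hF0 : F.map ⇑φ = 0 := by
    calc F.map ⇑φ = F.map ⇑φ * (E * E') := by rw [hEE', Matrix.mul_one]
    _ = (F.map ⇑φ * E) * E' := by rw [Matrix.mul_assoc]
    _ = 0 := by rw [hFE, Matrix.zero_mul]
  have hinj : Function.Injective ⇑φ := by
    intro a b hab
    simp only [hφ, RingHom.comp_apply, Polynomial.coeToPowerSeries.ringHom_apply] at hab
    exact Polynomial.map_injective _ (algebraMap K Kd).injective
      (Polynomial.coe_injective Kd hab)
  apply Matrix.ext
  intro i j
  have h0 : φ (F i j) = φ 0 := by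
    have h := congrFun (congrFun hF0 i) j
    simpa [Matrix.map_apply] using h
  simpa using hinj h0
end

section
/- Let L be a separably closed field of characteristic p containing the finite field of q elements. Then the map GL(n,L) → GL(n,L), A ↦ τ(A)·A⁻¹, is surjective, where τ(A) denotes the matrix obtained from A by raising every entry to the q-th power. That is, for every B ∈ GL(n,L) there exists A ∈ GL(n,L) with B = τ(A)·A⁻¹. -/
open Polynomial Finset

section LangGL

variable (p n : ℕ) [Fact p.Prime]
variable (L : Type) [Field L] [IsSepClosed L] [CharP L p]

lemma lang_AS (hn : 0 < n) (c : L) : ∃ x : L, x ^ p ^ n = x + c := by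
  have hp := (Fact.out : p.Prime)
  have hn' : n ≠ 0 := by omega
  have hq : 2 ≤ p ^ n := Nat.one_lt_pow hn' hp.two_le
  set f : L[X] := X ^ p ^ n - (X + C c) with hf
  have hd1 : (X + C c : L[X]).degree < (X ^ p ^ n : L[X]).degree := by
    rw [degree_X_pow]
    calc (X + C c : L[X]).degree ≤ 1 := by
          apply (degree_add_le _ _).trans
          simp only [degree_X, max_le_iff]
          exact ⟨le_refl 1, degree_C_le.trans (by norm_num)⟩
      _ < (p ^ n : ℕ) := by exact_mod_cast Nat.lt_of_lt_of_le one_lt_two hq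
  have hdeg : f.degree ≠ 0 := by
    rw [hf, degree_sub_eq_left_of_degree_lt hd1, degree_X_pow]
    exact_mod_cast (by positivity : p^n ≠ 0)
  have hderiv : derivative f = -1 := by
    rw [hf]
    simp [derivative_X_pow, CharP.cast_eq_zero_iff L p, dvd_pow_self p hn']
    omega
  have hsep : f.Separable := by
    rw [Polynomial.separable_def, hderiv]
    exact ⟨0, -1, by ring⟩
  obtain ⟨x, hx⟩ := IsSepClosed.exists_root f hdeg hsep
  refine ⟨x, ?_⟩
  have := hx
  rw [IsRoot, hf] at this
  simp only [eval_sub, eval_pow, eval_X, eval_add, eval_C] at this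
  rw [sub_eq_zero] at this
  exact this

lemma lang_root (p n : ℕ) [Fact p.Prime] (hn : 0 < n)
    (L : Type) [Field L] [IsSepClosed L] [CharP L p]
    (r : ℕ) (a : Fin r → L) (ha : ∃ j, a j ≠ 0) :
    ∃ t : L, t ≠ 0 ∧ ∑ j : Fin r, a j * t ^ (p ^ n) ^ (r - (j : ℕ)) = t := by
  have hp := (Fact.out : p.Prime)
  have hn' : n ≠ 0 := by omega
  set q := p ^ n with hqdef
  have hq : 2 ≤ q := Nat.one_lt_pow hn' hp.two_le
  set e : Fin r → ℕ := fun j => q ^ (r - (j : ℕ)) with he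
  have he2 : ∀ j : Fin r, 2 ≤ e j := by
    intro j
    calc 2 ≤ q := hq
      _ ≤ q ^ (r - (j : ℕ)) := Nat.le_self_pow (Nat.sub_ne_zero_of_lt j.2) q
  have heinj : Function.Injective e := by
    intro i j hij
    have : r - (i : ℕ) = r - (j : ℕ) :=
      Nat.pow_right_injective hq hij
    have hi := i.2; have hj := j.2
    exact Fin.ext (by omega)
  set g : L[X] := (∑ j : Fin r, C (a j) * X ^ (e j - 1)) - 1 with hg
  set f : L[X] := X * g with hf
  have hfg : f = (∑ j : Fin r, C (a j) * X ^ (e j)) - X := by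
    rw [hf, hg, mul_sub, mul_one, Finset.mul_sum]
    congr 1
    refine Finset.sum_congr rfl fun j _ => ?_
    rw [mul_left_comm, ← pow_succ', Nat.sub_add_cancel (by have := he2 j; omega)]
  have hderiv : derivative f = -1 := by
    rw [hfg, derivative_sub, derivative_X, derivative_sum]
    have : ∀ j : Fin r, derivative (C (a j) * X ^ (e j)) = 0 := by
      intro j
      rw [derivative_C_mul, derivative_X_pow]
      have : ((e j : ℕ) : L) = 0 := by
        rw [CharP.cast_eq_zero_iff L p]
        exact dvd_trans (dvd_pow_self p hn') (dvd_pow_self q (by have := j.2; omega))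
      rw [this]; simp
    rw [Finset.sum_congr rfl fun j _ => this j]
    simp
  have hsepf : f.Separable := by
    rw [Polynomial.separable_def, hderiv]
    exact ⟨0, -1, by ring⟩
  have hsepg : g.Separable := hsepf.of_dvd (dvd_mul_left g X)
  obtain ⟨j₀, hj₀⟩ := ha
  have hcoeff : g.coeff (e j₀ - 1) ≠ 0 := by
    rw [hg, coeff_sub, finset_sum_coeff]
    have h1 : (1 : L[X]).coeff (e j₀ - 1) = 0 := by
      rw [coeff_one, if_neg]
      have := he2 j₀; omega
    rw [h1, sub_zero]
    rw [Finset.sum_eq_single j₀]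
    · rw [coeff_C_mul, coeff_X_pow, if_pos rfl, mul_one]; exact hj₀
    · intro j _ hj
      rw [coeff_C_mul, coeff_X_pow, if_neg, mul_zero]
      intro hcontra
      apply hj; apply heinj
      have := he2 j; have := he2 j₀; omega
    · intro h; exact absurd (Finset.mem_univ j₀) h
  have hdeg : g.degree ≠ 0 := by
    intro h0
    have hle := le_degree_of_ne_zero hcoeff
    rw [h0] at hle
    have : e j₀ - 1 ≤ 0 := by exact_mod_cast hle
    have := he2 j₀; omega
  obtain ⟨t, ht⟩ := IsSepClosed.exists_root g hdeg hsepg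
  have heval : (∑ j : Fin r, a j * t ^ (e j - 1)) - 1 = 0 := by
    have := ht
    rw [IsRoot, hg] at this
    simpa [eval_finset_sum] using this
  have ht0 : t ≠ 0 := by
    rintro rfl
    rw [sub_eq_zero] at heval
    have : ∀ j : Fin r, a j * (0:L) ^ (e j - 1) = 0 := by
      intro j
      rw [zero_pow (by have := he2 j; omega), mul_zero]
    rw [Finset.sum_congr rfl fun j _ => this j] at heval
    simp at heval
  refine ⟨t, ht0, ?_⟩
  rw [sub_eq_zero] at heval
  calc ∑ j : Fin r, a j * t ^ (e j)
      = (∑ j : Fin r, a j * t ^ (e j - 1)) * t := by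
        rw [Finset.sum_mul]
        refine Finset.sum_congr rfl fun j _ => ?_
        rw [mul_assoc, ← pow_succ, Nat.sub_add_cancel (by have := he2 j; omega)]
    _ = t := by rw [heval, one_mul]

lemma lang_step1 (p n : ℕ) [Fact p.Prime] (hn : 0 < n)
    (L : Type) [Field L] [IsSepClosed L] [CharP L p]
    (ι : Type) [Fintype ι] [DecidableEq ι] [Nonempty ι]
    (B : Matrix ι ι L) (hB : IsUnit B.det) :
    ∃ v : ι → L, v ≠ 0 ∧ (fun i => v i ^ p ^ n) = B.mulVec v := by
  classical
  have hp := (Fact.out : p.Prime)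
  have hn' : n ≠ 0 := by omega
  set q := p ^ n with hqdef
  have hq : 2 ≤ q := Nat.one_lt_pow hn' hp.two_le
  set F := iterateFrobenius L p n with hFdef
  have hF : ∀ x : L, F x = x ^ q := fun x => rfl
  set φ : (ι → L) → (ι → L) := fun u => B⁻¹.mulVec (fun i => u i ^ q) with hφ
  set w : ℕ → ι → L := fun j => φ^[j] (fun _ => 1) with hwdef
  have hwsucc : ∀ j, w (j + 1) = φ (w j) := fun j => Function.iterate_succ_apply' φ j _
  have hBw : ∀ j, B.mulVec (w (j + 1)) = fun i => w j i ^ q := by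
    intro j
    rw [hwsucc, hφ]
    show B.mulVec (B⁻¹.mulVec _) = _
    rw [Matrix.mulVec_mulVec, Matrix.mul_nonsing_inv _ hB, Matrix.one_mulVec]
  have hwne : ∀ j, w j ≠ 0 := by
    intro j
    induction j with
    | zero =>
      intro h
      have := congrFun h (Classical.arbitrary ι)
      simp [hwdef] at this
    | succ j ih =>
      intro h
      obtain ⟨i, hi⟩ := Function.ne_iff.mp ih
      have h2 : B.mulVec (w (j + 1)) = 0 := by rw [h, Matrix.mulVec_zero]
      rw [hBw j] at h2
      have := congrFun h2 i
      simp only [Pi.zero_apply] at this hi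
      exact pow_ne_zero q hi this
  -- the predicate: w r lies in the span of the previous vectors
  set P : ℕ → Prop := fun r => w r ∈ Submodule.span L (Set.range fun j : Fin r => w j) with hP
  have hex : ∃ r, P r := by
    by_contra hcon
    push_neg at hcon
    set d := Fintype.card ι with hd
    have hni : ¬ LinearIndependent L (fun j : Fin (d + 1) => w j) := by
      intro h
      have h1 := h.fintype_card_le_finrank
      rw [Fintype.card_fin, Module.finrank_pi L] at h1
      omega
    rw [Fintype.not_linearIndependent_iff] at hni
    obtain ⟨g, hsum, ⟨i₁, hi₁⟩⟩ := hni
    set s : Finset (Fin (d + 1)) := univ.filter (fun i => g i ≠ 0) with hs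
    have hsne : s.Nonempty := ⟨i₁, by simp [hs, hi₁]⟩
    set i₀ := s.max' hsne with hi₀
    have hgi₀ : g i₀ ≠ 0 := by
      have := s.max'_mem hsne
      simp only [hs, mem_filter] at this
      exact this.2
    apply hcon (i₀ : ℕ)
    have h4 := Finset.add_sum_erase univ (fun i => g i • w (i : ℕ)) (mem_univ i₀)
    rw [← h4] at hsum
    have h5 : w (i₀ : ℕ) = (g i₀)⁻¹ • (-∑ i ∈ univ.erase i₀, g i • w (i : ℕ)) := by
      have h6 : g i₀ • w (i₀ : ℕ) = -∑ i ∈ univ.erase i₀, g i • w (i : ℕ) := by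
        rw [eq_neg_iff_add_eq_zero]; exact hsum
      rw [← h6, smul_smul, inv_mul_cancel₀ hgi₀, one_smul]
    show w (i₀ : ℕ) ∈ Submodule.span L (Set.range fun j : Fin (i₀ : ℕ) => w (j : ℕ))
    rw [h5]
    apply Submodule.smul_mem
    apply Submodule.neg_mem
    apply Submodule.sum_mem
    intro i hi
    by_cases hgi : g i = 0
    · rw [hgi, zero_smul]; exact Submodule.zero_mem _
    · have his : i ∈ s := by simp [hs, hgi]
      have hle : i ≤ i₀ := Finset.le_max' s i his
      have hne : i ≠ i₀ := (Finset.mem_erase.mp hi).1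
      have hlt : (i : ℕ) < (i₀ : ℕ) := by
        have := lt_of_le_of_ne hle hne
        exact Fin.lt_iff_val_lt_val.mp this
      apply Submodule.smul_mem
      apply Submodule.subset_span
      exact ⟨⟨(i : ℕ), hlt⟩, rfl⟩
  have hPdec : DecidablePred P := Classical.decPred P
  set r := Nat.find hex with hrdef
  have hr : P r := Nat.find_spec hex
  have hrmin : ∀ j, j < r → ¬ P j := fun j hj => Nat.find_min hex hj
  have hr1 : 1 ≤ r := by
    rcases Nat.eq_zero_or_pos r with h0 | h1
    · exfalso
      rw [h0] at hr
      rw [hP] at hr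
      have : (Set.range fun j : Fin 0 => w (j : ℕ)) = ∅ := by
        simp
      rw [this, Submodule.span_empty, Submodule.mem_bot] at hr
      exact hwne 0 hr
    · exact h1
  obtain ⟨lam, hlam⟩ := Submodule.mem_span_range_iff_exists_fun L |>.mp hr
  have hlamne : ∃ j : Fin r, lam j ≠ 0 := by
    by_contra hcon
    push_neg at hcon
    apply hwne r
    rw [← hlam]
    refine Finset.sum_eq_zero fun j _ => ?_
    rw [hcon j, zero_smul]
  -- get the special root t
  obtain ⟨j₁, hj₁⟩ := hlamne
  obtain ⟨t, ht0, htsum⟩ := lang_root p n hn L r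
    (fun j => lam j ^ q ^ (r - 1 - (j : ℕ)))
    ⟨j₁, pow_ne_zero _ hj₁⟩
  -- the coefficients
  set lam' : ℕ → L := fun j => if h : j < r then lam ⟨j, h⟩ else 0 with hlam'
  have hlam'j : ∀ j : Fin r, lam' (j : ℕ) = lam j := fun j => by simp [hlam']
  set c : ℕ → L := fun i => ∑ j ∈ Finset.range (i + 1), lam' j ^ q ^ (i - j) * t ^ q ^ (i - j + 1)
    with hc
  have hc0 : c 0 = lam' 0 * t ^ q := by
    simp [hc]
  have hcsucc : ∀ i, c (i + 1) = c i ^ q + lam' (i + 1) * t ^ q := by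
    intro i
    have hpow : c i ^ q = ∑ j ∈ Finset.range (i + 1),
        lam' j ^ q ^ (i + 1 - j) * t ^ q ^ (i + 1 - j + 1) := by
      rw [show c i ^ q = F (c i) from (hF _).symm,
        show c i = ∑ j ∈ Finset.range (i + 1), lam' j ^ q ^ (i - j) * t ^ q ^ (i - j + 1)
          from rfl,
        map_sum]
      refine Finset.sum_congr rfl fun j hj => ?_
      have hji : j ≤ i := by have := Finset.mem_range.mp hj; omega
      have hqq : ∀ (x : L) (k : ℕ), (x ^ q ^ k) ^ q = x ^ q ^ (k + 1) := by
        intro x k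
        rw [pow_succ q k, pow_mul]
      rw [map_mul, hF, hF, hqq, hqq, show i - j + 1 = i + 1 - j by omega]
    rw [show c (i + 1) = ∑ j ∈ Finset.range (i + 1 + 1),
          lam' j ^ q ^ (i + 1 - j) * t ^ q ^ (i + 1 - j + 1) from rfl,
      Finset.sum_range_succ, ← hpow]
    congr 1
    simp
  have hclast : c (r - 1) = t := by
    have hconv : ∑ j ∈ Finset.range r, lam' j ^ q ^ (r - 1 - j) * t ^ q ^ (r - 1 - j + 1)
        = ∑ j : Fin r, lam j ^ q ^ (r - 1 - (j : ℕ)) * t ^ (p ^ n) ^ (r - (j : ℕ)) := by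
      rw [← Fin.sum_univ_eq_sum_range
        (fun j => lam' j ^ q ^ (r - 1 - j) * t ^ q ^ (r - 1 - j + 1))]
      refine Finset.sum_congr rfl fun j _ => ?_
      rw [hlam'j j]
      have hj2 := j.2
      have hexp : (p ^ n) ^ (r - (j : ℕ)) = q ^ (r - 1 - (j : ℕ) + 1) := by
        rw [← hqdef, show r - 1 - (j : ℕ) + 1 = r - (j : ℕ) by omega]
      rw [hexp]
    rw [show c (r - 1) = ∑ j ∈ Finset.range (r - 1 + 1),
          lam' j ^ q ^ (r - 1 - j) * t ^ q ^ (r - 1 - j + 1) from rfl,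
      show r - 1 + 1 = r by omega, hconv, htsum]
  -- the vector v
  set v : ι → L := ∑ i ∈ Finset.range r, c i • w i with hv
  obtain ⟨s', hs'⟩ : ∃ s', r = s' + 1 := ⟨r - 1, by omega⟩
  have hwr : w r = ∑ j ∈ Finset.range r, lam' j • w j := by
    rw [← hlam, ← Fin.sum_univ_eq_sum_range (fun j => lam' j • w j)]
    refine Finset.sum_congr rfl fun j _ => ?_
    rw [hlam'j j]
  have hshift : ∑ i ∈ Finset.range r, (c i ^ q) • w (i + 1) = v := by
    rw [hs']
    rw [Finset.sum_range_succ]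
    have h1 : c s' = t := by rw [show s' = r - 1 by omega, hclast]
    have h2 : (c s' ^ q) • w (s' + 1) = ∑ j ∈ Finset.range (s' + 1), (t ^ q * lam' j) • w j := by
      rw [h1, ← hs', hwr, Finset.smul_sum]
      refine Finset.sum_congr rfl fun j _ => ?_
      rw [smul_smul]
    rw [h2, Finset.sum_range_succ' (fun j => (t ^ q * lam' j) • w j) s']
    rw [← add_assoc, ← Finset.sum_add_distrib]
    have h3 : ∀ i ∈ Finset.range s',
        (c i ^ q) • w (i + 1) + (t ^ q * lam' (i + 1)) • w (i + 1) = c (i + 1) • w (i + 1) := by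
      intro i _
      rw [← add_smul, hcsucc i, mul_comm (t ^ q)]
    rw [Finset.sum_congr rfl h3]
    rw [hv, hs', Finset.sum_range_succ' (fun i => c i • w i) s']
    congr 1
    rw [hc0, mul_comm]
  have hveq : (fun k => v k ^ q) = B.mulVec v := by
    have hBv : B.mulVec v = ∑ i ∈ Finset.range r, (c i ^ q) • B.mulVec (w (i + 1)) := by
      rw [← hshift]
      simp only [← Matrix.mulVecLin_apply, map_sum, map_smul]
    funext k
    rw [hBv]
    have hvk : v k = ∑ i ∈ Finset.range r, c i * w i k := by
      rw [hv, Finset.sum_apply]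
      simp
    rw [hvk, show (∑ i ∈ Finset.range r, c i * w i k) ^ q = F (∑ i ∈ Finset.range r, c i * w i k) from rfl,
      map_sum, Finset.sum_apply]
    refine Finset.sum_congr rfl fun i _ => ?_
    rw [map_mul, hF, hF, Pi.smul_apply, smul_eq_mul, hBw i]
  have hvne : v ≠ 0 := by
    intro h0
    refine hrmin s' (by omega) ?_
    have h1 : c s' = t := by rw [show s' = r - 1 by omega, hclast]
    have h2 : t • w s' = -∑ i ∈ Finset.range s', c i • w i := by
      have := h0
      rw [hv, hs', Finset.sum_range_succ, h1] at this
      rw [eq_neg_iff_add_eq_zero, add_comm]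
      exact this
    have h5 : w s' = t⁻¹ • (-∑ i ∈ Finset.range s', c i • w i) := by
      rw [← h2, smul_smul, inv_mul_cancel₀ ht0, one_smul]
    show w s' ∈ Submodule.span L (Set.range fun j : Fin s' => w (j : ℕ))
    rw [h5]
    apply Submodule.smul_mem
    apply Submodule.neg_mem
    apply Submodule.sum_mem
    intro i hi
    apply Submodule.smul_mem
    apply Submodule.subset_span
    exact ⟨⟨i, Finset.mem_range.mp hi⟩, rfl⟩
  exact ⟨v, hvne, hveq⟩

lemma lang_main (p n : ℕ) [Fact p.Prime] (hn : 0 < n)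
    (L : Type) [Field L] [IsSepClosed L] [CharP L p] :
    ∀ (m : ℕ) (ι : Type) (_ : Fintype ι) (_ : DecidableEq ι), Fintype.card ι = m →
      ∀ B : Matrix ι ι L, IsUnit B.det →
      ∃ A : Matrix ι ι L, IsUnit A.det ∧ A.map (fun x => x ^ p ^ n) = B * A := by
  intro m
  induction m with
  | zero =>
    intro ι _ _ hcard B hB
    have hempty : IsEmpty ι := Fintype.card_eq_zero_iff.mp hcard
    refine ⟨1, by simp, ?_⟩
    ext i j
    exact hempty.elim i
  | succ m ih =>
    intro ι _ _ hcard B hB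
    have hne : Nonempty ι := Fintype.card_pos_iff.mp (by omega)
    obtain ⟨v, hv0, hv⟩ := lang_step1 p n hn L ι B hB
    obtain ⟨k, hk⟩ : ∃ k, v k ≠ 0 := by
      obtain ⟨k, hk⟩ := Function.ne_iff.mp hv0
      exact ⟨k, hk⟩
    set F := iterateFrobenius L p n with hFdef
    have hFm : ∀ x : L, F x = x ^ p ^ n := fun x => rfl
    set P : Matrix ι ι L := (1 : Matrix ι ι L).updateCol k v with hPdef
    have hPcol : ∀ j, P j k = v j := by
      intro j
      rw [hPdef, Matrix.updateCol_self]
    have hdetP : P.det = v k := by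
      rw [hPdef, ← Matrix.cramer_apply, Matrix.cramer_one]
      rfl
    have hPu : IsUnit P.det := by rw [hdetP]; exact isUnit_iff_ne_zero.mpr hk
    set Pq : Matrix ι ι L := P.map (fun x => x ^ p ^ n) with hPq
    have hPqF : Pq = P.map F := rfl
    have hPqu : IsUnit Pq.det := by
      rw [hPqF, show P.map ⇑F = F.mapMatrix P from rfl, ← RingHom.map_det, hdetP, hFm]
      exact isUnit_iff_ne_zero.mpr (pow_ne_zero _ hk)
    set Bt := Pq⁻¹ * B * P with hBt
    have hcol : ∀ i, Bt i k = if i = k then 1 else 0 := by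
      have h1 : ∀ i, (B * P) i k = Pq i k := by
        intro i
        rw [Matrix.mul_apply]
        have : ∀ j, B i j * P j k = B i j * v j := fun j => by rw [hPcol j]
        rw [Finset.sum_congr rfl fun j _ => this j]
        have h2 : ∑ j, B i j * v j = B.mulVec v i := rfl
        rw [h2, ← hv]
        rw [hPq, Matrix.map_apply, hPcol i]
      intro i
      have h2 : Bt i k = (Pq⁻¹ * Pq) i k := by
        rw [hBt, Matrix.mul_assoc, Matrix.mul_apply, Matrix.mul_apply]
        exact Finset.sum_congr rfl fun j _ => by rw [h1 j]
      rw [h2, Matrix.nonsing_inv_mul _ hPqu, Matrix.one_apply]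
    have hBtu : IsUnit Bt.det := by
      rw [hBt, Matrix.det_mul, Matrix.det_mul]
      exact ((Matrix.isUnit_nonsing_inv_det _ hPqu).mul hB).mul hPu
    -- block structure
    classical
    set ε : {x : ι // x = k} ⊕ {x : ι // ¬x = k} ≃ ι := Equiv.sumCompl (· = k) with hε
    set u : Matrix {x : ι // x = k} {x : ι // ¬x = k} L := fun _ b => Bt k b.1 with hu
    set B₂ : Matrix {x : ι // ¬x = k} {x : ι // ¬x = k} L := fun a b => Bt a.1 b.1 with hB₂
    have hB' : Bt.submatrix ε ε = Matrix.fromBlocks 1 u 0 B₂ := by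
      ext i j
      rcases i with i | i <;> rcases j with j | j
      · have hik : i.1 = k := i.2
        have hjk : j.1 = k := j.2
        simp only [Matrix.submatrix_apply, hε, Equiv.sumCompl_apply_inl,
          Matrix.fromBlocks_apply₁₁]
        rw [hik, hjk, hcol k, if_pos rfl, Matrix.one_apply,
          if_pos (Subsingleton.elim i j)]
      · simp only [Matrix.submatrix_apply, hε, Equiv.sumCompl_apply_inl,
          Equiv.sumCompl_apply_inr, Matrix.fromBlocks_apply₁₂, hu]
        rw [i.2]
        rfl
      · have hik : i.1 ≠ k := i.2
        have hjk : j.1 = k := j.2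
        simp only [Matrix.submatrix_apply, hε, Equiv.sumCompl_apply_inl,
          Equiv.sumCompl_apply_inr, Matrix.fromBlocks_apply₂₁]
        rw [hjk, hcol i.1, if_neg hik]
        rfl
      · simp only [Matrix.submatrix_apply, hε, Equiv.sumCompl_apply_inr,
          Matrix.fromBlocks_apply₂₂, hB₂]
        rfl
    have hB₂u : IsUnit B₂.det := by
      have hd : (Bt.submatrix ε ε).det = Bt.det := Matrix.det_submatrix_equiv_self ε Bt
      rw [hB', Matrix.det_fromBlocks_zero₂₁, Matrix.det_one, one_mul] at hd
      rw [← hd] at hBtu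
      exact hBtu
    have hcard₂ : Fintype.card {x : ι // ¬x = k} = m := by
      have h1 : Fintype.card {x : ι // x = k} = 1 := Fintype.card_subtype_eq k
      have h2 := Fintype.card_congr ε
      rw [Fintype.card_sum, h1, hcard] at h2
      omega
    obtain ⟨C₂, hC₂u, hC₂⟩ := ih {x : ι // ¬x = k} inferInstance inferInstance hcard₂ B₂ hB₂u
    -- solve for the top-right block
    choose xf hxf using fun (b : {x : ι // ¬x = k}) =>
      lang_AS p n L hn ((u * C₂) ⟨k, rfl⟩ b)
    set xM : Matrix {x : ι // x = k} {x : ι // ¬x = k} L := fun _ b => xf b with hxM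
    set C' : Matrix ({x : ι // x = k} ⊕ {x : ι // ¬x = k})
        ({x : ι // x = k} ⊕ {x : ι // ¬x = k}) L := Matrix.fromBlocks 1 xM 0 C₂ with hC'
    have hC'u : IsUnit C'.det := by
      rw [hC', Matrix.det_fromBlocks_zero₂₁, Matrix.det_one, one_mul]
      exact hC₂u
    have hC'eq : C'.map (fun x => x ^ p ^ n) = Bt.submatrix ε ε * C' := by
      rw [hB', hC', Matrix.fromBlocks_multiply, Matrix.fromBlocks_map,
        Matrix.fromBlocks_inj]
      refine ⟨?_, ?_, ?_, ?_⟩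
      · have h1map : (1 : Matrix {x : ι // x = k} {x : ι // x = k} L).map
            (fun x => x ^ p ^ n) = 1 :=
          Matrix.map_one _ (zero_pow (pow_ne_zero _ (Nat.Prime.ne_zero Fact.out))) (one_pow _)
        rw [h1map]
        simp
      · ext a b
        simp only [Matrix.map_apply, hxM, Matrix.add_apply, Matrix.one_mul]
        have ha : a = ⟨k, rfl⟩ := Subsingleton.elim a ⟨k, rfl⟩
        rw [ha]
        rw [← hxM, Matrix.one_mul]
        exact hxf b
      · have h0map : (0 : Matrix {x : ι // ¬x = k} {x : ι // x = k} L).map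
            (fun x => x ^ p ^ n) = 0 :=
          Matrix.map_zero _ (zero_pow (pow_ne_zero _ (Nat.Prime.ne_zero Fact.out)))
        rw [h0map]
        simp
      · rw [hC₂]
        simp
    set C : Matrix ι ι L := C'.submatrix ε.symm ε.symm with hC
    have hCu : IsUnit C.det := by
      rw [hC, Matrix.det_submatrix_equiv_self]
      exact hC'u
    have hCeq : C.map (fun x => x ^ p ^ n) = Bt * C := by
      rw [hC, ← Matrix.submatrix_map, hC'eq, ← Matrix.submatrix_mul_equiv _ _ _ ε.symm,
        Matrix.submatrix_submatrix, Equiv.self_comp_symm, Matrix.submatrix_id_id]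
    refine ⟨P * C, ?_, ?_⟩
    · rw [Matrix.det_mul]
      exact hPu.mul hCu
    · have hmap : (P * C).map (fun x => x ^ p ^ n)
          = Pq * C.map (fun x => x ^ p ^ n) := by
        show (P * C).map F = P.map F * C.map F
        exact Matrix.map_mul
      rw [hmap, hCeq, hBt, ← Matrix.mul_assoc, ← Matrix.mul_assoc, ← Matrix.mul_assoc,
        Matrix.mul_nonsing_inv _ hPqu, Matrix.one_mul, Matrix.mul_assoc]

end LangGL

/-!
STATEMENT 13. `q = p ^ n` is a power of the prime `p`; `L` is a separably closed field
of characteristic `p` (hence containing the finite field of `q` elements); for a matrix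
`A` over `L`, `τ(A)` denotes the matrix obtained by raising every entry to the `q`-th
power.  Statement (corollary of Lang's theorem): the map `GL(m, L) → GL(m, L)`,
`A ↦ τ(A)·A⁻¹`, is surjective; equivalently, for every invertible `B` there is an
invertible `A` with `B·A = τ(A)`.
-/

theorem stmt_13
    (p n : ℕ) [Fact p.Prime] (hn : 0 < n)
    (L : Type) [Field L] [IsSepClosed L] [CharP L p]
    (m : ℕ) (B : Matrix (Fin m) (Fin m) L) (hB : IsUnit B.det) :
    ∃ A : Matrix (Fin m) (Fin m) L, IsUnit A.det ∧
      B = A.map (fun x => x ^ p ^ n) * A⁻¹ := by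
  obtain ⟨A, hAu, hA⟩ := lang_main p n hn L m (Fin m) inferInstance inferInstance
    (Fintype.card_fin m) B hB
  refine ⟨A, hAu, ?_⟩
  rw [hA, Matrix.mul_nonsing_inv_cancel_right _ _ hAu]
end

section
/- Let (V,σ) be a pair consisting of a finite-dimensional K-vector space V and an additive map σ : V → V satisfying σ(x·v) = x^q·σ(v) for all x ∈ K, v ∈ V, and such that the K-span of σ(V) equals V. Extend σ to V ⊗_K K^s by σ(v⊗x) = σ(v)⊗x^q. Then V ⊗_K K^s admits a K^s-basis consisting of σ-invariant vectors; equivalently, the set of σ-invariant elements (V ⊗_K K^s)^σ is a k-vector space of dimension dim_K V whose K^s-span is all of V ⊗_K K^s. -/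
/-!
STATEMENT 14. `k` is the finite field with `q = p ^ n` elements, `K ⊇ k` a field and
`K^s` (= `Ks`) a separable closure of `K`.  Given a finite-dimensional `K`-vector space
`V` and an additive `σ : V → V` with `σ(x·v) = x^q·σ(v)` and `K`-span of `σ(V)` equal
to `V`, extend `σ` to the base change `K^s ⊗_K V` (≅ `V ⊗_K K^s`) by
`σ(x ⊗ v) = x^q ⊗ σ(v)`.  Statement: `K^s ⊗_K V` admits a `K^s`-basis of σ-invariant
vectors.
-/

open TensorProduct


section Aux

variable {L W : Type} [Field L] [AddCommGroup W] [Module L W]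

lemma sigma_span_le (q : ℕ) (σ : W →+ W)
    (hsem : ∀ (x : L) (w : W), σ (x • w) = x ^ q • σ w) (S : Set W) {w : W}
    (hw : w ∈ Submodule.span L S) : σ w ∈ Submodule.span L (σ '' S) := by
  induction hw using Submodule.span_induction with
  | mem x hx => exact Submodule.subset_span ⟨x, hx, rfl⟩
  | zero => simp only [map_zero]; exact Submodule.zero_mem _
  | add x y _ _ hx hy => rw [map_add]; exact Submodule.add_mem _ hx hy
  | smul c x _ hx => rw [hsem]; exact Submodule.smul_mem _ _ hx

lemma sigma_ker [FiniteDimensional L W] (q : ℕ) (hq : 0 < q) (σ : W →+ W)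
    (hsem : ∀ (x : L) (w : W), σ (x • w) = x ^ q • σ w)
    (hspan : Submodule.span L (Set.range ⇑σ) = ⊤) :
    ∀ z : W, σ z = 0 → z = 0 := by
  classical
  set e := Module.finBasis L W with he
  have hspan2 : ⊤ ≤ Submodule.span L (Set.range (⇑σ ∘ ⇑e)) := by
    rw [← hspan]
    refine Submodule.span_le.2 ?_
    rintro _ ⟨z, rfl⟩
    have hz : z ∈ Submodule.span L (Set.range ⇑e) := by rw [e.span_eq]; trivial
    have := sigma_span_le q σ hsem (Set.range ⇑e) hz
    rwa [← Set.range_comp] at this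
  have hli := linearIndependent_of_top_le_span_of_card_eq_finrank hspan2
    (by simp [Fintype.card_fin])
  intro z hz
  have hz2 : ∑ i, (e.repr z i ^ q) • (⇑σ ∘ ⇑e) i = 0 := by
    have h1 : σ z = σ (∑ i, e.repr z i • e i) := by rw [e.sum_repr]
    rw [map_sum] at h1
    simp only [hsem] at h1
    simp only [Function.comp_apply]
    rw [← h1]
    exact hz
  have hco := Fintype.linearIndependent_iff.1 hli (fun i => e.repr z i ^ q) hz2
  have hrepr : ∀ i, e.repr z i = 0 := fun i =>
    pow_eq_zero_iff hq.ne' |>.1 (hco i)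
  have : e.repr z = 0 := Finsupp.ext hrepr
  exact (LinearEquiv.map_eq_zero_iff e.repr).1 this

end Aux

section Root
open Polynomial

lemma exists_root_pow_sub (L : Type) [Field L] {p n : ℕ} [Fact p.Prime] [CharP L p]
    [IsSepClosed L] (hn : 0 < n) (a : L) : ∃ c : L, c ^ p ^ n - c = a := by
  have hp2 : 2 ≤ p := (Fact.out (p := p.Prime)).two_le
  have hq2 : 2 ≤ p ^ n := le_trans hp2 (Nat.le_self_pow hn.ne' p)
  have hqL : ((p ^ n : ℕ) : L) = 0 := by
    push_cast
    rw [CharP.cast_eq_zero L p]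
    exact zero_pow hn.ne'
  set f : L[X] := X ^ p ^ n - X - C a with hf
  have hfd : f.natDegree = p ^ n := by
    rw [hf, sub_sub]
    rw [natDegree_sub_eq_left_of_natDegree_lt]
    · exact natDegree_X_pow _
    · rw [natDegree_X_pow]
      calc (X + C a).natDegree ≤ 1 := natDegree_add_le_of_degree_le (by simp) (by simp)
        _ < p ^ n := by omega
  have hf0 : f ≠ 0 := fun h => by simp [h] at hfd; omega
  have hfder : derivative f = -1 := by
    rw [hf]
    simp [derivative_X_pow, hqL]
  have hfsep : f.Separable := by
    rw [Polynomial.separable_def, hfder]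
    exact (isCoprime_one_right).neg_right
  obtain ⟨c, hc⟩ := IsSepClosed.exists_root f
    (by rw [degree_eq_natDegree hf0, hfd]; exact_mod_cast (by omega : (p^n : ℕ) ≠ 0) ∘ (by exact_mod_cast ·)) hfsep
  refine ⟨c, ?_⟩
  have := hc
  rw [IsRoot.def, hf] at this
  simp only [eval_sub, eval_pow, eval_X, eval_C] at this
  exact sub_eq_zero.1 this

end Root

section Fixed
open Polynomial

lemma exists_fixed {p n : ℕ} [Fact p.Prime] (hn : 0 < n) (L : Type) [Field L] [CharP L p]
    [IsSepClosed L] (W : Type) [AddCommGroup W] [Module L W] [FiniteDimensional L W]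
    [Nontrivial W] (σ : W →+ W)
    (hsem : ∀ (x : L) (w : W), σ (x • w) = x ^ p ^ n • σ w)
    (hspan : Submodule.span L (Set.range ⇑σ) = ⊤) :
    ∃ v : W, v ≠ 0 ∧ σ v = v := by
  classical
  have hp2 : 2 ≤ p := (Fact.out (p := p.Prime)).two_le
  have hq2 : 2 ≤ p ^ n := le_trans hp2 (Nat.le_self_pow hn.ne' p)
  have hq0 : 0 < p ^ n := by omega
  have hqL : ((p ^ n : ℕ) : L) = 0 := by
    push_cast
    rw [CharP.cast_eq_zero L p]
    exact zero_pow hn.ne'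
  have hker : ∀ z : W, σ z = 0 → z = 0 := sigma_ker (p ^ n) hq0 σ hsem hspan
  obtain ⟨w, hw⟩ := exists_ne (0 : W)
  set u : ℕ → W := fun i => σ^[i] w with hu
  have husucc : ∀ i, u (i + 1) = σ (u i) := fun i => Function.iterate_succ_apply' σ i w
  have hune : ∀ i, u i ≠ 0 := by
    intro i
    induction i with
    | zero => exact hw
    | succ i ih => rw [husucc]; exact fun h => ih (hker _ h)
  have hPex : ∃ j, ¬ LinearIndependent L (fun i : Fin (j + 1) => u i) := by
    refine ⟨Module.finrank L W, fun h => ?_⟩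
    have := h.fintype_card_le_finrank
    simp only [Fintype.card_fin] at this
    omega
  set r := Nat.find hPex with hr
  have hPr : ¬ LinearIndependent L (fun i : Fin (r + 1) => u i) := Nat.find_spec hPex
  have hrpos : 0 < r := by
    rcases Nat.eq_zero_or_pos r with h0 | h
    · exfalso
      rw [h0] at hPr
      haveI : Unique (Fin (0 + 1)) := inferInstanceAs (Unique (Fin 1))
      exact hPr (linearIndependent_unique_iff.2 (by simpa [hu] using hw))
    · exact h
  obtain ⟨s, hs⟩ : ∃ s, r = s + 1 := ⟨r - 1, (Nat.succ_pred_eq_of_pos hrpos).symm⟩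
  rw [hs] at hPr
  have hind : LinearIndependent L (fun i : Fin (s + 1) => u i) := by
    have := Nat.find_min hPex (m := s) (by omega)
    exact not_not.1 this
  have hmem : u (s + 1) ∈ Submodule.span L (Set.range (fun i : Fin (s + 1) => u ↑i)) := by
    by_contra hmem
    apply hPr
    have hsnoc : (fun i : Fin (s + 1 + 1) => u ↑i) =
        Fin.snoc (fun i : Fin (s + 1) => u ↑i) (u (s + 1)) := by
      funext i
      refine Fin.lastCases ?_ (fun j => ?_) i
      · rw [Fin.snoc_last, Fin.val_last]
      · rw [Fin.snoc_castSucc, Fin.coe_castSucc]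
    rw [hsnoc]
    exact linearIndependent_fin_snoc.2 ⟨hind, hmem⟩
  rw [Submodule.mem_span_range_iff_exists_fun] at hmem
  obtain ⟨a, ha⟩ := hmem
  set A : ℕ → L := fun i => if h : i < s + 1 then a ⟨i, h⟩ else 0 with hA
  have haA : ∑ i ∈ Finset.range (s + 1), A i • u i = u (s + 1) := by
    rw [← Fin.sum_univ_eq_sum_range (fun i => A i • u i) (s + 1), ← ha]
    refine Finset.sum_congr rfl fun i _ => ?_
    congr 1
    simp only [hA]
    rw [dif_pos i.isLt]
  have hAex : ∃ j, A j ≠ 0 := by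
    by_contra h
    push_neg at h
    apply hune (s + 1)
    rw [← haA]
    simp [h]
  set j₀ := Nat.find hAex with hj0
  have hAj₀ : A j₀ ≠ 0 := Nat.find_spec hAex
  have hAlt : ∀ j < j₀, A j = 0 := fun j hj => not_not.1 (Nat.find_min hAex hj)
  have hj₀le : j₀ ≤ s := by
    by_contra h
    push_neg at h
    apply hAj₀
    simp only [hA]
    rw [dif_neg (by omega)]
  -- the polynomial recursion
  set G : ℕ → L[X] := fun i => Nat.rec (C (A 0) * X ^ p ^ n)
    (fun i Gi => Gi ^ p ^ n + C (A (i + 1)) * X ^ p ^ n) i with hG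
  have hG0 : G 0 = C (A 0) * X ^ p ^ n := rfl
  have hGsucc : ∀ i, G (i + 1) = G i ^ p ^ n + C (A (i + 1)) * X ^ p ^ n := fun i => rfl
  have hGzero : ∀ i, i < j₀ → G i = 0 := by
    intro i
    induction i with
    | zero => intro hi; rw [hG0, hAlt 0 hi]; simp
    | succ i ih =>
      intro hi
      rw [hGsucc, ih (by omega), hAlt _ hi]
      simp [zero_pow hq0.ne']
  have hGbig : ∀ i, j₀ ≤ i → G i ≠ 0 ∧ p ^ n ≤ (G i).natDegree := by
    have hCX : ∀ m : ℕ, A m ≠ 0 → C (A m) * X ^ p ^ n ≠ 0 ∧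
        p ^ n ≤ (C (A m) * X ^ p ^ n).natDegree := by
      intro m hm
      constructor
      · exact mul_ne_zero (C_ne_zero.2 hm) (pow_ne_zero _ X_ne_zero)
      · rw [natDegree_C_mul_X_pow _ _ hm]
    intro i
    induction i with
    | zero =>
      intro hi
      have hj : j₀ = 0 := Nat.le_zero.1 hi
      rw [hG0]
      exact hCX 0 (hj ▸ hAj₀)
    | succ i ih =>
      intro hi
      rcases Nat.lt_or_ge i j₀ with hlt | hge
      · have hj : j₀ = i + 1 := by omega
        rw [hGsucc, hGzero i hlt]
        rw [zero_pow hq0.ne', zero_add]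
        exact hCX (i + 1) (hj ▸ hAj₀)
      · obtain ⟨hne, hdeg⟩ := ih hge
        have hdp : (G i ^ p ^ n).natDegree = p ^ n * (G i).natDegree := natDegree_pow _ _
        have hlt2 : (C (A (i + 1)) * X ^ p ^ n).natDegree < (G i ^ p ^ n).natDegree := by
          rw [hdp]
          calc (C (A (i + 1)) * X ^ p ^ n).natDegree ≤ p ^ n := natDegree_C_mul_X_pow_le _ _
            _ < p ^ n * (G i).natDegree := by nlinarith
        rw [hGsucc]
        constructor
        · intro h
          have := natDegree_add_eq_left_of_natDegree_lt hlt2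
          rw [h, natDegree_zero] at this
          rw [hdp] at this
          nlinarith
        · rw [natDegree_add_eq_left_of_natDegree_lt hlt2, hdp]
          nlinarith
  obtain ⟨hGs_ne, hGs_deg⟩ := hGbig s hj₀le
  have hGeval0 : ∀ i, eval 0 (G i) = 0 := by
    intro i
    induction i with
    | zero => simp [hG0, zero_pow hq0.ne']
    | succ i ih => simp [hGsucc, ih, zero_pow hq0.ne']
  have hGder : ∀ i, derivative (G i) = 0 := by
    intro i
    induction i with
    | zero => simp [hG0, derivative_X_pow, hqL]
    | succ i ih => simp [hGsucc, derivative_pow, ih, derivative_X_pow, hqL]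
  set Q : L[X] := G s - X with hQ
  have hQdeg : Q.natDegree = (G s).natDegree :=
    natDegree_sub_eq_left_of_natDegree_lt (by rw [natDegree_X]; omega)
  have hQne : Q ≠ 0 := by
    intro h
    rw [h, natDegree_zero] at hQdeg
    omega
  have hQder : derivative Q = -1 := by
    rw [hQ, derivative_sub, hGder s, derivative_X, zero_sub]
  have hQsep : Q.Separable := by
    rw [Polynomial.separable_def, hQder]
    exact (isCoprime_one_right).neg_right
  have hQsplit : Q.Splits := IsSepClosed.splits_of_separable Q hQsep
  have hcard : Multiset.card Q.roots = Q.natDegree := (splits_iff_card_roots).1 hQsplit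
  have hnodup : Q.roots.Nodup := Polynomial.nodup_roots hQsep
  have h2 : 1 < Q.roots.toFinset.card := by
    rw [Multiset.toFinset_card_of_nodup hnodup, hcard, hQdeg]
    omega
  obtain ⟨c, hcmem, hc0⟩ := Finset.exists_mem_ne h2 0
  have hcroot : eval c Q = 0 := by
    have := Multiset.mem_toFinset.1 hcmem
    exact (Polynomial.mem_roots hQne).1 this
  have hstar : eval c (G s) = c := by
    rw [hQ] at hcroot
    simp only [eval_sub, eval_X] at hcroot
    exact sub_eq_zero.1 hcroot
  set E : ℕ → L := fun i => eval c (G i) with hE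
  have hEsucc : ∀ i, E (i + 1) = E i ^ p ^ n + A (i + 1) * c ^ p ^ n := by
    intro i
    simp only [hE, hGsucc i, eval_add, eval_pow, eval_mul, eval_C, eval_X]
  have hE0 : E 0 = A 0 * c ^ p ^ n := by
    simp [hE, hG0]
  set v : W := ∑ i ∈ Finset.range (s + 1), E i • u i with hv
  refine ⟨v, ?_, ?_⟩
  · intro h
    have hsum : ∑ i : Fin (s + 1), E ↑i • u ↑i = 0 := by
      rw [Fin.sum_univ_eq_sum_range (fun i => E i • u i) (s + 1), ← hv]
      exact h
    have hES := Fintype.linearIndependent_iff.1 hind (fun i => E ↑i) hsum ⟨s, by omega⟩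
    apply hc0
    rw [← hstar]
    exact hES
  · have hσsum : σ v = ∑ i ∈ Finset.range (s + 1), (E i ^ p ^ n) • u (i + 1) := by
      rw [hv, map_sum]
      refine Finset.sum_congr rfl fun i _ => ?_
      rw [hsem, husucc]
    rw [hσsum, Finset.sum_range_succ]
    have hlast : (E s ^ p ^ n) • u (s + 1) = ∑ i ∈ Finset.range (s + 1), (c ^ p ^ n * A i) • u i := by
      rw [← haA, Finset.smul_sum]
      refine Finset.sum_congr rfl fun i _ => ?_
      rw [smul_smul]
      simp only [hE]
      rw [hstar]
    rw [hlast, Finset.sum_range_succ' (fun i => (c ^ p ^ n * A i) • u i) s]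
    conv_rhs => rw [hv, Finset.sum_range_succ' (fun i => E i • u i) s]
    rw [← add_assoc, ← Finset.sum_add_distrib]
    congr 1
    · refine Finset.sum_congr rfl fun i _ => ?_
      rw [← add_smul, hEsucc i]
      ring_nf
    · rw [hE0]
      ring_nf


end Fixed

section Span

lemma span_fixed {p n : ℕ} [Fact p.Prime] (hn : 0 < n) (L : Type) [Field L] [CharP L p]
    [IsSepClosed L] (W : Type) [AddCommGroup W] [Module L W] [FiniteDimensional L W]
    (σ : W →+ W)
    (hsem : ∀ (x : L) (w : W), σ (x • w) = x ^ p ^ n • σ w)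
    (hspan : Submodule.span L (Set.range ⇑σ) = ⊤) :
    Submodule.span L {w : W | σ w = w} = ⊤ := by
  classical
  by_contra hne
  set Fix : Set W := {w : W | σ w = w} with hFix
  set U : Submodule L W := Submodule.span L Fix with hU
  have hUlt : U < ⊤ := lt_top_iff_ne_top.2 hne
  haveI : Nontrivial (W ⧸ U) := Submodule.Quotient.nontrivial_iff.2 hne
  have hσU : ∀ x ∈ U, σ x ∈ U := by
    intro x hx
    have h1 := sigma_span_le (p ^ n) σ hsem Fix hx
    refine Submodule.span_le.2 ?_ h1
    rintro _ ⟨y, hy, rfl⟩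
    rw [hy]
    exact Submodule.subset_span hy
  let f : (W ⧸ U) → (W ⧸ U) := fun z => Quotient.liftOn' z
    (fun w => Submodule.Quotient.mk (σ w)) (by
      intro x y hxy
      have hmk : (Submodule.Quotient.mk x : W ⧸ U) = Submodule.Quotient.mk y :=
        Quotient.sound' hxy
      rw [Submodule.Quotient.eq] at hmk
      exact (Submodule.Quotient.eq U).2 (by rw [← map_sub]; exact hσU _ hmk))
  have hfmk : ∀ w : W, f (Submodule.Quotient.mk w) = Submodule.Quotient.mk (σ w) :=
    fun w => rfl
  let σQ : (W ⧸ U) →+ (W ⧸ U) := AddMonoidHom.mk' f (by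
    intro x y
    obtain ⟨x, rfl⟩ := Submodule.Quotient.mk_surjective U x
    obtain ⟨y, rfl⟩ := Submodule.Quotient.mk_surjective U y
    rw [← Submodule.Quotient.mk_add, hfmk, hfmk, hfmk, map_add, Submodule.Quotient.mk_add])
  have hσQmk : ∀ w : W, σQ (Submodule.Quotient.mk w) = Submodule.Quotient.mk (σ w) :=
    fun w => rfl
  have hsemQ : ∀ (x : L) (z : W ⧸ U), σQ (x • z) = x ^ p ^ n • σQ z := by
    intro x z
    obtain ⟨z, rfl⟩ := Submodule.Quotient.mk_surjective U z
    rw [← Submodule.Quotient.mk_smul, hσQmk, hσQmk, hsem, Submodule.Quotient.mk_smul]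
  have hspanQ : Submodule.span L (Set.range ⇑σQ) = ⊤ := by
    rw [eq_top_iff]
    have h1 : (⊤ : Submodule L (W ⧸ U)) = Submodule.map U.mkQ ⊤ := by
      rw [Submodule.map_top, Submodule.range_mkQ]
    rw [h1, ← hspan, Submodule.map_span]
    refine Submodule.span_mono ?_
    rintro _ ⟨_, ⟨w, rfl⟩, rfl⟩
    exact ⟨Submodule.Quotient.mk w, (hσQmk w).symm⟩
  obtain ⟨z, hz0, hzfix⟩ := exists_fixed hn L (W ⧸ U) σQ hsemQ hspanQ
  obtain ⟨w, rfl⟩ := Submodule.Quotient.mk_surjective U z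
  have hwU : w ∉ U := fun h => hz0 ((Submodule.Quotient.mk_eq_zero U).2 h)
  have hd : σ w - w ∈ U := by
    rw [hσQmk] at hzfix
    exact (Submodule.Quotient.eq U).1 hzfix
  rw [hU, Submodule.mem_span_set'] at hd
  obtain ⟨m, fc, g, hsum⟩ := hd
  choose cc hcc using fun i : Fin m => exists_root_pow_sub L (p := p) hn (fc i)
  set t : W := ∑ i, cc i • (g i : W) with ht
  have htU : t ∈ U :=
    Submodule.sum_mem _ fun i _ => Submodule.smul_mem _ _ (Submodule.subset_span (g i).2)
  have hgfix : ∀ i, σ ((g i : W)) = (g i : W) := fun i => (g i).2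
  have hσt : σ t - t = σ w - w := by
    rw [ht, map_sum, ← hsum, ← Finset.sum_sub_distrib]
    refine Finset.sum_congr rfl fun i _ => ?_
    rw [hsem, hgfix, ← sub_smul, hcc]
  have hw'fix : σ (w - t) = w - t := by
    rw [map_sub]
    have h3 : σ w - σ t - (w - t) = (σ w - w) - (σ t - t) := by abel
    rw [hσt, sub_self] at h3
    exact sub_eq_zero.1 h3
  have hw'U : w - t ∈ U := Submodule.subset_span hw'fix
  apply hwU
  have : w = (w - t) + t := by abel
  rw [this]
  exact U.add_mem hw'U htU

end Span

/-- The `τ`-semilinear extension of `σ` to `K^s ⊗_K V`, sending `x ⊗ v` to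
`x ^ q ⊗ σ v` (with `q = p ^ n`). -/
noncomputable def sigmaTensorExt (p n : ℕ) [Fact p.Prime]
    (K : Type) [Field K] [CharP K p]
    (Ks : Type) [Field Ks] [Algebra K Ks] [CharP Ks p]
    (V : Type) [AddCommGroup V] [Module K V]
    (σV : V →+ V) (hσ : ∀ (x : K) (v : V), σV (x • v) = x ^ p ^ n • σV v) :
    Ks ⊗[K] V →+ Ks ⊗[K] V :=
  TensorProduct.liftAddHom
    { toFun := fun x =>
        { toFun := fun v => (x ^ p ^ n) ⊗ₜ[K] σV v
          map_zero' := by simp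
          map_add' := fun v w => by simp [TensorProduct.tmul_add] }
      map_zero' := by
        ext v
        simp [zero_pow (pow_ne_zero n (Fact.out (p := p.Prime)).ne_zero)]
      map_add' := fun x y => by
        ext v
        simp [add_pow_char_pow, TensorProduct.add_tmul] }
    (fun c x v => by
      simp only [AddMonoidHom.coe_mk, ZeroHom.coe_mk, smul_pow, hσ c v]
      rw [TensorProduct.smul_tmul])

theorem stmt_14
    (p n : ℕ) [Fact p.Prime] (hn : 0 < n)
    (K : Type) [Field K] [CharP K p]
    (Ks : Type) [Field Ks] [Algebra K Ks] [CharP Ks p] [IsSepClosure K Ks]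
    (V : Type) [AddCommGroup V] [Module K V] [FiniteDimensional K V]
    (σV : V →+ V)
    (hσ : ∀ (x : K) (v : V), σV (x • v) = x ^ p ^ n • σV v)
    (hspan : Submodule.span K (Set.range σV) = ⊤) :
    ∃ (m : ℕ) (b : Module.Basis (Fin m) Ks (Ks ⊗[K] V)),
      ∀ i, sigmaTensorExt p n K Ks V σV hσ (b i) = b i := by
  classical
  haveI : IsSepClosed Ks := IsSepClosure.sep_closed K
  haveI : FiniteDimensional Ks (Ks ⊗[K] V) := inferInstance
  set σT := sigmaTensorExt p n K Ks V σV hσ with hσT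
  have htmul : ∀ (y : Ks) (v : V), σT (y ⊗ₜ[K] v) = (y ^ p ^ n) ⊗ₜ[K] σV v := by
    intro y v
    rfl
  have hsemT : ∀ (x : Ks) (w : Ks ⊗[K] V), σT (x • w) = x ^ p ^ n • σT w := by
    intro x w
    induction w using TensorProduct.induction_on with
    | zero => simp
    | tmul y v =>
      rw [TensorProduct.smul_tmul', smul_eq_mul, htmul, htmul, mul_pow,
        TensorProduct.smul_tmul', smul_eq_mul]
    | add w₁ w₂ h₁ h₂ => rw [smul_add, map_add, h₁, h₂, map_add, smul_add]
  have h0 : ∀ v : V, (1 : Ks) ⊗ₜ[K] v ∈ Submodule.span Ks (Set.range ⇑σT) := by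
    intro v
    have hv : v ∈ Submodule.span K (Set.range ⇑σV) := by rw [hspan]; trivial
    induction hv using Submodule.span_induction with
    | mem x hx =>
      obtain ⟨v₀, rfl⟩ := hx
      have : (1 : Ks) ⊗ₜ[K] σV v₀ = σT ((1 : Ks) ⊗ₜ[K] v₀) := by
        rw [htmul, one_pow]
      rw [this]
      exact Submodule.subset_span ⟨_, rfl⟩
    | zero => simp only [TensorProduct.tmul_zero]; exact Submodule.zero_mem _
    | add x y _ _ hx hy =>
      rw [TensorProduct.tmul_add]
      exact Submodule.add_mem _ hx hy
    | smul c x _ hx =>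
      rw [TensorProduct.tmul_smul, algebra_compatible_smul Ks c]
      exact Submodule.smul_mem _ _ hx
  have hspanT : Submodule.span Ks (Set.range ⇑σT) = ⊤ := by
    rw [eq_top_iff]
    intro w _
    have hw : w ∈ Submodule.span K {t : Ks ⊗[K] V | ∃ y v, y ⊗ₜ[K] v = t} := by
      rw [TensorProduct.span_tmul_eq_top]; trivial
    have hle : Submodule.span K {t : Ks ⊗[K] V | ∃ y v, y ⊗ₜ[K] v = t} ≤
        (Submodule.span Ks (Set.range ⇑σT)).restrictScalars K := by
      refine Submodule.span_le.2 ?_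
      rintro _ ⟨y, v, rfl⟩
      show y ⊗ₜ[K] v ∈ Submodule.span Ks (Set.range ⇑σT)
      have hyv : y ⊗ₜ[K] v = y • ((1 : Ks) ⊗ₜ[K] v) := by
        rw [TensorProduct.smul_tmul', smul_eq_mul, mul_one]
      rw [hyv]
      exact Submodule.smul_mem _ _ (h0 v)
    exact hle hw
  have hfix := span_fixed (p := p) hn Ks (Ks ⊗[K] V) σT hsemT hspanT
  obtain ⟨b, hbsub, hbspan, hbli⟩ := exists_linearIndependent Ks {w : Ks ⊗[K] V | σT w = w}
  have hbtop : ⊤ ≤ Submodule.span Ks (Set.range ((↑) : b → Ks ⊗[K] V)) := by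
    rw [Subtype.range_coe, hbspan, hfix]
  let B : Module.Basis b Ks (Ks ⊗[K] V) := Module.Basis.mk hbli hbtop
  haveI : Fintype b := FiniteDimensional.fintypeBasisIndex B
  refine ⟨Fintype.card b, B.reindex (Fintype.equivFin b), fun i => ?_⟩
  rw [Module.Basis.reindex_apply]
  have hB : B ((Fintype.equivFin b).symm i) = ((Fintype.equivFin b).symm i : Ks ⊗[K] V) :=
    Module.Basis.mk_apply hbli hbtop _
  rw [hB]
  exact hbsub ((Fintype.equivFin b).symm i).2
end
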